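/- arXiv:1402.1553 — 4 statements merged into one kernel-verified Lean document; each statement's English description precedes it below -/
import Mathlib

section
/- d_MP(T1,T2) = 0 if and only if T1 = T2 (up to isomorphism as X-trees). -/
/-- A phylogenetic `X`-tree: a finite tree together with an injective
labelling of the taxa `X` by vertices. -/
structure PhyloTree (X : Type) where
  V : Type
  [fintypeV : Fintype V]
  G : SimpleGraph V
  connected : G.Connected
  acyclic : G.IsAcyclic
  leaf : X ↪ V

namespace PhyloTree

variable {X : Type}

/-- `g` extends the character `f` to all vertices of the tree. -/
def IsExtension {C : Type} (T : PhyloTree X) (f : X → C) (g : T.V → C) : Prop :=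
  ∀ x, g (T.leaf x) = f x

/-- The number of edges whose endpoints receive different states under `g`. -/
noncomputable def mutCount {C : Type} (T : PhyloTree X) (g : T.V → C) : ℕ :=
  Set.ncard { e | e ∈ T.G.edgeSet ∧ ∃ u v : T.V, e = s(u, v) ∧ g u ≠ g v }

/-- The parsimony score `l_f(T)` of a character `f` on the tree `T`. -/
noncomputable def score {C : Type} (T : PhyloTree X) (f : X → C) : ℕ :=
  sInf { n | ∃ g : T.V → C, T.IsExtension f g ∧ T.mutCount g = n }

/-- The Maximum Parsimony distance `d_MP(T₁,T₂) = max_f |l_f(T₁) - l_f(T₂)|`. -/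
noncomputable def dMP (T₁ T₂ : PhyloTree X) : ℕ :=
  sSup { n | ∃ f : X → ℕ, n = ((T₁.score f : ℤ) - (T₂.score f : ℤ)).natAbs }

end PhyloTree

/-- Isomorphism of phylogenetic `X`-trees: a graph isomorphism commuting with
the leaf labelling. -/
def PhyloTree.Isom {X : Type} (T₁ T₂ : PhyloTree X) : Prop :=
  ∃ e : T₁.V ≃ T₂.V,
    (∀ u v : T₁.V, T₁.G.Adj u v ↔ T₂.G.Adj (e u) (e v)) ∧
    ∀ x, e (T₁.leaf x) = T₂.leaf x

/-- `T` is a genuine phylogenetic `X`-tree: the taxa are exactly the leaves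
(degree-1 vertices) and every internal vertex has degree at least 3. -/
def PhyloTree.IsPhylo {X : Type} (T : PhyloTree X) : Prop :=
  (∀ x, (T.G.neighborSet (T.leaf x)).ncard = 1) ∧
  ∀ v : T.V, v ∉ Set.range T.leaf → 3 ≤ (T.G.neighborSet v).ncard


open SimpleGraph

section Dev
variable {V : Type} [Fintype V] {G : SimpleGraph V}

/-- In a path starting at `w`, any edge at `w` goes to the second vertex. -/
lemma start_edge_eq {w t a c : V} (h : G.Adj w c) (q : G.Walk c t)
    (hp : (Walk.cons h q).IsPath) (ha : s(w,a) ∈ (Walk.cons h q).edges) : a = c := by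
  rw [Walk.edges_cons, List.mem_cons] at ha
  rcases ha with hz | hz
  · rcases Sym2.eq_iff.1 hz with ⟨_, rfl⟩ | ⟨rfl, rfl⟩
    · rfl
    · exact absurd h (G.irrefl)
  · exact (((Walk.cons_isPath_iff h q).mp hp).2
      (Walk.fst_mem_support_of_mem_edges q hz)).elim

lemma start_edge_unique {w t a b : V} (p : G.Walk w t) (hp : p.IsPath)
    (ha : s(w,a) ∈ p.edges) (hb : s(w,b) ∈ p.edges) : a = b := by
  cases p with
  | nil => simp at ha
  | cons h q => rw [start_edge_eq h q hp ha, start_edge_eq h q hp hb]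
end Dev

section Dev2
set_option linter.unusedSectionVars false
variable {V : Type} [Fintype V] {G : SimpleGraph V}

/-- In a finite acyclic graph, from every vertex one can reach a vertex of degree ≤ 1;
moreover if that vertex is the start itself it is isolated. -/
lemma exists_near_leaf (hG : G.IsAcyclic) (p : V) :
    ∃ w, G.Reachable p w ∧ (G.neighborSet w).ncard ≤ 1 ∧
      (w = p → (G.neighborSet p).ncard = 0) := by
  classical
  set S : Set ℕ := {n | ∃ (w : V) (q : G.Walk p w), q.IsPath ∧ q.length = n} with hS
  have hfin : S.Finite := by
    apply (Set.finite_Iio (Fintype.card V)).subset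
    rintro n ⟨w, q, hq, rfl⟩
    exact hq.length_lt
  have hne : S.Nonempty := ⟨0, p, Walk.nil, by simp⟩
  have hmem := hne.csSup_mem hfin
  obtain ⟨w, q, hq, hlen⟩ := hmem
  have hmax : ∀ m ∈ S, m ≤ sSup S := fun m hm => le_csSup hfin.bddAbove hm
  by_cases h0 : sSup S = 0
  · -- p is isolated
    have hdeg : G.neighborSet p = ∅ := by
      by_contra hne'
      obtain ⟨a, ha⟩ := Set.nonempty_iff_ne_empty.2 hne'
      rw [SimpleGraph.mem_neighborSet] at ha
      have : (1 : ℕ) ∈ S := ⟨a, Walk.cons ha Walk.nil, by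
        constructor
        · simp [Walk.cons_isPath_iff]
          exact fun h => G.irrefl (h ▸ ha)
        · simp⟩
      have := hmax 1 this
      omega
    exact ⟨p, Reachable.refl p, by simp [hdeg], fun _ => by simp [hdeg]⟩
  · -- end of a maximal path
    refine ⟨w, ⟨q⟩, ?_, ?_⟩
    · -- every neighbor a of w satisfies s(w,a) ∈ q.edges
      have hkey : ∀ a ∈ G.neighborSet w, s(w, a) ∈ q.reverse.edges := by
        intro a ha
        rw [SimpleGraph.mem_neighborSet] at ha
        by_cases hsup : a ∈ q.support
        · -- dropUntil gives a path a → w; unique path forces it to be the edge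
          have hq' : (q.dropUntil a hsup).IsPath := hq.dropUntil hsup
          have hr : (Walk.cons ha.symm Walk.nil : G.Walk a w).IsPath := by
            simp [Walk.cons_isPath_iff]
            exact fun h => G.irrefl (h ▸ ha)
          have := hG.path_unique ⟨q.dropUntil a hsup, hq'⟩ ⟨Walk.cons ha.symm Walk.nil, hr⟩
          have hedge : s(a, w) ∈ (q.dropUntil a hsup).edges := by
            have : (q.dropUntil a hsup) = Walk.cons ha.symm Walk.nil := congrArg Subtype.val this
            rw [this]; simp
          have : s(a, w) ∈ q.edges := Walk.edges_dropUntil_subset q hsup hedge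
          rw [Walk.edges_reverse]
          simpa [Sym2.eq_swap] using List.mem_reverse.2 this
        · -- extend the path: contradiction with maximality
          exfalso
          have hpath : (Walk.cons ha.symm q.reverse : G.Walk a p).IsPath := by
            rw [Walk.cons_isPath_iff]
            exact ⟨hq.reverse, by simpa [Walk.support_reverse] using hsup⟩
          have : (q.length + 1) ∈ S :=
            ⟨a, (Walk.cons ha.symm q.reverse).reverse, hpath.reverse, by simp⟩
          have := hmax _ this
          omega
      -- hence at most one neighbor
      have hsub : (G.neighborSet w).Subsingleton := by
        intro a ha b hb
        exact start_edge_unique q.reverse hq.reverse (hkey a ha) (hkey b hb)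
      exact le_trans (Set.ncard_le_ncard (by rfl) (Set.toFinite _)) (by
        rcases hsub.eq_empty_or_singleton with h | ⟨x, h⟩ <;> simp [h])
    · -- w ≠ p since the path has positive length
      intro hwp
      subst hwp
      rw [(Walk.isPath_iff_eq_nil (p := q)).mp hq] at hlen
      simp at hlen
      omega
end Dev2

section Dev3
set_option linter.unusedSectionVars false
variable {V : Type} [Fintype V] {G : SimpleGraph V}

/-- The set of vertices on the `v`-side of the edge `s(u,v)`. -/
def eside (G : SimpleGraph V) (u v : V) : Set V :=
  {z | (G.deleteEdges {s(u,v)}).Reachable v z}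

lemma del_swap (u v : V) : G.deleteEdges {s(v,u)} = G.deleteEdges {s(u,v)} := by
  rw [Sym2.eq_swap]

lemma mem_eside_self (u v : V) : v ∈ eside G u v := Reachable.refl v

lemma not_reach_del (hac : G.IsAcyclic) (h : G.Adj u v) :
    ¬ (G.deleteEdges {s(u,v)}).Reachable u v :=
  (isBridge_iff.mp (isAcyclic_iff_forall_adj_isBridge.mp hac h))

lemma eside_disjoint (hac : G.IsAcyclic) (h : G.Adj u v) {z : V}
    (h1 : z ∈ eside G u v) (h2 : z ∈ eside G v u) : False := by
  have h2' : (G.deleteEdges {s(u,v)}).Reachable u z := by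
    have := h2; rwa [eside, del_swap] at this
  exact not_reach_del hac h (h2'.trans h1.symm)

lemma eside_adj_closed {u v z z' : V} (hz : z ∈ eside G u v) (hadj : G.Adj z z')
    (hne : s(z,z') ≠ s(u,v)) : z' ∈ eside G u v :=
  hz.trans (Adj.reachable (by rw [deleteEdges_adj]; exact ⟨hadj, by simpa using hne⟩))

lemma eside_cover (hc : G.Connected) (hu : G.Adj u v) (z : V) :
    z ∈ eside G u v ∨ z ∈ eside G v u := by
  classical
  obtain ⟨q⟩ := hc.preconnected v z
  set p := q.bypass with hp
  have hpath : p.IsPath := q.bypass_isPath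
  by_cases he : s(u,v) ∈ p.edges
  · -- the edge is the first edge of p; the rest avoids it
    right
    cases hP : p with
    | nil => rw [hP] at he; simp at he
    | cons hadj q' =>
      rename_i c
      rw [hP] at he hpath
      have he' : s(v,u) ∈ (Walk.cons hadj q').edges := by
        rw [Sym2.eq_swap]; exact he
      have hcu : u = c := start_edge_eq hadj q' hpath he'
      subst hcu
      have hvq : v ∉ q'.support := ((Walk.cons_isPath_iff hadj q').mp hpath).2
      have hq'e : ∀ e ∈ q'.edges, e ∈ (G.deleteEdges {s(v,u)}).edgeSet := by
        intro e hee
        rw [edgeSet_deleteEdges]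
        refine ⟨q'.edges_subset_edgeSet hee, ?_⟩
        intro hmem
        rw [Set.mem_singleton_iff] at hmem
        subst hmem
        exact hvq (q'.fst_mem_support_of_mem_edges hee)
      exact ⟨(q'.transfer _ hq'e)⟩
  · left
    refine ⟨p.toDeleteEdges _ ?_⟩
    intro e hee hmem
    rw [Set.mem_singleton_iff] at hmem; subst hmem; exact he hee

lemma eside_sameside (hc : G.Connected) (hac : G.IsAcyclic) (hu : G.Adj u v) {a b : V}
    (hadj : G.Adj a b) (hne : s(a,b) ≠ s(u,v)) :
    (a ∈ eside G u v ↔ b ∈ eside G u v) := by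
  constructor
  · intro ha; exact eside_adj_closed ha hadj hne
  · intro hb; exact eside_adj_closed hb hadj.symm (by rwa [Sym2.eq_swap])

/-- Half-tree containment lemma. -/
lemma eside_HT (hac : G.IsAcyclic) (h : G.Adj a b) (h' : G.Adj a' b')
    (hne : s(a',b') ≠ s(a,b)) (hb' : b' ∈ eside G a b) (haside : a ∈ eside G b' a') :
    eside G a' b' ⊆ eside G a b := by
  classical
  intro z hz
  obtain ⟨w⟩ := hz
  set p := w.bypass with hpdef
  have hpath : p.IsPath := w.bypass_isPath
  have hee : s(a,b) ∉ p.edges := by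
    intro hmem
    have hasup : a ∈ p.support := p.fst_mem_support_of_mem_edges hmem
    have : a ∈ eside G a' b' := ⟨p.takeUntil a hasup⟩
    exact eside_disjoint hac h' this haside
  have hq'e : ∀ e ∈ p.edges, e ∈ (G.deleteEdges {s(a,b)}).edgeSet := by
    intro e hee'
    rw [edgeSet_deleteEdges]
    have h1 : e ∈ (G.deleteEdges {s(a',b')}).edgeSet := p.edges_subset_edgeSet hee'
    rw [edgeSet_deleteEdges] at h1
    exact ⟨h1.1, by intro hx; rw [Set.mem_singleton_iff] at hx; subst hx; exact hee hee'⟩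
  exact hb'.trans ⟨p.transfer _ hq'e⟩
end Dev3

section Dev4
set_option linter.unusedSectionVars false
set_option linter.unusedVariables false
variable {V : Type} [Fintype V]

lemma acyclic_mono {H G : SimpleGraph V} (hle : H ≤ G) (hg : G.IsAcyclic) : H.IsAcyclic :=
  fun v c hc => hg (c.transfer G (fun e he => edgeSet_mono hle (c.edges_subset_edgeSet he)))
    (hc.transfer _)
end Dev4

namespace PhyloTree
variable {X : Type} [Fintype X]

noncomputable instance (T : PhyloTree X) : Fintype T.V := T.fintypeV

/-- The taxa on the `v`-side of the edge `uv`. -/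
def sideTaxa (T : PhyloTree X) (u v : T.V) : Set X := {x | T.leaf x ∈ eside T.G u v}

/-- The splits (sides of edges) displayed by `T`. -/
def splits_s2 (T : PhyloTree X) : Set (Set X) :=
  {A | ∃ u v, T.G.Adj u v ∧ A = T.sideTaxa u v}

variable {T : PhyloTree X}

lemma sideTaxa_compl (h : T.G.Adj u v) : T.sideTaxa v u = (T.sideTaxa u v)ᶜ := by
  ext x
  constructor
  · intro hx hx'
    exact eside_disjoint T.acyclic h hx' hx
  · intro hx
    rcases eside_cover T.connected h (T.leaf x) with h1 | h1
    · exact absurd h1 hx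
    · exact h1

/-- The no-desert lemma: regions carved out by (at most) two edges contain taxa. -/
lemma no_desert (hT : T.IsPhylo) {u v u' v' : T.V} (h : T.G.Adj u v) (h' : T.G.Adj u' v')
    (hu' : u' ∈ eside T.G u v) :
    ∃ x, T.leaf x ∈ eside T.G u v ∧ T.leaf x ∈ eside T.G v' u' := by
  classical
  set G'' := T.G.deleteEdges {s(u,v), s(u',v')} with hG''
  have hle1 : G'' ≤ T.G.deleteEdges {s(u,v)} := deleteEdges_anti (by simp)
  have hle2 : G'' ≤ T.G.deleteEdges {s(u',v')} := deleteEdges_anti (by simp)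
  have hac'' : G''.IsAcyclic := acyclic_mono (deleteEdges_le _) T.acyclic
  obtain ⟨w, hreach, hdeg, hwp⟩ := exists_near_leaf hac'' u'
  have hw1 : w ∈ eside T.G u v := hu'.trans (hreach.mono hle1)
  have hw2 : w ∈ eside T.G v' u' := by
    have : (T.G.deleteEdges {s(u',v')}).Reachable u' w := hreach.mono hle2
    rw [eside, del_swap]; exact this
  have hwu : w ≠ u := by
    rintro rfl
    exact eside_disjoint T.acyclic h hw1 (mem_eside_self _ _)
  have hwv' : w ≠ v' := by
    rintro rfl
    exact eside_disjoint T.acyclic h'.symm hw2 (mem_eside_self _ _)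
  -- the G-neighborhood of w is small
  have hstep : ∀ z, T.G.Adj w z → z ∈ G''.neighborSet w ∪ {u} ∨ (w = u' ∧ z = v') := by
    intro z hz
    by_cases hz1 : s(w,z) = s(u,v)
    · rcases Sym2.eq_iff.mp hz1 with ⟨rfl, rfl⟩ | ⟨rfl, rfl⟩
      · exact absurd rfl hwu
      · exact Or.inl (Or.inr rfl)
    by_cases hz2 : s(w,z) = s(u',v')
    · rcases Sym2.eq_iff.mp hz2 with ⟨rfl, rfl⟩ | ⟨rfl, rfl⟩
      · exact Or.inr ⟨rfl, rfl⟩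
      · exact absurd rfl hwv'
    · refine Or.inl (Or.inl ?_)
      rw [SimpleGraph.mem_neighborSet, hG'', deleteEdges_adj]
      exact ⟨hz, by simp [hz1, hz2]⟩
  have hcard : (T.G.neighborSet w).ncard ≤ 2 := by
    by_cases hwu' : w = u'
    · have h0 : G''.neighborSet w = ∅ := by
        have := hwp hwu'
        subst hwu'
        rwa [Set.ncard_eq_zero (Set.toFinite _)] at this
      have hsub : T.G.neighborSet w ⊆ {v', u} := by
        intro z hz
        rcases hstep z hz with (hz' | hz') | ⟨_, rfl⟩
        · exact absurd hz' (by rw [h0]; exact Set.notMem_empty z)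
        · exact Or.inr hz'
        · exact Or.inl rfl
      calc (T.G.neighborSet w).ncard ≤ ({v', u} : Set T.V).ncard :=
            Set.ncard_le_ncard hsub (Set.toFinite _)
        _ ≤ 2 := le_trans (Set.ncard_insert_le _ _) (by simp)
    · have hsub : T.G.neighborSet w ⊆ G''.neighborSet w ∪ {u} := by
        intro z hz
        rcases hstep z hz with hz' | ⟨hz', _⟩
        · exact hz'
        · exact absurd hz' hwu'
      calc (T.G.neighborSet w).ncard ≤ (G''.neighborSet w ∪ {u}).ncard :=
            Set.ncard_le_ncard hsub (Set.toFinite _)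
        _ ≤ (G''.neighborSet w).ncard + ({u} : Set T.V).ncard := Set.ncard_union_le _ _
        _ ≤ 2 := by
            have := hdeg
            simp only [Set.ncard_singleton]
            omega
  have : w ∈ Set.range T.leaf := by
    by_contra hcon
    have := hT.2 w hcon
    omega
  obtain ⟨x, rfl⟩ := this
  exact ⟨x, hw1, hw2⟩
end PhyloTree

namespace PhyloTree
section Dev5
set_option linter.unusedSectionVars false
set_option linter.unusedVariables false
variable {X : Type} [Fintype X] {T : PhyloTree X} {u v u' v' : T.V}

lemma mem_sideTaxa {x : X} : x ∈ T.sideTaxa u v ↔ T.leaf x ∈ eside T.G u v := Iff.rfl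

lemma sideTaxa_nonempty (hT : T.IsPhylo) (h : T.G.Adj u v) : (T.sideTaxa u v).Nonempty := by
  obtain ⟨x, hx1, _⟩ := no_desert hT h h.symm (mem_eside_self u v)
  exact ⟨x, hx1⟩

/-- An oriented edge is determined by the taxa on its head side. -/
lemma side_unique (hT : T.IsPhylo) (h : T.G.Adj u v) (h' : T.G.Adj u' v')
    (heq : T.sideTaxa u v = T.sideTaxa u' v') : u = u' ∧ v = v' := by
  by_cases hee : s(u',v') = s(u,v)
  · rcases Sym2.eq_iff.mp hee with ⟨rfl, rfl⟩ | ⟨rfl, rfl⟩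
    · exact ⟨rfl, rfl⟩
    · exfalso
      obtain ⟨x, hx⟩ := sideTaxa_nonempty hT h
      have hx2 := heq ▸ hx
      rw [sideTaxa_compl h'] at hx
      exact hx hx2
  · exfalso
    rcases eside_cover T.connected h u' with hs | hs
    · obtain ⟨x, hx1, hx2⟩ := no_desert hT h h' hs
      have : x ∈ (T.sideTaxa u' v')ᶜ := by rw [← sideTaxa_compl h']; exact hx2
      rw [← heq] at this
      exact this hx1
    · have hs' : v' ∈ eside T.G v u := by
        rw [← eside_sameside T.connected T.acyclic h.symm h' (by rw [Sym2.eq_swap (a := v) (b := u)]; exact hee)]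
        exact hs
      obtain ⟨x, hx1, hx2⟩ := no_desert hT h.symm h'.symm hs'
      have h1 : x ∈ (T.sideTaxa u v)ᶜ := by rw [← sideTaxa_compl h]; exact hx1
      have h2 : x ∈ T.sideTaxa u' v' := by
        have := hx2
        rw [mem_sideTaxa]
        exact this
      rw [heq] at h1
      exact h1 h2

/-- The head side of the pendant edge at a labelled leaf is just that leaf. -/
lemma eside_leaf (hT : T.IsPhylo) (x : X) (h : T.G.Adj u (T.leaf x)) :
    eside T.G u (T.leaf x) = {T.leaf x} := by
  classical
  have hnb : T.G.neighborSet (T.leaf x) = {u} := by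
    obtain ⟨a, ha⟩ := Set.ncard_eq_one.mp (hT.1 x)
    have : u ∈ T.G.neighborSet (T.leaf x) := h.symm
    rw [ha] at this ⊢
    rw [Set.mem_singleton_iff] at this
    rw [this]
  apply Set.eq_of_subset_of_subset
  · intro z hz
    obtain ⟨w⟩ := hz
    set p := w.bypass with hpdef
    have hpath : p.IsPath := w.bypass_isPath
    cases p with
    | nil => exact Set.mem_singleton_iff.mpr rfl
    | cons h' q =>
      exfalso
      rename_i c
      have hadj := h'
      rw [deleteEdges_adj] at hadj
      have hc : c = u := by
        have : c ∈ T.G.neighborSet (T.leaf x) := hadj.1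
        rwa [hnb, Set.mem_singleton_iff] at this
      subst hc
      exact hadj.2 (by rw [Sym2.eq_swap]; simp)
  · intro z hz
    rw [Set.mem_singleton_iff] at hz
    subst hz
    exact mem_eside_self _ _

lemma sideTaxa_leaf (hT : T.IsPhylo) (x : X) (h : T.G.Adj u (T.leaf x)) :
    T.sideTaxa u (T.leaf x) = {x} := by
  ext y
  rw [mem_sideTaxa, eside_leaf hT x h, Set.mem_singleton_iff, Set.mem_singleton_iff]
  exact ⟨fun hy => T.leaf.injective hy, fun hy => by rw [hy]⟩
end Dev5
end PhyloTree

namespace PhyloTree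
section Dev6
set_option linter.unusedSectionVars false
set_option linter.unusedVariables false
variable {X : Type} [Fintype X] {T : PhyloTree X} {v a b t c : T.V}

lemma branch_subset (ha : T.G.Adj v a) (hb : T.G.Adj v b) (hab : a ≠ b) :
    eside T.G v a ⊆ eside T.G b v := by
  have h1 : s(v,a) ≠ s(b,v) := by
    intro h
    rcases Sym2.eq_iff.mp h with ⟨rfl, rfl⟩ | ⟨-, rfl⟩
    · exact T.G.irrefl ha
    · exact hab rfl
  have h2 : a ∈ eside T.G b v :=
    eside_adj_closed (mem_eside_self b v) ha h1
  have h3 : b ∈ eside T.G a v := by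
    refine eside_adj_closed (mem_eside_self a v) hb ?_
    intro h
    rcases Sym2.eq_iff.mp h with ⟨rfl, rfl⟩ | ⟨-, rfl⟩
    · exact T.G.irrefl hb
    · exact hab rfl.symm
  exact eside_HT T.acyclic hb.symm ha h1 h2 h3

lemma branch_disjoint (ha : T.G.Adj v a) (hb : T.G.Adj v b) (hab : a ≠ b) {z : T.V}
    (h1 : z ∈ eside T.G v a) (h2 : z ∈ eside T.G v b) : False :=
  eside_disjoint T.acyclic hb.symm (branch_subset ha hb hab h1) h2

lemma branch_disjoint_taxa (ha : T.G.Adj v a) (hb : T.G.Adj v b) (hab : a ≠ b) :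
    T.sideTaxa v a ∩ T.sideTaxa v b = ∅ := by
  ext x
  simp only [Set.mem_inter_iff, Set.mem_empty_iff_false, iff_false, not_and]
  intro h1 h2
  exact branch_disjoint ha hb hab h1 h2

lemma sideTaxa_mono {u v u' v' : T.V} (h : eside T.G u v ⊆ eside T.G u' v') :
    T.sideTaxa u v ⊆ T.sideTaxa u' v' := fun x hx => h hx
end Dev6
end PhyloTree

namespace PhyloTree
section Dev7
set_option linter.unusedSectionVars false
set_option linter.unusedVariables false
variable {X : Type} [Fintype X] {T : PhyloTree X} {v a b t c : T.V}

lemma memC {A B : Set X} (h : A ∩ B = ∅) {x : X} (hA : x ∈ A) (hB : x ∈ B) : False :=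
  Set.eq_empty_iff_forall_notMem.mp h x ⟨hA, hB⟩

/-- If two oriented edges share their tail `v`, then no split strictly separates
their head sides. -/
lemma adj_fwd (hT : T.IsPhylo) (ha : T.G.Adj v a) (hb : T.G.Adj v b) (hab : a ≠ b)
    (hc : T.G.Adj t c) (hAC : T.sideTaxa v a ⊆ T.sideTaxa t c)
    (hCB : T.sideTaxa t c ∩ T.sideTaxa v b = ∅)
    (hCA : T.sideTaxa t c ≠ T.sideTaxa v a)
    (hCBc : T.sideTaxa t c ≠ (T.sideTaxa v b)ᶜ) : False := by
  have hAne := sideTaxa_nonempty hT ha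
  have hBne := sideTaxa_nonempty hT hb
  have hABdisj := branch_disjoint_taxa ha hb hab
  have heCA : s(t,c) ≠ s(v,a) := by
    intro h
    rcases Sym2.eq_iff.mp h with ⟨rfl, rfl⟩ | ⟨rfl, rfl⟩
    · exact hCA rfl
    · obtain ⟨x, hx⟩ := hBne
      have hxC : x ∈ T.sideTaxa t c := by
        rw [sideTaxa_compl hc.symm]
        intro hxA
        exact memC hABdisj hxA hx
      exact memC hCB hxC hx
  have heCB : s(t,c) ≠ s(v,b) := by
    intro h
    rcases Sym2.eq_iff.mp h with ⟨rfl, rfl⟩ | ⟨rfl, rfl⟩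
    · obtain ⟨x, hx⟩ := hAne
      exact memC hABdisj hx (hAC hx)
    · exact hCBc (sideTaxa_compl hc.symm)
  have heCA2 : s(t,c) ≠ s(a,v) := by rw [Sym2.eq_swap (a := a)]; exact heCA
  have heCB2 : s(t,c) ≠ s(b,v) := by rw [Sym2.eq_swap (a := b)]; exact heCB
  have heCA3 : s(c,t) ≠ s(v,a) := by rw [Sym2.eq_swap (a := c)]; exact heCA
  have heCB3 : s(c,t) ≠ s(v,b) := by rw [Sym2.eq_swap (a := c)]; exact heCB
  have heCA4 : s(v,a) ≠ s(c,t) := heCA3.symm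
  have heCB4 : s(v,b) ≠ s(c,t) := heCB3.symm
  rcases eside_cover T.connected ha c with hcda | hcna
  · have htda : t ∈ eside T.G v a :=
      (eside_sameside T.connected T.acyclic ha hc heCA).mpr hcda
    rcases eside_cover T.connected hc v with hvdc | hvnc
    · have hsub : eside T.G v b ⊆ eside T.G t c :=
        eside_HT T.acyclic hc hb heCB.symm
          (eside_adj_closed hvdc hb heCB.symm) (branch_subset ha hb hab htda)
      obtain ⟨x, hx⟩ := hBne
      exact memC hCB (sideTaxa_mono hsub hx) hx
    · have hsub : eside T.G t c ⊆ eside T.G v a :=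
        eside_HT T.acyclic ha hc heCA hcda hvnc
      exact hCA (Set.Subset.antisymm (sideTaxa_mono hsub) hAC)
  · have htna : t ∈ eside T.G a v :=
      (eside_sameside T.connected T.acyclic ha.symm hc heCA2).mpr hcna
    rcases eside_cover T.connected hb c with hcdb | hcnb
    · have htdb : t ∈ eside T.G v b :=
        (eside_sameside T.connected T.acyclic hb hc heCB).mpr hcdb
      rcases eside_cover T.connected hc v with hvdc | hvnc
      · have hsub : eside T.G c t ⊆ eside T.G v b :=
          eside_HT T.acyclic hb hc.symm heCB3 htdb hvdc
        apply hCBc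
        apply Set.Subset.antisymm
        · intro x hx hxB
          exact memC hCB hx hxB
        · intro x hx
          by_contra hxC
          have hx2 : x ∈ T.sideTaxa c t := by
            rw [sideTaxa_compl hc]
            exact hxC
          exact hx (sideTaxa_mono hsub hx2)
      · have hsub : eside T.G t c ⊆ eside T.G v b :=
          eside_HT T.acyclic hb hc heCB hcdb hvnc
        obtain ⟨x, hx⟩ := hAne
        exact memC hABdisj hx (sideTaxa_mono hsub (hAC hx))
    · have htnb : t ∈ eside T.G b v :=
        (eside_sameside T.connected T.acyclic hb.symm hc heCB2).mpr hcnb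
      rcases eside_cover T.connected hc v with hvdc | hvnc
      · have hsub : eside T.G v b ⊆ eside T.G t c :=
          eside_HT T.acyclic hc hb heCB.symm
            (eside_adj_closed hvdc hb heCB.symm) htnb
        obtain ⟨x, hx⟩ := hBne
        exact memC hCB (sideTaxa_mono hsub hx) hx
      · have hsub : eside T.G v a ⊆ eside T.G c t :=
          eside_HT T.acyclic hc.symm ha heCA4
            (eside_adj_closed hvnc ha heCA4) hcna
        obtain ⟨x, hx⟩ := hAne
        have : x ∈ (T.sideTaxa t c)ᶜ := by
          rw [← sideTaxa_compl hc]
          exact sideTaxa_mono hsub hx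
        exact this (hAC hx)
end Dev7
end PhyloTree

namespace PhyloTree
section Dev8
set_option linter.unusedSectionVars false
set_option linter.unusedVariables false
variable {X : Type} [Fintype X] {T : PhyloTree X}

/-- If the head sides of two oriented edges are disjoint and non-complementary, and no
split strictly separates them, then the tails coincide. -/
lemma adj_back (hT : T.IsPhylo) {tA a tB b : T.V} (hA : T.G.Adj tA a) (hB : T.G.Adj tB b)
    (hAB : T.sideTaxa tA a ∩ T.sideTaxa tB b = ∅)
    (hABc : T.sideTaxa tA a ≠ (T.sideTaxa tB b)ᶜ)
    (hne : tA ≠ tB) :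
    ∃ t c, T.G.Adj t c ∧ T.sideTaxa tA a ⊆ T.sideTaxa t c ∧
      T.sideTaxa t c ∩ T.sideTaxa tB b = ∅ ∧ T.sideTaxa t c ≠ T.sideTaxa tA a ∧
      T.sideTaxa t c ≠ (T.sideTaxa tB b)ᶜ := by
  classical
  have hAne := sideTaxa_nonempty hT hA
  have hBne := sideTaxa_nonempty hT hB
  have hEE : s(tB,b) ≠ s(tA,a) := by
    intro h
    rcases Sym2.eq_iff.mp h with ⟨rfl, rfl⟩ | ⟨rfl, rfl⟩
    · exact hne rfl
    · exact hABc (by rw [← sideTaxa_compl hB])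
  have hEE2 : s(tA,a) ≠ s(tB,b) := hEE.symm
  have hEE3 : s(b,tB) ≠ s(tA,a) := by rw [Sym2.eq_swap (a := b)]; exact hEE
  -- tB is on the near side of the edge tA-a
  have htBnA : tB ∈ eside T.G a tA := by
    rcases eside_cover T.connected hA b with hbda | hbna
    · exfalso
      have htBda : tB ∈ eside T.G tA a :=
        (eside_sameside T.connected T.acyclic hA hB hEE).mpr hbda
      rcases eside_cover T.connected hB tA with htAdb | htAnb
      · have hsub : eside T.G b tB ⊆ eside T.G tA a :=
          eside_HT T.acyclic hA hB.symm hEE3 htBda htAdb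
        apply hABc
        apply Set.Subset.antisymm
        · intro x hx hxB
          exact memC hAB hx hxB
        · intro x hx
          by_contra hxA
          have : x ∈ T.sideTaxa b tB := by rw [sideTaxa_compl hB]; exact hx
          exact hxA (sideTaxa_mono hsub this)
      · have hsub : eside T.G tB b ⊆ eside T.G tA a :=
          eside_HT T.acyclic hA hB hEE hbda htAnb
        obtain ⟨x, hx⟩ := hBne
        exact memC hAB (sideTaxa_mono hsub hx) hx
    · exact (eside_sameside T.connected T.acyclic hA.symm hB
        (by rw [Sym2.eq_swap (a := a)]; exact hEE)).mpr hbna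
  -- tA is on the near side of the edge tB-b
  have htAnB : tA ∈ eside T.G b tB := by
    rcases eside_cover T.connected hB a with hadb | hanb
    · exfalso
      have hsub : eside T.G tA a ⊆ eside T.G tB b :=
        eside_HT T.acyclic hB hA hEE2 hadb htBnA
      obtain ⟨x, hx⟩ := hAne
      exact memC hAB hx (sideTaxa_mono hsub hx)
    · exact (eside_sameside T.connected T.acyclic hB.symm hA
        (by rw [Sym2.eq_swap (a := b)]; exact hEE2)).mpr hanb
  -- walk from tA to tB
  obtain ⟨w⟩ := T.connected.preconnected tA tB
  set p := w.bypass with hpdef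
  have hpath : p.IsPath := w.bypass_isPath
  cases hP : p with
  | nil => exact (hne rfl).elim
  | cons hm q =>
    rename_i m
    rw [hP] at hpath
    have hq : q.IsPath := ((Walk.cons_isPath_iff hm q).mp hpath).1
    have htAq : tA ∉ q.support := ((Walk.cons_isPath_iff hm q).mp hpath).2
    have hma : m ≠ a := by
      rintro rfl
      have : tB ∈ eside T.G tA m := by
        refine ⟨q.toDeleteEdges _ ?_⟩
        intro e he hmem
        rw [Set.mem_singleton_iff] at hmem
        subst hmem
        exact htAq (q.fst_mem_support_of_mem_edges he)
      exact eside_disjoint T.acyclic hA this htBnA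
    have hEA : s(tA,a) ≠ s(tA,m) := by
      intro h
      rcases Sym2.eq_iff.mp h with ⟨-, rfl⟩ | ⟨rfl, rfl⟩
      · exact hma rfl
      · exact T.G.irrefl hA
    have hsub1 : eside T.G tA a ⊆ eside T.G m tA := by
      refine eside_HT T.acyclic hm.symm hA
        (by rw [Sym2.eq_swap (a := m)]; exact hEA) ?_ ?_
      · exact eside_adj_closed (mem_eside_self m tA) hA
          (by rw [Sym2.eq_swap (a := m)]; exact hEA)
      · exact eside_adj_closed (mem_eside_self a tA) hm
          (by rw [Sym2.eq_swap (a := a)]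
              intro h; exact hEA h.symm)
    have htBm : tB ∈ eside T.G tA m := by
      refine ⟨q.toDeleteEdges _ ?_⟩
      intro e he hmem
      rw [Set.mem_singleton_iff] at hmem
      subst hmem
      exact htAq (q.fst_mem_support_of_mem_edges he)
    have hEB : s(tB,b) ≠ s(tA,m) := by
      intro h
      rcases Sym2.eq_iff.mp h with ⟨rfl, rfl⟩ | ⟨rfl, rfl⟩
      · exact hne rfl
      · exact eside_disjoint T.acyclic hB (mem_eside_self tB b) htAnB
    have hsub2 : eside T.G tB b ⊆ eside T.G tA m :=
      eside_HT T.acyclic hm hB hEB (eside_adj_closed htBm hB hEB) htAnB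
    refine ⟨m, tA, hm.symm, sideTaxa_mono hsub1, ?_, ?_, ?_⟩
    · ext x
      simp only [Set.mem_inter_iff, Set.mem_empty_iff_false, iff_false, not_and]
      intro hxC hxB
      have : x ∈ T.sideTaxa tA m := sideTaxa_mono hsub2 hxB
      rw [sideTaxa_compl hm.symm] at this
      exact this hxC
    · intro heq
      exact hm.ne (side_unique hT hm.symm hA heq).1.symm
    · intro heq
      rw [← sideTaxa_compl hB] at heq
      exact hne (side_unique hT hm.symm hB.symm heq).2
end Dev8
end PhyloTree

namespace PhyloTree
section Dev9
open scoped Classical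
set_option linter.unusedSectionVars false
set_option linter.unusedVariables false
variable {X : Type} [Fintype X] {T : PhyloTree X} {u v : T.V}

/-- The binary character of a subset `A` of the taxa. -/
noncomputable def chi (A : Set X) : X → ℕ := fun x => if x ∈ A then 1 else 0

lemma chi_eq_one {A : Set X} {x : X} : chi A x = 1 ↔ x ∈ A := by
  unfold chi; split <;> simp_all

lemma chi_eq_zero {A : Set X} {x : X} : chi A x = 0 ↔ x ∉ A := by
  unfold chi; split <;> simp_all

lemma scoreSet_nonempty (T : PhyloTree X) (f : X → ℕ) :
    {n | ∃ g : T.V → ℕ, T.IsExtension f g ∧ T.mutCount g = n}.Nonempty := by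
  refine ⟨_, fun w => if h : ∃ x, T.leaf x = w then f h.choose else 0, fun x => ?_, rfl⟩
  show (if h : ∃ y, T.leaf y = T.leaf x then f h.choose else 0) = f x
  have hx : ∃ y, T.leaf y = T.leaf x := ⟨x, rfl⟩
  rw [dif_pos hx]
  congr 1
  exact T.leaf.injective hx.choose_spec

/-- Along a walk whose endpoints get different values, some edge changes value. -/
lemma walk_change {g : T.V → ℕ} : ∀ {u v : T.V} (w : T.G.Walk u v), g u ≠ g v →
    ∃ a b : T.V, s(a,b) ∈ w.edges ∧ g a ≠ g b := by
  intro u v w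
  induction w with
  | nil => intro h; exact absurd rfl h
  | cons h q ih =>
    intro hne
    rename_i x y z
    by_cases hxy : g x = g y
    · obtain ⟨a, b, hab, hgab⟩ := ih (by rw [← hxy]; exact hne)
      exact ⟨a, b, by simp [hab], hgab⟩
    · exact ⟨x, y, by simp, hxy⟩

/-- If no edge except possibly `s(u,v)` changes value, `g` is constant along
walks avoiding that edge. -/
lemma const_on_walk {g : T.V → ℕ}
    (hconst : ∀ a b : T.V, T.G.Adj a b → s(a,b) ≠ s(u,v) → g a = g b) :
    ∀ {y z : T.V} (w : (T.G.deleteEdges {s(u,v)}).Walk y z), g y = g z := by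
  intro y z w
  induction w with
  | nil => rfl
  | cons h q ih =>
    rename_i x y' z'
    rw [deleteEdges_adj] at h
    exact (hconst x y' h.1 (by simpa using h.2)).trans ih

lemma const_on_eside {g : T.V → ℕ}
    (hconst : ∀ a b : T.V, T.G.Adj a b → s(a,b) ≠ s(u,v) → g a = g b) :
    ∀ z ∈ eside T.G u v, g z = g v := by
  intro z hz
  obtain ⟨w⟩ := hz
  exact (const_on_walk hconst w).symm
end Dev9
end PhyloTree

namespace PhyloTree
section Dev10
open scoped Classical
set_option linter.unusedSectionVars false
set_option linter.unusedVariables false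
variable {X : Type} [Fintype X] {T : PhyloTree X} {u v : T.V}

lemma score_split_le_one (h : T.G.Adj u v) : T.score (chi (T.sideTaxa u v)) ≤ 1 := by
  set A := T.sideTaxa u v with hA
  set g : T.V → ℕ := fun z => if z ∈ eside T.G u v then 1 else 0 with hg
  have hext : T.IsExtension (chi A) g := by
    intro x
    show (if T.leaf x ∈ eside T.G u v then 1 else 0) = _
    unfold chi
    by_cases hx : x ∈ A
    · rw [if_pos (show T.leaf x ∈ eside T.G u v from hx), if_pos hx]
    · rw [if_neg (show T.leaf x ∉ eside T.G u v from hx), if_neg hx]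
  have hmut : T.mutCount g = 1 := by
    unfold mutCount
    have : {e | e ∈ T.G.edgeSet ∧ ∃ a b : T.V, e = s(a, b) ∧ g a ≠ g b} = {s(u,v)} := by
      apply Set.eq_of_subset_of_subset
      · rintro e ⟨he, a, b, rfl, hab⟩
        rw [SimpleGraph.mem_edgeSet] at he
        by_contra hne
        rw [Set.mem_singleton_iff] at hne
        have := eside_sameside T.connected T.acyclic h he hne
        by_cases ha : a ∈ eside T.G u v
        · have hb := this.mp ha
          rw [hg] at hab
          simp only [if_pos ha, if_pos hb] at hab
          exact hab rfl
        · have hb := fun hb => ha (this.mpr hb)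
          rw [hg] at hab
          simp only [if_neg ha, if_neg hb] at hab
          exact hab rfl
      · intro e he
        rw [Set.mem_singleton_iff] at he
        subst he
        refine ⟨h, u, v, rfl, ?_⟩
        have hu : u ∉ eside T.G u v := fun hu =>
          eside_disjoint T.acyclic h hu (mem_eside_self v u)
        have hv : v ∈ eside T.G u v := mem_eside_self u v
        rw [hg]
        simp [if_pos hv, if_neg hu]
    rw [this, Set.ncard_singleton]
  exact Nat.sInf_le ⟨g, hext, hmut⟩

lemma one_le_score {A : Set X} (hA : A.Nonempty) (hAc : Aᶜ.Nonempty) :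
    1 ≤ T.score (chi A) := by
  refine le_csInf (scoreSet_nonempty T _) ?_
  rintro n ⟨g, hext, rfl⟩
  obtain ⟨x, hx⟩ := hA
  obtain ⟨y, hy⟩ := hAc
  have hgxy : g (T.leaf x) ≠ g (T.leaf y) := by
    rw [hext x, hext y]
    rw [show chi A x = 1 from chi_eq_one.mpr hx, show chi A y = 0 from chi_eq_zero.mpr hy]
    omega
  obtain ⟨w⟩ := T.connected.preconnected (T.leaf x) (T.leaf y)
  obtain ⟨a, b, hab, hgab⟩ := walk_change w hgxy
  have : s(a,b) ∈ {e | e ∈ T.G.edgeSet ∧ ∃ a b : T.V, e = s(a, b) ∧ g a ≠ g b} :=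
    ⟨w.edges_subset_edgeSet hab, a, b, rfl, hgab⟩
  unfold mutCount
  have hpos := (Set.ncard_pos (Set.toFinite _)).mpr ⟨_, this⟩
  omega

lemma split_of_score_one (hT : T.IsPhylo) {A : Set X} (hsc : T.score (chi A) = 1) :
    A ∈ T.splits_s2 := by
  have hmem := Nat.sInf_mem (scoreSet_nonempty T (chi A))
  rw [show sInf _ = T.score (chi A) from rfl, hsc] at hmem
  obtain ⟨g, hext, hmut⟩ := hmem
  unfold mutCount at hmut
  obtain ⟨e₀, he₀⟩ := Set.ncard_eq_one.mp hmut
  have he₀mem : e₀ ∈ {e | e ∈ T.G.edgeSet ∧ ∃ a b : T.V, e = s(a, b) ∧ g a ≠ g b} := by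
    rw [he₀]; rfl
  obtain ⟨hedge, u, v, rfl, hguv⟩ := he₀mem
  rw [SimpleGraph.mem_edgeSet] at hedge
  have hconst : ∀ a b : T.V, T.G.Adj a b → s(a,b) ≠ s(u,v) → g a = g b := by
    intro a b hab hne
    by_contra hgab
    have : s(a,b) ∈ {e | e ∈ T.G.edgeSet ∧ ∃ a b : T.V, e = s(a, b) ∧ g a ≠ g b} :=
      ⟨hab, a, b, rfl, hgab⟩
    rw [he₀, Set.mem_singleton_iff] at this
    exact hne this
  have hconst' : ∀ a b : T.V, T.G.Adj a b → s(a,b) ≠ s(v,u) → g a = g b := by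
    intro a b hab hne
    exact hconst a b hab (by rw [Sym2.eq_swap (a := u) (b := v)]; exact hne)
  have hsideV : ∀ z ∈ eside T.G u v, g z = g v := const_on_eside hconst
  have hsideU : ∀ z ∈ eside T.G v u, g z = g u := const_on_eside hconst'
  -- each leaf value is g v or g u
  have hleaf : ∀ x : X, (x ∈ T.sideTaxa u v ∧ chi A x = g v) ∨
      (x ∈ T.sideTaxa v u ∧ chi A x = g u) := by
    intro x
    rcases eside_cover T.connected hedge (T.leaf x) with hx | hx
    · exact Or.inl ⟨hx, by rw [← hext x]; exact hsideV _ hx⟩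
    · exact Or.inr ⟨hx, by rw [← hext x]; exact hsideU _ hx⟩
  have hchi01 : ∀ x : X, chi A x = 0 ∨ chi A x = 1 := by
    intro x; unfold chi; split <;> simp
  by_cases hgv : g v = 1
  · refine ⟨u, v, hedge, ?_⟩
    ext x
    rcases hleaf x with ⟨hx, hchi⟩ | ⟨hx, hchi⟩
    · simp only [hx, iff_true]
      exact chi_eq_one.mp (by rw [hchi, hgv])
    · constructor
      · intro hxA
        rw [chi_eq_one.mpr hxA] at hchi
        exact (hguv (by omega)).elim
      · intro hxS
        exact (eside_disjoint T.acyclic hedge hxS hx).elim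
  · -- then g v = 0 and g u = 1, and A is the u side
    have hgv0 : g v = 0 := by
      obtain ⟨x₀, hx₀⟩ := sideTaxa_nonempty hT hedge
      rcases hleaf x₀ with ⟨-, hchi⟩ | ⟨hx', -⟩
      · rcases hchi01 x₀ with h01 | h01 <;> omega
      · exact (eside_disjoint T.acyclic hedge hx₀ hx').elim
    have hgu1 : g u = 1 := by
      obtain ⟨x₁, hx₁⟩ := sideTaxa_nonempty hT hedge.symm
      rcases hleaf x₁ with ⟨hx', -⟩ | ⟨-, hchi⟩
      · exact (eside_disjoint T.acyclic hedge hx' hx₁).elim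
      · rcases hchi01 x₁ with h01 | h01 <;> omega
    refine ⟨v, u, hedge.symm, ?_⟩
    ext x
    rcases hleaf x with ⟨hx, hchi⟩ | ⟨hx, hchi⟩
    · constructor
      · intro hxA
        rw [chi_eq_one.mpr hxA] at hchi
        omega
      · intro hxS
        exact (eside_disjoint T.acyclic hedge hx hxS).elim
    · simp only [hx, iff_true]
      exact chi_eq_one.mp (by rw [hchi, hgu1])
end Dev10
end PhyloTree

namespace PhyloTree
section Dev11
set_option linter.unusedSectionVars false
set_option linter.unusedVariables false
variable {X : Type} [Fintype X] {T T₁ T₂ : PhyloTree X}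

lemma score_split_eq_one (hT : T.IsPhylo) {u v : T.V} (h : T.G.Adj u v) :
    T.score (chi (T.sideTaxa u v)) = 1 := by
  refine le_antisymm (score_split_le_one h) (one_le_score (sideTaxa_nonempty hT h) ?_)
  rw [← sideTaxa_compl h]
  exact sideTaxa_nonempty hT h.symm

lemma splits_subset (hT1 : T₁.IsPhylo) (hT2 : T₂.IsPhylo)
    (hsc : ∀ f : X → ℕ, T₁.score f = T₂.score f) : T₁.splits_s2 ⊆ T₂.splits_s2 := by
  rintro A ⟨u, v, h, rfl⟩
  exact split_of_score_one hT2 (by rw [← hsc]; exact score_split_eq_one hT1 h)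

lemma exists_nbr (hT : T.IsPhylo) (v : T.V) : ∃ a, T.G.Adj v a := by
  by_contra h
  push_neg at h
  have hnb : T.G.neighborSet v = ∅ := by
    ext a; simpa using h a
  by_cases hv : v ∈ Set.range T.leaf
  · obtain ⟨x, rfl⟩ := hv
    have := hT.1 x
    rw [hnb] at this
    simp at this
  · have := hT.2 v hv
    rw [hnb] at this
    simp at this

lemma third_nbr (hT : T.IsPhylo) {v a b : T.V} (ha : T.G.Adj v a) (hb : T.G.Adj v b)
    (hab : a ≠ b) : ∃ c, T.G.Adj v c ∧ c ≠ a ∧ c ≠ b := by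
  classical
  have hv : v ∉ Set.range T.leaf := by
    rintro ⟨x, rfl⟩
    obtain ⟨z, hz⟩ := Set.ncard_eq_one.mp (hT.1 x)
    have h1 : a ∈ T.G.neighborSet (T.leaf x) := ha
    have h2 : b ∈ T.G.neighborSet (T.leaf x) := hb
    rw [hz, Set.mem_singleton_iff] at h1 h2
    exact hab (h1.trans h2.symm)
  have h3 := hT.2 v hv
  by_contra h
  push_neg at h
  have hsub : T.G.neighborSet v ⊆ {a, b} := by
    intro z hz
    rw [SimpleGraph.mem_neighborSet] at hz
    by_contra hzz
    simp only [Set.mem_insert_iff, Set.mem_singleton_iff, not_or] at hzz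
    exact hzz.2 (h z hz hzz.1)
  have : (T.G.neighborSet v).ncard ≤ 2 :=
    le_trans (Set.ncard_le_ncard hsub (Set.toFinite _))
      (le_trans (Set.ncard_insert_le _ _) (by simp))
  omega

lemma not_compl (hT : T.IsPhylo) {v a b : T.V} (ha : T.G.Adj v a) (hb : T.G.Adj v b)
    (hab : a ≠ b) : T.sideTaxa v a ≠ (T.sideTaxa v b)ᶜ := by
  obtain ⟨c, hc, hca, hcb⟩ := third_nbr hT ha hb hab
  obtain ⟨x, hx⟩ := sideTaxa_nonempty hT hc
  intro heq
  have hxa : x ∉ T.sideTaxa v a := fun h => branch_disjoint hc ha hca hx h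
  have hxb : x ∉ T.sideTaxa v b := fun h => branch_disjoint hc hb hcb hx h
  rw [heq] at hxa
  exact hxa hxb

/-- Cross-tree tail functionality. -/
lemma tails_eq (hT1 : T₁.IsPhylo) (hT2 : T₂.IsPhylo) (hsp : T₁.splits_s2 = T₂.splits_s2)
    {v a b : T₁.V} {w c w' c' : T₂.V}
    (ha : T₁.G.Adj v a) (hb : T₁.G.Adj v b)
    (hc : T₂.G.Adj w c) (hc' : T₂.G.Adj w' c')
    (hce : T₁.sideTaxa v a = T₂.sideTaxa w c)
    (hce' : T₁.sideTaxa v b = T₂.sideTaxa w' c') : w = w' := by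
  by_cases hab : a = b
  · subst hab
    exact (side_unique hT2 hc hc' (hce.symm.trans hce')).1
  · by_contra hww
    have hAB : T₂.sideTaxa w c ∩ T₂.sideTaxa w' c' = ∅ := by
      rw [← hce, ← hce']
      exact branch_disjoint_taxa ha hb hab
    have hABc : T₂.sideTaxa w c ≠ (T₂.sideTaxa w' c')ᶜ := by
      rw [← hce, ← hce']
      exact not_compl hT1 ha hb hab
    obtain ⟨t, c₀, ht, hsub, hdisj, hne1, hne2⟩ := adj_back hT2 hc hc' hAB hABc hww
    have hmem : T₂.sideTaxa t c₀ ∈ T₁.splits_s2 := by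
      rw [hsp]
      exact ⟨t, c₀, ht, rfl⟩
    obtain ⟨t₁, c₁, ht₁, heqC⟩ := hmem
    refine adj_fwd hT1 ha hb hab ht₁ ?_ ?_ ?_ ?_
    · rw [← heqC, hce]; exact hsub
    · rw [← heqC, hce']; exact hdisj
    · rw [← heqC, hce]; exact hne1
    · rw [← heqC, hce']; exact hne2

/-- The cross-tree vertex correspondence. -/
def rel (T₁ T₂ : PhyloTree X) (v : T₁.V) (w : T₂.V) : Prop :=
  ∃ a c, ∃ (_ : T₁.G.Adj v a) (_ : T₂.G.Adj w c), T₁.sideTaxa v a = T₂.sideTaxa w c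

lemma rel_symm {v : T₁.V} {w : T₂.V} (h : rel T₁ T₂ v w) : rel T₂ T₁ w v := by
  obtain ⟨a, c, ha, hc, he⟩ := h
  exact ⟨c, a, hc, ha, he.symm⟩

lemma rel_total (hT1 : T₁.IsPhylo) (hsp : T₁.splits_s2 = T₂.splits_s2) (v : T₁.V) :
    ∃ w, rel T₁ T₂ v w := by
  obtain ⟨a, ha⟩ := exists_nbr hT1 v
  have : T₁.sideTaxa v a ∈ T₂.splits_s2 := by rw [← hsp]; exact ⟨v, a, ha, rfl⟩
  obtain ⟨w, c, hc, he⟩ := this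
  exact ⟨w, a, c, ha, hc, he⟩

lemma rel_func (hT1 : T₁.IsPhylo) (hT2 : T₂.IsPhylo) (hsp : T₁.splits_s2 = T₂.splits_s2)
    {v : T₁.V} {w w' : T₂.V} (h : rel T₁ T₂ v w) (h' : rel T₁ T₂ v w') : w = w' := by
  obtain ⟨a, c, ha, hc, he⟩ := h
  obtain ⟨a', c', ha', hc', he'⟩ := h'
  exact tails_eq hT1 hT2 hsp ha ha' hc hc' he he'

lemma rel_adj (hT1 : T₁.IsPhylo) (hsp : T₁.splits_s2 = T₂.splits_s2) {u v : T₁.V}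
    (h : T₁.G.Adj u v) : ∃ w c, T₂.G.Adj w c ∧ rel T₁ T₂ u w ∧ rel T₁ T₂ v c := by
  have : T₁.sideTaxa u v ∈ T₂.splits_s2 := by rw [← hsp]; exact ⟨u, v, h, rfl⟩
  obtain ⟨w, c, hc, he⟩ := this
  refine ⟨w, c, hc, ⟨v, c, h, hc, he⟩, ⟨u, w, h.symm, hc.symm, ?_⟩⟩
  rw [sideTaxa_compl h, sideTaxa_compl hc, he]

lemma rel_leaf (hT1 : T₁.IsPhylo) (hT2 : T₂.IsPhylo) (x : X) :
    rel T₁ T₂ (T₁.leaf x) (T₂.leaf x) := by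
  obtain ⟨a, ha⟩ := exists_nbr hT1 (T₁.leaf x)
  obtain ⟨a₂, ha₂⟩ := exists_nbr hT2 (T₂.leaf x)
  refine ⟨a, a₂, ha, ha₂, ?_⟩
  rw [sideTaxa_compl ha.symm, sideTaxa_compl ha₂.symm,
    sideTaxa_leaf hT1 x ha.symm, sideTaxa_leaf hT2 x ha₂.symm]
end Dev11
end PhyloTree

namespace PhyloTree
section Dev12
set_option linter.unusedSectionVars false
set_option linter.unusedVariables false
variable {X : Type} [Fintype X] {T T₁ T₂ : PhyloTree X}

lemma isom_of_splits_eq (hT1 : T₁.IsPhylo) (hT2 : T₂.IsPhylo)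
    (hsp : T₁.splits_s2 = T₂.splits_s2) : T₁.Isom T₂ := by
  classical
  set φ : T₁.V → T₂.V := fun v => (rel_total hT1 hsp v).choose with hφdef
  have hφ : ∀ v, rel T₁ T₂ v (φ v) := fun v => (rel_total hT1 hsp v).choose_spec
  set ψ : T₂.V → T₁.V := fun w => (rel_total hT2 hsp.symm w).choose with hψdef
  have hψ : ∀ w, rel T₂ T₁ w (ψ w) := fun w => (rel_total hT2 hsp.symm w).choose_spec
  have hleft : ∀ v, ψ (φ v) = v :=
    fun v => rel_func hT2 hT1 hsp.symm (hψ (φ v)) (rel_symm (hφ v))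
  have hright : ∀ w, φ (ψ w) = w :=
    fun w => rel_func hT1 hT2 hsp (hφ (ψ w)) (rel_symm (hψ w))
  have hpush1 : ∀ u v : T₁.V, T₁.G.Adj u v → T₂.G.Adj (φ u) (φ v) := by
    intro u v h
    obtain ⟨w, c, hc, h1, h2⟩ := rel_adj hT1 hsp h
    rw [rel_func hT1 hT2 hsp (hφ u) h1, rel_func hT1 hT2 hsp (hφ v) h2]
    exact hc
  have hpush2 : ∀ u v : T₂.V, T₂.G.Adj u v → T₁.G.Adj (ψ u) (ψ v) := by
    intro u v h
    obtain ⟨w, c, hc, h1, h2⟩ := rel_adj hT2 hsp.symm h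
    rw [rel_func hT2 hT1 hsp.symm (hψ u) h1, rel_func hT2 hT1 hsp.symm (hψ v) h2]
    exact hc
  refine ⟨⟨φ, ψ, hleft, hright⟩, ?_, ?_⟩
  · intro u v
    constructor
    · exact hpush1 u v
    · intro h
      have := hpush2 _ _ h
      rwa [hleft, hleft] at this
  · intro x
    exact rel_func hT1 hT2 hsp (hφ (T₁.leaf x)) (rel_leaf hT1 hT2 x)

lemma mutCount_comp (e : T₁.V ≃ T₂.V)
    (hadj : ∀ u v : T₁.V, T₁.G.Adj u v ↔ T₂.G.Adj (e u) (e v)) (g : T₁.V → ℕ) :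
    T₂.mutCount (g ∘ e.symm) = T₁.mutCount g := by
  classical
  unfold mutCount
  rw [show {e' | e' ∈ T₂.G.edgeSet ∧ ∃ u v : T₂.V, e' = s(u, v) ∧ (g ∘ e.symm) u ≠ (g ∘ e.symm) v}
      = Sym2.map e '' {e' | e' ∈ T₁.G.edgeSet ∧ ∃ u v : T₁.V, e' = s(u, v) ∧ g u ≠ g v} from ?_]
  · exact Set.ncard_image_of_injective _ (Sym2.map.injective e.injective)
  · apply Set.eq_of_subset_of_subset
    · rintro τ ⟨hτ, u, v, rfl, hg⟩
      refine ⟨s(e.symm u, e.symm v), ⟨?_, e.symm u, e.symm v, rfl, ?_⟩, by simp⟩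
      · rw [SimpleGraph.mem_edgeSet] at hτ ⊢
        rw [hadj (e.symm u) (e.symm v), e.apply_symm_apply, e.apply_symm_apply]
        exact hτ
      · exact hg
    · rintro τ ⟨σ, ⟨hσ, a, b, rfl, hg⟩, rfl⟩
      refine ⟨?_, e a, e b, by simp [Sym2.map_pair_eq], ?_⟩
      · rw [Sym2.map_pair_eq, SimpleGraph.mem_edgeSet]
        rw [SimpleGraph.mem_edgeSet] at hσ
        exact (hadj a b).mp hσ
      · simpa using hg

lemma score_le_of_isom (h : T₁.Isom T₂) (f : X → ℕ) : T₂.score f ≤ T₁.score f := by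
  obtain ⟨e, hadj, hleaf⟩ := h
  have hsub : {n | ∃ g : T₁.V → ℕ, T₁.IsExtension f g ∧ T₁.mutCount g = n} ⊆
      {n | ∃ g : T₂.V → ℕ, T₂.IsExtension f g ∧ T₂.mutCount g = n} := by
    rintro n ⟨g, hext, rfl⟩
    refine ⟨g ∘ e.symm, ?_, mutCount_comp e hadj g⟩
    intro x
    have : e.symm (T₂.leaf x) = T₁.leaf x := by
      rw [← hleaf x, e.symm_apply_apply]
    show g (e.symm (T₂.leaf x)) = f x
    rw [this]
    exact hext x
  exact Nat.sInf_le (hsub (Nat.sInf_mem (scoreSet_nonempty T₁ f)))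

lemma isom_symm (h : T₁.Isom T₂) : T₂.Isom T₁ := by
  obtain ⟨e, hadj, hleaf⟩ := h
  refine ⟨e.symm, ?_, ?_⟩
  · intro u v
    rw [hadj (e.symm u) (e.symm v), e.apply_symm_apply, e.apply_symm_apply]
  · intro x
    rw [← hleaf x, e.symm_apply_apply]

lemma score_eq_of_isom (h : T₁.Isom T₂) (f : X → ℕ) : T₁.score f = T₂.score f :=
  le_antisymm (score_le_of_isom (isom_symm h) f) (score_le_of_isom h f)

lemma score_bddAbove (T : PhyloTree X) (f : X → ℕ) :
    T.score f ≤ Fintype.card (Sym2 T.V) := by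
  classical
  obtain ⟨n, g, hext, rfl⟩ := scoreSet_nonempty T f
  refine le_trans (Nat.sInf_le ⟨g, hext, rfl⟩) ?_
  unfold mutCount
  calc _ ≤ (Set.univ : Set (Sym2 T.V)).ncard :=
        Set.ncard_le_ncard (Set.subset_univ _) (Set.toFinite _)
    _ = _ := by rw [Set.ncard_univ, Nat.card_eq_fintype_card]
end Dev12
end PhyloTree

/-- `d_MP(T₁,T₂) = 0` iff `T₁ = T₂` (up to isomorphism as `X`-trees). -/
theorem dMP_eq_zero_iff {X : Type} [Fintype X] (T₁ T₂ : PhyloTree X)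
    (h₁ : T₁.IsPhylo) (h₂ : T₂.IsPhylo) :
    PhyloTree.dMP T₁ T₂ = 0 ↔ PhyloTree.Isom T₁ T₂ := by
  classical
  set S : Set ℕ :=
    {n | ∃ f : X → ℕ, n = ((T₁.score f : ℤ) - (T₂.score f : ℤ)).natAbs} with hS
  have hSne : S.Nonempty := ⟨_, fun _ => 0, rfl⟩
  have hbdd : BddAbove S := by
    refine ⟨Fintype.card (Sym2 T₁.V) + Fintype.card (Sym2 T₂.V), ?_⟩
    rintro n ⟨f, rfl⟩
    have h1 := PhyloTree.score_bddAbove T₁ f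
    have h2 := PhyloTree.score_bddAbove T₂ f
    omega
  constructor
  · intro h0
    have hsceq : ∀ f : X → ℕ, T₁.score f = T₂.score f := by
      intro f
      by_contra hne
      have hmem : ((T₁.score f : ℤ) - (T₂.score f : ℤ)).natAbs ∈ S := ⟨f, rfl⟩
      have := le_csSup hbdd hmem
      rw [show sSup S = PhyloTree.dMP T₁ T₂ from rfl, h0] at this
      omega
    exact PhyloTree.isom_of_splits_eq h₁ h₂
      (Set.eq_of_subset_of_subset (PhyloTree.splits_subset h₁ h₂ hsceq)
        (PhyloTree.splits_subset h₂ h₁ (fun f => (hsceq f).symm)))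
  · intro hiso
    have hsc := PhyloTree.score_eq_of_isom hiso
    have : S = {0} := by
      apply Set.eq_of_subset_of_subset
      · rintro n ⟨f, rfl⟩
        rw [hsc f]
        simp
      · rintro n hn
        rw [Set.mem_singleton_iff] at hn
        subst hn
        exact ⟨fun _ => 0, by rw [hsc]; simp⟩
    show sSup S = 0
    rw [this, csSup_singleton]
end

section
/- For every even r ≥ 2 (more generally every r > 1), there exist two binary phylogenetic trees T1, T2 on n = (r+1)^2 taxa and an (r+1)-state character f with |l_f(T1) - l_f(T2)| = r^2, while every r-state character f̂ satisfies |l_{f̂}(T1) - l_{f̂}(T2)| ≤ r^2 - 2. Hence no fixed number of states suffices to achieve the MP distance for all pairs of trees. -/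
/-- An (unrooted) binary phylogenetic `X`-tree: the taxa are exactly the
degree-1 vertices and every other vertex has degree 3. -/
def PhyloTree.IsBinary {X : Type} (T : PhyloTree X) : Prop :=
  (∀ x, (T.G.neighborSet (T.leaf x)).ncard = 1) ∧
  ∀ v : T.V, v ∉ Set.range T.leaf → (T.G.neighborSet v).ncard = 3

namespace NFS
open SimpleGraph


variable {W : Type} {C : Type}

section parentGraph

variable (par : W → W) (ρ : W → ℕ) (rt : W)

/-- The graph generated by a parent function. -/
def pgraph : SimpleGraph W := SimpleGraph.fromRel (fun a b => par a = b)

lemma pgraph_adj {a b : W} : (pgraph par).Adj a b ↔ a ≠ b ∧ (par a = b ∨ par b = a) := by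
  simp [pgraph, SimpleGraph.fromRel_adj]

variable (hlt : ∀ w, w ≠ rt → ρ (par w) < ρ w) (hroot : par rt = rt)

include hlt hroot in
lemma wt_par_le (w : W) : ρ (par w) ≤ ρ w := by
  by_cases h : w = rt
  · subst h; rw [hroot]
  · exact (hlt w h).le

include hlt hroot in
lemma wt_iterate_le (n : ℕ) (w : W) : ρ (par^[n] w) ≤ ρ w := by
  induction n generalizing w with
  | zero => simp
  | succ n ih =>
    rw [Function.iterate_succ_apply]
    exact (ih (par w)).trans (wt_par_le par ρ rt hlt hroot w)

include hlt hroot in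
lemma iterate_ne (n : ℕ) (w : W) (hw : w ≠ rt) : par^[n+1] w ≠ w := by
  intro h
  have h1 : ρ (par^[n] (par w)) ≤ ρ (par w) := wt_iterate_le par ρ rt hlt hroot n (par w)
  rw [Function.iterate_succ_apply] at h
  rw [h] at h1
  exact absurd (lt_of_le_of_lt h1 (hlt w hw)) (lt_irrefl _)

/-- Reachability to a root along a parent function within any graph. -/
lemma reach_aux (H : SimpleGraph W) (P : Set W)
    (hP : ∀ w ∈ P, w ≠ rt → par w ∈ P ∧ H.Adj w (par w) ∧ ρ (par w) < ρ w) :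
    ∀ v ∈ P, H.Reachable v rt := by
  have key : ∀ n, ∀ v ∈ P, ρ v < n → H.Reachable v rt := by
    intro n
    induction n with
    | zero => intro v _ h; omega
    | succ n ih =>
      intro v hv hn
      by_cases h : v = rt
      · exact h ▸ Reachable.refl _
      · obtain ⟨hmem, hadj, hwt⟩ := hP v hv h
        exact hadj.reachable.trans (ih _ hmem (by omega))
  exact fun v hv => key (ρ v + 1) v hv (by omega)

include hlt hroot in
lemma pgraph_key (v : W) (hv : v ≠ rt) (p : (pgraph par).Walk v (par v)) :
    s(v, par v) ∈ p.edges := by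
  classical
  set S : Set W := {u | ∃ n, par^[n] u = v} with hS
  have hvS : v ∈ S := ⟨0, rfl⟩
  have hpvS : par v ∉ S := by
    rintro ⟨m, hm⟩
    have : par^[m+1] v = v := by rw [Function.iterate_succ_apply]; exact hm
    exact iterate_ne par ρ rt hlt hroot m v hv this
  obtain ⟨d, hd, hfst, hsnd⟩ := p.exists_boundary_dart S hvS hpvS
  have hadj := d.adj
  rw [pgraph_adj] at hadj
  obtain ⟨hne, hcase⟩ := hadj
  have hfst_eq : d.toProd.1 = v ∧ d.toProd.2 = par v := by
    rcases hcase with hc | hc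
    · obtain ⟨n, hn⟩ := hfst
      rcases n with _ | n
      · simp at hn; subst hn
        exact ⟨rfl, hc.symm⟩
      · exfalso
        apply hsnd
        refine ⟨n, ?_⟩
        rw [← hc, ← Function.iterate_succ_apply]
        exact hn
    · exfalso
      apply hsnd
      obtain ⟨n, hn⟩ := hfst
      exact ⟨n+1, by rw [Function.iterate_succ_apply, hc]; exact hn⟩
  have hde : d.toProd = (v, par v) := Prod.ext hfst_eq.1 hfst_eq.2
  have : s(v, par v) = d.edge := by rw [SimpleGraph.Dart.edge, hde]
  rw [this]
  exact List.mem_map_of_mem hd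

include hlt hroot in
lemma pgraph_acyclic : (pgraph par).IsAcyclic := by
  rw [isAcyclic_iff_forall_adj_isBridge]
  intro v w hadj
  rw [isBridge_iff_adj_and_forall_walk_mem_edges]
  refine fun p => ?_
  have h := hadj
  rw [pgraph_adj] at h
  obtain ⟨hne, hc | hc⟩ := h
  · have hv : v ≠ rt := by
      intro h; apply hne; rw [h, ← hc, h, hroot]
    subst hc
    exact pgraph_key par ρ rt hlt hroot v hv p
  · have hw : w ≠ rt := by
      intro h; apply hne; rw [h] at hc ⊢; rw [← hc, hroot]
    subst hc
    have := pgraph_key par ρ rt hlt hroot w hw p.reverse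
    rw [SimpleGraph.Walk.edges_reverse, List.mem_reverse] at this
    rwa [Sym2.eq_swap]

include hroot in
lemma pgraph_edge_form {e : Sym2 W} (he : e ∈ (pgraph par).edgeSet) :
    ∃ w, w ≠ rt ∧ e = s(w, par w) := by
  induction e with
  | _ a b =>
    rw [SimpleGraph.mem_edgeSet, pgraph_adj] at he
    obtain ⟨hne, hc | hc⟩ := he
    · refine ⟨a, ?_, by rw [hc]⟩
      intro h; subst h; rw [hroot] at hc; exact hne hc
    · refine ⟨b, ?_, by rw [hc, Sym2.eq_swap]⟩
      intro h; subst h; rw [hroot] at hc; exact hne hc.symm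

end parentGraph


/-- The set of edges of `H` whose endpoints get different colors under `g`. -/
def mutSet (H : SimpleGraph W) (g : W → C) : Set (Sym2 W) :=
  { e | e ∈ H.edgeSet ∧ ∃ u v : W, e = s(u, v) ∧ g u ≠ g v }

lemma mutSet_finite [Finite W] (H : SimpleGraph W) (g : W → C) : (mutSet H g).Finite := by
  classical
  have : Finite (Sym2 W) := by infer_instance
  exact Set.toFinite _

lemma mem_mutSet_of_adj {H : SimpleGraph W} {g : W → C} {a b : W} (h : H.Adj a b)
    (hg : g a ≠ g b) : s(a, b) ∈ mutSet H g :=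
  ⟨H.mem_edgeSet.2 h, a, b, rfl, hg⟩

lemma mutSet_endpoints {H : SimpleGraph W} {g : W → C} {a b : W}
    (h : s(a, b) ∈ mutSet H g) : H.Adj a b ∧ g a ≠ g b := by
  obtain ⟨he, u, v, huv, hne⟩ := h
  rw [Sym2.eq_iff] at huv
  refine ⟨H.mem_edgeSet.1 he, ?_⟩
  rcases huv with ⟨rfl, rfl⟩ | ⟨rfl, rfl⟩
  · exact hne
  · exact fun h => hne h.symm

lemma exists_mut_adj {H : SimpleGraph W} (g : W → C) :
    ∀ {x y : W}, H.Walk x y → g x ≠ g y → ∃ a b, H.Adj a b ∧ g a ≠ g b := by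
  intro x y w
  induction w with
  | nil => exact fun h => absurd rfl h
  | @cons u v z h p ih =>
    intro hne
    by_cases hg : g u = g v
    · exact ih (fun h' => hne (hg ▸ h'))
    · exact ⟨u, v, h, hg⟩

/-- Core lower bound: the number of colors seen on a mutually-reachable set `L`
is at most the number of bichromatic edges plus one. -/
lemma ncard_image_le_mutSet [Finite W] (H : SimpleGraph W) (L : Set W)
    (hL : ∀ x ∈ L, ∀ y ∈ L, H.Reachable x y) :
    ∀ (g : W → C), (g '' L).ncard ≤ (mutSet H g).ncard + 1 := by
  classical
  suffices key : ∀ n (g : W → C), (mutSet H g).ncard ≤ n → (g '' L).ncard ≤ n + 1 by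
    exact fun g => key _ g le_rfl
  intro n
  induction n with
  | zero =>
    intro g hg
    by_contra hcon
    push_neg at hcon
    have h2 : 1 < (g '' L).ncard := hcon
    obtain ⟨a, b, ha, hb, hab⟩ := (Set.one_lt_ncard_iff (L.toFinite.image g)).1 h2
    obtain ⟨x, hx, rfl⟩ := ha
    obtain ⟨y, hy, rfl⟩ := hb
    obtain ⟨u, v, hadj, hne⟩ := exists_mut_adj g (hL x hx y hy).some hab
    have : s(u, v) ∈ mutSet H g := mem_mutSet_of_adj hadj hne
    have hpos : 0 < (mutSet H g).ncard :=
      (Set.ncard_pos (mutSet_finite H g)).2 ⟨_, this⟩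
    omega
  | succ n ih =>
    intro g hg
    by_cases h1 : (g '' L).ncard ≤ 1
    · omega
    · push_neg at h1
      obtain ⟨a, b, ha, hb, hab⟩ := (Set.one_lt_ncard_iff (L.toFinite.image g)).1 h1
      obtain ⟨x, hx, rfl⟩ := ha
      obtain ⟨y, hy, rfl⟩ := hb
      obtain ⟨u, v, hadj, hne⟩ := exists_mut_adj g (hL x hx y hy).some hab
      have hmem : s(u, v) ∈ mutSet H g := mem_mutSet_of_adj hadj hne
      set g₂ : W → C := fun w => if g w = g u then g v else g w with hg₂
      have hsub : mutSet H g₂ ⊆ mutSet H g \ {s(u, v)} := by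
        rintro e ⟨he, a', b', rfl, hne'⟩
        constructor
        · refine ⟨he, a', b', rfl, ?_⟩
          intro hcon
          apply hne'
          simp only [hg₂, hcon]
        · intro hcon
          simp only [Set.mem_singleton_iff, Sym2.eq_iff] at hcon
          have hgu : g₂ u = g v := by simp [hg₂]
          have hgv : g₂ v = g v := by
            simp only [hg₂]
            split <;> simp_all
          rcases hcon with ⟨rfl, rfl⟩ | ⟨rfl, rfl⟩
          · exact hne' (hgu.trans hgv.symm)
          · exact hne' (hgv.trans hgu.symm)
      have hcard2 : (mutSet H g₂).ncard ≤ n := by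
        have h1' : (mutSet H g₂).ncard ≤ (mutSet H g \ {s(u, v)}).ncard :=
          Set.ncard_le_ncard hsub ((mutSet_finite H g).diff)
        have h2' : (mutSet H g \ {s(u, v)}).ncard = (mutSet H g).ncard - 1 := by
          rw [Set.ncard_diff_singleton_of_mem hmem]
        have hpos : 0 < (mutSet H g).ncard :=
          (Set.ncard_pos (mutSet_finite H g)).2 ⟨_, hmem⟩
        omega
      have hih := ih g₂ hcard2
      have himg : g '' L ⊆ (g₂ '' L) ∪ {g u} := by
        rintro c ⟨z, hz, rfl⟩
        by_cases hc : g z = g u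
        · right; exact hc
        · left; exact ⟨z, hz, by simp [hg₂, hc]⟩
      have := Set.ncard_le_ncard himg (((L.toFinite.image g₂)).union (Set.finite_singleton _))
      have := Set.ncard_union_le (g₂ '' L) {g u}
      have hsing : ({g u} : Set C).ncard = 1 := Set.ncard_singleton _
      omega

/-- The monochromatic subgraph. -/
def monoSub (H : SimpleGraph W) (g : W → C) : SimpleGraph W where
  Adj u v := H.Adj u v ∧ g u = g v
  symm := ⟨fun u v h => ⟨h.1.symm, h.2.symm⟩⟩
  loopless := ⟨fun u h => H.loopless.irrefl u h.1⟩

lemma monoSub_support_color {H : SimpleGraph W} {g : W → C} :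
    ∀ {x y : W} (w : (monoSub H g).Walk x y), ∀ v ∈ w.support, g v = g x := by
  intro x y w
  induction w with
  | nil => intro v hv; simp at hv; subst hv; rfl
  | @cons a b c h p ih =>
    intro v hv
    rw [SimpleGraph.Walk.support_cons, List.mem_cons] at hv
    rcases hv with rfl | hv
    · rfl
    · rw [ih v hv]; exact (show H.Adj a b ∧ g a = g b from h).2.symm

lemma monoSub_reachable_color {H : SimpleGraph W} {g : W → C} {x y : W}
    (h : (monoSub H g).Reachable x y) : g y = g x := by
  obtain ⟨w⟩ := h
  exact monoSub_support_color w y w.end_mem_support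

lemma sum_ncard_le {α ι : Type} [Fintype ι] (S : ι → Set α) (M : Set α) (hM : M.Finite)
    (hsub : ∀ i, S i ⊆ M) (hdisj : ∀ i j, i ≠ j → Disjoint (S i) (S j)) :
    ∑ i, (S i).ncard ≤ M.ncard := by
  classical
  have hfin : ∀ i, (S i).Finite := fun i => hM.subset (hsub i)
  have h1 : ∀ i, (S i).ncard = ((hfin i).toFinset).card := fun i =>
    Set.ncard_eq_toFinset_card _ _
  simp_rw [h1]
  rw [← Finset.card_biUnion]
  · rw [Set.ncard_eq_toFinset_card M hM]
    apply Finset.card_le_card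
    intro e he
    rw [Finset.mem_biUnion] at he
    obtain ⟨i, -, hei⟩ := he
    rw [Set.Finite.mem_toFinset] at hei ⊢
    exact hsub i hei
  · intro i _ j _ hij
    rw [Function.onFun, Finset.disjoint_left]
    intro e hei hej
    rw [Set.Finite.mem_toFinset] at hei hej
    exact Set.disjoint_left.1 (hdisj i j hij) hei hej

lemma ncard_range_inj {α β : Type} [Finite α] (f : α → β) (hf : Function.Injective f) :
    (Set.range f).ncard = Nat.card α := by
  rw [← Set.image_univ, Set.ncard_image_of_injective _ hf, Set.ncard_univ]

section scoreLemmas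
open PhyloTree
variable {X : Type} {C : Type}

lemma mutCount_eq (T : PhyloTree X) (g : T.V → C) : T.mutCount g = (mutSet T.G g).ncard := rfl

lemma score_le (T : PhyloTree X) (f : X → C) (g : T.V → C) (h : T.IsExtension f g) :
    T.score f ≤ T.mutCount g :=
  Nat.sInf_le ⟨g, h, rfl⟩

lemma le_score (T : PhyloTree X) (f : X → C) (m : ℕ)
    (hne : ∃ g, T.IsExtension f g)
    (h : ∀ g, T.IsExtension f g → m ≤ T.mutCount g) : m ≤ T.score f := by
  obtain ⟨g, hg⟩ := hne
  exact le_csInf ⟨_, g, hg, rfl⟩ (by rintro n ⟨g', hg', rfl⟩; exact h g' hg')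

lemma exists_extension [Nonempty C] (T : PhyloTree X) (f : X → C) :
    ∃ g : T.V → C, T.IsExtension f g := by
  classical
  refine ⟨fun v => if h : ∃ x, T.leaf x = v then f h.choose else Classical.arbitrary C, ?_⟩
  intro x
  have hx : ∃ y, T.leaf y = T.leaf x := ⟨x, rfl⟩
  dsimp only
  rw [dif_pos hx]
  congr 1
  exact T.leaf.injective hx.choose_spec

lemma exists_score_ext [Nonempty C] (T : PhyloTree X) (f : X → C) :
    ∃ g : T.V → C, T.IsExtension f g ∧ T.mutCount g = T.score f := by
  obtain ⟨g, hg⟩ := exists_extension T f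
  have : T.score f ∈ {n | ∃ g : T.V → C, T.IsExtension f g ∧ T.mutCount g = n} :=
    Nat.sInf_mem ⟨_, g, hg, rfl⟩
  exact this

/-- Relabelling a phylogenetic tree along an equivalence of taxa. -/
def relabel (T : PhyloTree X) {Y : Type} (e : Y ≃ X) : PhyloTree Y :=
  { V := T.V, fintypeV := T.fintypeV, G := T.G, connected := T.connected,
    acyclic := T.acyclic, leaf := e.toEmbedding.trans T.leaf }

lemma relabel_score (T : PhyloTree X) {Y : Type} (e : Y ≃ X) (f : Y → C) :
    (relabel T e).score f = T.score (f ∘ e.symm) := by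
  unfold PhyloTree.score
  congr 1
  ext n
  constructor
  · rintro ⟨g, hg, rfl⟩
    refine ⟨g, fun x => ?_, rfl⟩
    have := hg (e.symm x)
    change g (T.leaf (e (e.symm x))) = f (e.symm x) at this
    simpa using this
  · rintro ⟨g, hg, rfl⟩
    refine ⟨g, fun y => ?_, rfl⟩
    have := hg (e y)
    change g (T.leaf (e y)) = f y
    simpa using this
lemma relabel_isBinary {X Y : Type} (T : PhyloTree X) (e : Y ≃ X) (hT : T.IsBinary) :
    (relabel T e).IsBinary := by
  constructor
  · intro y
    exact hT.1 (e y)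
  · intro v hv
    refine hT.2 v (fun hc => hv ?_)
    obtain ⟨x, hx⟩ := hc
    exact ⟨e.symm x, by change T.leaf (e (e.symm x)) = v; rw [Equiv.apply_symm_apply, hx]⟩

end scoreLemmas

section tree
variable (q : ℕ)

abbrev Gd := Fin q × Fin q
abbrev Vx := (Fin q × Fin q) ⊕ ((Fin q × Fin (q-1)) ⊕ (Fin (q-2)))

def Lf (p : Gd q) : Vx q := Sum.inl p
def Inn (i : Fin q) (t : Fin (q-1)) : Vx q := Sum.inr (Sum.inl (i, t))
def Spn (k : Fin (q-2)) : Vx q := Sum.inr (Sum.inr k)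

variable (hq : 3 ≤ q)

def par : Vx q → Vx q
  | Sum.inl (i, j) => Inn q i ⟨min j.val (q-2), by omega⟩
  | Sum.inr (Sum.inl (i, t)) =>
      if t.val = 0 then Spn q ⟨min (i.val - 1) (q-3), by omega⟩
      else Inn q i ⟨t.val - 1, by omega⟩
  | Sum.inr (Sum.inr k) => Spn q ⟨k.val - 1, by omega⟩

def wt : Vx q → ℕ
  | Sum.inl _ => 2*q+5
  | Sum.inr (Sum.inl (_, t)) => q + t.val
  | Sum.inr (Sum.inr k) => k.val

def rt : Vx q := Spn q ⟨0, by omega⟩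

lemma par_lt : ∀ w : Vx q, w ≠ rt q hq → wt q (par q hq w) < wt q w := by
  rintro (⟨i, j⟩ | ⟨i, t⟩ | k) hw
  · simp only [par, wt, Inn]
    omega
  · by_cases h0 : t.val = 0
    · simp only [par, if_pos h0, Spn, wt]; omega
    · simp only [par, if_neg h0, Inn, wt]; omega
  · simp only [par, wt, Spn]
    have : k.val ≠ 0 := by
      intro h
      exact hw (by simp [rt, Spn, Fin.ext_iff, h])
    omega

lemma par_rt : par q hq (rt q hq) = rt q hq := by
  simp [par, rt, Spn]

def Gr : SimpleGraph (Vx q) := pgraph (par q hq)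

lemma Gr_adj {a b : Vx q} : (Gr q hq).Adj a b ↔ a ≠ b ∧ (par q hq a = b ∨ par q hq b = a) :=
  pgraph_adj _

lemma Gr_connected : (Gr q hq).Connected := by
  rw [connected_iff]
  refine ⟨fun u v => ?_, ⟨rt q hq⟩⟩
  have h := reach_aux (par q hq) (wt q) (rt q hq) (Gr q hq) Set.univ ?_
  · exact (h u trivial).trans (h v trivial).symm
  · intro w _ hw
    have h2 := par_lt q hq w hw
    refine ⟨trivial, ?_, h2⟩
    rw [Gr_adj]
    refine ⟨fun hc => ?_, Or.inl rfl⟩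
    rw [← hc] at h2
    exact lt_irrefl _ h2

lemma Gr_acyclic : (Gr q hq).IsAcyclic :=
  pgraph_acyclic (par q hq) (wt q) (rt q hq) (par_lt q hq) (par_rt q hq)

lemma Gr_edge_form {e : Sym2 (Vx q)} (he : e ∈ (Gr q hq).edgeSet) :
    ∃ w, w ≠ rt q hq ∧ e = s(w, par q hq w) :=
  pgraph_edge_form (par q hq) (rt q hq) (par_rt q hq) he

lemma par_ne_Lf (u : Vx q) (p : Gd q) : par q hq u ≠ Lf q p := by
  rcases u with ⟨i, j⟩ | ⟨⟨i, s⟩⟩ | k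
  · simp [par, Lf, Inn]
  · by_cases h0 : s.val = 0
    · simp [par, if_pos h0, Lf, Spn]
    · simp [par, if_neg h0, Lf, Inn]
  · simp [par, Lf, Spn]

lemma ncard3 {α : Type} {a b c : α} (h1 : a ≠ b) (h2 : a ≠ c) (h3 : b ≠ c) :
    ({a, b, c} : Set α).ncard = 3 := by
  rw [Set.ncard_insert_of_notMem (by simp [h1, h2]) (Set.toFinite _),
    Set.ncard_insert_of_notMem (by simp [h3]) (Set.toFinite _), Set.ncard_singleton]

lemma nbr_Lf (p : Gd q) : (Gr q hq).neighborSet (Lf q p) = {par q hq (Lf q p)} := by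
  ext u
  simp only [mem_neighborSet, Gr_adj, Set.mem_singleton_iff]
  constructor
  · rintro ⟨hne, h | h⟩
    · exact h.symm
    · exact absurd h (par_ne_Lf q hq u p)
  · rintro rfl
    refine ⟨?_, Or.inl rfl⟩
    rcases p with ⟨i, j⟩
    simp [par, Lf, Inn]

lemma nbr_Inn_lt (i : Fin q) (t : Fin (q-1)) (ht : t.val < q-2) :
    (Gr q hq).neighborSet (Inn q i t) =
      {Lf q (i, ⟨t.val, by omega⟩), Inn q i ⟨t.val+1, by omega⟩, par q hq (Inn q i t)} := by
  ext u
  simp only [mem_neighborSet, Gr_adj, Set.mem_insert_iff, Set.mem_singleton_iff]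
  constructor
  · rintro ⟨hne, h | h⟩
    · right; right; exact h.symm
    · rcases u with ⟨i', j⟩ | ⟨⟨i', s⟩⟩ | k
      · left
        simp only [par, Lf, Inn, Sum.inr.injEq, Sum.inl.injEq, Prod.mk.injEq, Fin.mk.injEq,
          Fin.ext_iff] at h ⊢
        omega
      · right; left
        by_cases h0 : s.val = 0
        · simp only [par, if_pos h0, Spn, Inn] at h
          exact absurd h (by simp)
        · simp only [par, if_neg h0, Inn, Sum.inr.injEq, Sum.inl.injEq, Prod.mk.injEq,
            Fin.mk.injEq, Fin.ext_iff] at h ⊢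
          omega
      · exfalso
        simp [par, Spn, Inn] at h
  · rintro (rfl | rfl | rfl)
    · refine ⟨by simp [Lf, Inn], Or.inr ?_⟩
      simp only [par, Lf]
      have hm : min (t.val) (q-2) = t.val := by omega
      simp [Inn, hm]
    · refine ⟨by simp [Inn, Fin.ext_iff], Or.inr ?_⟩
      have h0 : (⟨t.val+1, by omega⟩ : Fin (q-1)).val ≠ 0 := by simp
      simp only [par, if_neg h0]
      simp [Inn]
    · refine ⟨?_, Or.inl rfl⟩
      intro hc
      have := par_lt q hq (Inn q i t) (by simp [Inn, rt, Spn])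
      rw [← hc] at this
      exact absurd this (lt_irrefl _)


lemma nbr_Inn_eq (i : Fin q) (t : Fin (q-1)) (ht : t.val = q-2) :
    (Gr q hq).neighborSet (Inn q i t) =
      {Lf q (i, ⟨q-2, by omega⟩), Lf q (i, ⟨q-1, by omega⟩), par q hq (Inn q i t)} := by
  ext u
  simp only [mem_neighborSet, Gr_adj, Set.mem_insert_iff, Set.mem_singleton_iff]
  constructor
  · rintro ⟨hne, h | h⟩
    · right; right; exact h.symm
    · rcases u with ⟨i', j⟩ | ⟨⟨i', s⟩⟩ | k
      · simp only [par, Lf, Inn, Sum.inr.injEq, Sum.inl.injEq, Prod.mk.injEq, Fin.ext_iff] at h ⊢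
        omega
      · exfalso
        by_cases h0 : s.val = 0
        · simp only [par, if_pos h0, Spn, Inn] at h
          exact absurd h (by simp)
        · simp only [par, if_neg h0, Inn, Sum.inr.injEq, Sum.inl.injEq, Prod.mk.injEq,
            Fin.ext_iff] at h
          omega
      · simp [par, Spn, Inn] at h
  · rintro (rfl | rfl | rfl)
    · refine ⟨by simp [Lf, Inn], Or.inr ?_⟩
      simp only [par, Lf]
      have hm : min (q-2) (q-2) = t.val := by omega
      simp only [Inn, Sum.inr.injEq, Sum.inl.injEq, Prod.mk.injEq, Fin.ext_iff]
      exact ⟨trivial, by omega⟩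
    · refine ⟨by simp [Lf, Inn], Or.inr ?_⟩
      simp only [par, Lf, Inn, Sum.inr.injEq, Sum.inl.injEq, Prod.mk.injEq, Fin.ext_iff]
      exact ⟨trivial, by omega⟩
    · refine ⟨fun hc => ?_, Or.inl rfl⟩
      have h2 := par_lt q hq (Inn q i t) (by simp [Inn, rt, Spn])
      rw [← hc] at h2
      exact lt_irrefl _ h2

lemma ncard_nbr_Inn (i : Fin q) (t : Fin (q-1)) :
    ((Gr q hq).neighborSet (Inn q i t)).ncard = 3 := by
  by_cases ht : t.val = q-2
  · rw [nbr_Inn_eq q hq i t ht]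
    have h0 : t.val ≠ 0 := by omega
    refine ncard3 (by simp [Lf, Fin.ext_iff]; omega) ?_ ?_
    · simp only [par, Inn, if_neg h0, Lf]
      simp
    · simp only [par, Inn, if_neg h0, Lf]
      simp
  · rw [nbr_Inn_lt q hq i t (by omega)]
    by_cases h0 : t.val = 0
    · refine ncard3 (by simp [Lf, Inn]) ?_ ?_
      · simp only [par, Inn, if_pos h0, Lf, Spn]
        simp
      · simp only [par, Inn, if_pos h0, Spn]
        simp
    · refine ncard3 (by simp [Lf, Inn]) ?_ ?_
      · simp only [par, Inn, if_neg h0, Lf]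
        simp
      · simp only [par, Inn, if_neg h0]
        simp [Inn, Fin.ext_iff]
        omega

lemma par_Inn0 (i : Fin q) (h : 0 < q - 1) :
    par q hq (Inn q i ⟨0, h⟩) = Spn q ⟨min (i.val - 1) (q-3), by omega⟩ := by
  simp [par, Inn]

lemma par_Inn0' (i : Fin q) (s : Fin (q-1)) (h0 : s.val = 0) :
    par q hq (Sum.inr (Sum.inl (i, s)) : Vx q) = Spn q ⟨min (i.val - 1) (q-3), by omega⟩ := by
  show par q hq (Inn q i s) = _
  simp [par, Inn, if_pos h0]

lemma nbr_Spn_q3 (hq3 : q = 3) (k : Fin (q-2)) :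
    (Gr q hq).neighborSet (Spn q k) =
      {Inn q ⟨0, by omega⟩ ⟨0, by omega⟩, Inn q ⟨1, by omega⟩ ⟨0, by omega⟩,
       Inn q ⟨2, by omega⟩ ⟨0, by omega⟩} := by
  have hk : k.val = 0 := by omega
  ext u
  simp only [mem_neighborSet, Gr_adj, Set.mem_insert_iff, Set.mem_singleton_iff]
  constructor
  · rintro ⟨hne, h | h⟩
    · exfalso
      apply hne
      simp only [par, Spn] at h ⊢
      rw [← h]
      simp only [Sum.inr.injEq, Fin.ext_iff]
      omega
    · rcases u with ⟨i', j⟩ | ⟨⟨i', s⟩⟩ | k'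
      · simp [par, Lf, Inn, Spn] at h
      · by_cases h0 : s.val = 0
        · have hi := i'.isLt
          simp only [Inn, Sum.inr.injEq, Sum.inl.injEq, Prod.mk.injEq, Fin.ext_iff]
          omega
        · simp only [par, if_neg h0, Inn, Spn] at h
          exact absurd h (by simp)
      · exfalso
        apply hne
        simp only [par, Spn, Sum.inr.injEq, Fin.ext_iff] at h ⊢
        omega
  · rintro (rfl | rfl | rfl) <;>
      refine ⟨by simp [Inn, Spn], Or.inr ?_⟩ <;>
      · rw [par_Inn0]
        simp only [Spn, Sum.inr.injEq, Fin.ext_iff]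
        omega

lemma nbr_Spn_zero (hq4 : 4 ≤ q) (k : Fin (q-2)) (hk : k.val = 0) :
    (Gr q hq).neighborSet (Spn q k) =
      {Inn q ⟨0, by omega⟩ ⟨0, by omega⟩, Inn q ⟨1, by omega⟩ ⟨0, by omega⟩,
       Spn q ⟨1, by omega⟩} := by
  ext u
  simp only [mem_neighborSet, Gr_adj, Set.mem_insert_iff, Set.mem_singleton_iff]
  constructor
  · rintro ⟨hne, h | h⟩
    · exfalso
      apply hne
      simp only [par, Spn] at h ⊢
      rw [← h]
      simp only [Sum.inr.injEq, Fin.ext_iff]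
      omega
    · rcases u with ⟨i', j⟩ | ⟨⟨i', s⟩⟩ | k'
      · simp [par, Lf, Inn, Spn] at h
      · by_cases h0 : s.val = 0
        · rw [par_Inn0' q hq i' s h0] at h
          simp only [Spn, Sum.inr.injEq, Fin.ext_iff] at h
          have hi := i'.isLt
          simp only [Inn, Sum.inr.injEq, Sum.inl.injEq, Prod.mk.injEq, Fin.ext_iff]
          omega
        · simp only [par, if_neg h0, Inn, Spn] at h
          exact absurd h (by simp)
      · right; right
        simp only [par, Spn, Sum.inr.injEq, Fin.ext_iff] at h ⊢
        have hne' : k'.val ≠ k.val := fun hc => hne (by simp [Spn, Fin.ext_iff]; omega)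
        omega
  · rintro (rfl | rfl | rfl)
    · refine ⟨by simp [Inn, Spn], Or.inr ?_⟩
      rw [par_Inn0]
      simp only [Spn, Sum.inr.injEq, Fin.ext_iff]
      omega
    · refine ⟨by simp [Inn, Spn], Or.inr ?_⟩
      rw [par_Inn0]
      simp only [Spn, Sum.inr.injEq, Fin.ext_iff]
      omega
    · refine ⟨by simp only [Spn, ne_eq, Sum.inr.injEq, Fin.ext_iff]; omega, Or.inr ?_⟩
      simp only [par, Spn, Sum.inr.injEq, Fin.ext_iff]
      omega

lemma nbr_Spn_mid (k : Fin (q-2)) (hk0 : 0 < k.val) (hk : k.val < q-3) :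
    (Gr q hq).neighborSet (Spn q k) =
      {Inn q ⟨k.val+1, by omega⟩ ⟨0, by omega⟩, Spn q ⟨k.val+1, by omega⟩,
       Spn q ⟨k.val-1, by omega⟩} := by
  ext u
  simp only [mem_neighborSet, Gr_adj, Set.mem_insert_iff, Set.mem_singleton_iff]
  constructor
  · rintro ⟨hne, h | h⟩
    · right; right
      rw [← h]
      simp only [par, Spn]
    · rcases u with ⟨i', j⟩ | ⟨⟨i', s⟩⟩ | k'
      · simp [par, Lf, Inn, Spn] at h
      · by_cases h0 : s.val = 0
        · rw [par_Inn0' q hq i' s h0] at h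
          simp only [Spn, Sum.inr.injEq, Fin.ext_iff] at h
          have hi := i'.isLt
          left
          simp only [Inn, Sum.inr.injEq, Sum.inl.injEq, Prod.mk.injEq, Fin.ext_iff]
          omega
        · simp only [par, if_neg h0, Inn, Spn] at h
          exact absurd h (by simp)
      · right; left
        simp only [par, Spn, Sum.inr.injEq, Fin.ext_iff] at h ⊢
        have hne' : k'.val ≠ k.val := fun hc => hne (by simp [Spn, Fin.ext_iff]; omega)
        omega
  · rintro (rfl | rfl | rfl)
    · refine ⟨by simp [Inn, Spn], Or.inr ?_⟩
      rw [par_Inn0]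
      simp only [Spn, Sum.inr.injEq, Fin.ext_iff]
      omega
    · refine ⟨by simp only [Spn, ne_eq, Sum.inr.injEq, Fin.ext_iff]; omega, Or.inr ?_⟩
      simp only [par, Spn, Sum.inr.injEq, Fin.ext_iff]
      omega
    · refine ⟨by simp only [Spn, ne_eq, Sum.inr.injEq, Fin.ext_iff]; omega, Or.inl ?_⟩
      simp only [par, Spn, Sum.inr.injEq, Fin.ext_iff]
      try omega

lemma nbr_Spn_last (k : Fin (q-2)) (hk0 : 0 < k.val) (hk : k.val = q-3) :
    (Gr q hq).neighborSet (Spn q k) =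
      {Inn q ⟨q-2, by omega⟩ ⟨0, by omega⟩, Inn q ⟨q-1, by omega⟩ ⟨0, by omega⟩,
       Spn q ⟨k.val-1, by omega⟩} := by
  ext u
  simp only [mem_neighborSet, Gr_adj, Set.mem_insert_iff, Set.mem_singleton_iff]
  constructor
  · rintro ⟨hne, h | h⟩
    · right; right
      rw [← h]
      simp only [par, Spn]
    · rcases u with ⟨i', j⟩ | ⟨⟨i', s⟩⟩ | k'
      · simp [par, Lf, Inn, Spn] at h
      · by_cases h0 : s.val = 0
        · rw [par_Inn0' q hq i' s h0] at h
          simp only [Spn, Sum.inr.injEq, Fin.ext_iff] at h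
          have hi := i'.isLt
          simp only [Inn, Sum.inr.injEq, Sum.inl.injEq, Prod.mk.injEq, Fin.ext_iff]
          omega
        · simp only [par, if_neg h0, Inn, Spn] at h
          exact absurd h (by simp)
      · exfalso
        simp only [par, Spn, Sum.inr.injEq, Fin.ext_iff] at h
        omega
  · rintro (rfl | rfl | rfl)
    · refine ⟨by simp [Inn, Spn], Or.inr ?_⟩
      rw [par_Inn0]
      simp only [Spn, Sum.inr.injEq, Fin.ext_iff]
      omega
    · refine ⟨by simp [Inn, Spn], Or.inr ?_⟩
      rw [par_Inn0]
      simp only [Spn, Sum.inr.injEq, Fin.ext_iff]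
      omega
    · refine ⟨by simp only [Spn, ne_eq, Sum.inr.injEq, Fin.ext_iff]; omega, Or.inl ?_⟩
      simp only [par, Spn, Sum.inr.injEq, Fin.ext_iff]
      try omega

lemma ncard_nbr_Spn (k : Fin (q-2)) : ((Gr q hq).neighborSet (Spn q k)).ncard = 3 := by
  rcases Nat.lt_or_ge q 4 with hq4 | hq4
  · rw [nbr_Spn_q3 q hq (by omega) k]
    exact ncard3 (by simp [Inn, Fin.ext_iff]) (by simp [Inn, Fin.ext_iff])
      (by simp [Inn, Fin.ext_iff])
  · by_cases hk : k.val = 0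
    · rw [nbr_Spn_zero q hq hq4 k hk]
      exact ncard3 (by simp [Inn, Fin.ext_iff]) (by simp [Inn, Spn, Fin.ext_iff])
        (by simp [Inn, Spn, Fin.ext_iff])
    · by_cases hk2 : k.val < q-3
      · rw [nbr_Spn_mid q hq k (by omega) hk2]
        exact ncard3 (by simp [Inn, Spn, Fin.ext_iff]) (by simp [Inn, Spn, Fin.ext_iff])
          (by simp [Spn, Fin.ext_iff]; omega)
      · rw [nbr_Spn_last q hq k (by omega) (by omega)]
        exact ncard3 (by simp [Inn, Fin.ext_iff]; omega) (by simp [Inn, Spn, Fin.ext_iff])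
          (by simp [Inn, Spn, Fin.ext_iff])

def PT : PhyloTree (Gd q) :=
  { V := Vx q, G := Gr q hq, connected := Gr_connected q hq, acyclic := Gr_acyclic q hq,
    leaf := ⟨Lf q, fun a b h => by simpa [Lf] using h⟩ }

lemma PT_isBinary : (PT q hq).IsBinary := by
  constructor
  · intro x
    show ((Gr q hq).neighborSet (Lf q x)).ncard = 1
    rw [nbr_Lf q hq x]
    exact Set.ncard_singleton _
  · intro v hv
    rcases v with p | ⟨⟨i, t⟩⟩ | k
    · exact absurd ⟨p, rfl⟩ hv
    · exact ncard_nbr_Inn q hq i t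
    · exact ncard_nbr_Spn q hq k

lemma mutSet_form {C : Type} {g : Vx q → C} {e : Sym2 (Vx q)} (he : e ∈ mutSet (Gr q hq) g) :
    ∃ w, w ≠ rt q hq ∧ e = s(w, par q hq w) ∧ g w ≠ g (par q hq w) := by
  obtain ⟨he1, u, v, rfl, hne⟩ := he
  obtain ⟨w, hw, hform⟩ := Gr_edge_form q hq he1
  refine ⟨w, hw, hform, ?_⟩
  rw [Sym2.eq_iff] at hform
  rcases hform with ⟨rfl, rfl⟩ | ⟨rfl, rfl⟩
  · exact hne
  · exact fun h => hne h.symm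

lemma score_le_offcount {C : Type} (f : Gd q → C) (c : C) :
    (PT q hq).score f ≤ ({p : Gd q | f p ≠ c}).ncard := by
  classical
  set g : Vx q → C := Sum.elim f (fun _ => c) with hgdef
  have hext : (PT q hq).IsExtension f g := fun x => rfl
  refine (score_le _ f g hext).trans ?_
  change (mutSet (Gr q hq) g).ncard ≤ _
  have hint : ∀ u : Vx q, (∀ p : Gd q, u ≠ Lf q p) → g u = c := by
    rintro (p | ⟨⟨i, t⟩⟩ | k) h
    · exact absurd rfl (h p)
    · rfl
    · rfl
  have hsub : mutSet (Gr q hq) g ⊆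
      (fun p : Gd q => s(Lf q p, par q hq (Lf q p))) '' {p | f p ≠ c} := by
    intro e he
    obtain ⟨w, hw, rfl, hne⟩ := mutSet_form q hq he
    have hpar : g (par q hq w) = c := hint _ (fun p => par_ne_Lf q hq w p)
    rcases w with p | ⟨⟨i, t⟩⟩ | k
    · refine ⟨p, ?_, rfl⟩
      intro hc
      exact hne (by rw [hpar]; exact hc)
    · exact absurd (hpar ▸ rfl) hne
    · exact absurd (hpar ▸ rfl) hne
  calc (mutSet (Gr q hq) g).ncard
      ≤ ((fun p : Gd q => s(Lf q p, par q hq (Lf q p))) '' {p | f p ≠ c}).ncard :=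
        Set.ncard_le_ncard hsub (Set.toFinite _)
    _ ≤ ({p : Gd q | f p ≠ c}).ncard := Set.ncard_image_le (Set.toFinite _)

/-- Which clade a vertex belongs to. -/
def cladeOf : Vx q → Option (Fin q) :=
  Sum.elim (fun p => some p.1) (Sum.elim (fun p => some p.1) (fun _ => none))

/-- The subgraph spanned by clade `a` (as a graph on all vertices). -/
def Gc (a : Fin q) : SimpleGraph (Vx q) :=
  SimpleGraph.fromRel (fun u v => par q hq u = v ∧ cladeOf q u = some a ∧ cladeOf q v = some a)

lemma Gc_adj {a : Fin q} {u v : Vx q} : (Gc q hq a).Adj u v ↔ u ≠ v ∧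
    ((par q hq u = v ∧ cladeOf q u = some a ∧ cladeOf q v = some a) ∨
     (par q hq v = u ∧ cladeOf q v = some a ∧ cladeOf q u = some a)) := by
  show (SimpleGraph.fromRel _).Adj u v ↔ _
  rw [SimpleGraph.fromRel_adj]

lemma Gc_le (a : Fin q) : ∀ {u v : Vx q}, (Gc q hq a).Adj u v → (Gr q hq).Adj u v := by
  intro u v h
  rw [Gc_adj] at h
  rw [Gr_adj]
  obtain ⟨hne, h | h⟩ := h
  · exact ⟨hne, Or.inl h.1⟩
  · exact ⟨hne, Or.inr h.1⟩

lemma Gc_clade {a : Fin q} {u v : Vx q} (h : (Gc q hq a).Adj u v) :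
    cladeOf q u = some a ∧ cladeOf q v = some a := by
  rw [Gc_adj] at h
  obtain ⟨hne, h | h⟩ := h
  · exact ⟨h.2.1, h.2.2⟩
  · exact ⟨h.2.2, h.2.1⟩

lemma mutSet_Gc_subset {C : Type} (g : Vx q → C) (a : Fin q) :
    mutSet (Gc q hq a) g ⊆ mutSet (Gr q hq) g := by
  rintro e ⟨he, u, v, rfl, hne⟩
  rw [SimpleGraph.mem_edgeSet] at he
  exact ⟨(Gr q hq).mem_edgeSet.2 (Gc_le q hq a he), u, v, rfl, hne⟩

lemma mutSet_Gc_disjoint {C : Type} (g : Vx q → C) {a b : Fin q} (hab : a ≠ b) :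
    Disjoint (mutSet (Gc q hq a) g) (mutSet (Gc q hq b) g) := by
  rw [Set.disjoint_left]
  rintro e ⟨hea, u, v, rfl, -⟩ ⟨heb, -⟩
  rw [SimpleGraph.mem_edgeSet] at hea heb
  have h1 := (Gc_clade q hq hea).1
  have h2 := (Gc_clade q hq heb).1
  rw [h1] at h2
  exact hab (Option.some_injective _ h2)

lemma clade_root_mem (a : Fin q) : cladeOf q (Inn q a ⟨0, by omega⟩) = some a := rfl

lemma reach_clade (a : Fin q) :
    ∀ v, cladeOf q v = some a → (Gc q hq a).Reachable v (Inn q a ⟨0, by omega⟩) := by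
  have := reach_aux (par q hq) (wt q) (Inn q a ⟨0, by omega⟩) (Gc q hq a)
    {v | cladeOf q v = some a} ?_
  · exact fun v hv => this v hv
  · rintro (⟨i, j⟩ | ⟨⟨i, t⟩⟩ | k) hw hne
    · have hi : i = a := by
        simpa [cladeOf] using hw
      subst hi
      refine ⟨by simp [par, cladeOf, Inn], ?_, by simp [par, wt, Inn]; omega⟩
      rw [Gc_adj]
      exact ⟨by simp [par, Lf, Inn], Or.inl ⟨rfl, hw, by simp [par, cladeOf, Inn]⟩⟩
    · have hi : i = a := by simpa [cladeOf] using hw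
      subst hi
      have ht : t.val ≠ 0 := by
        intro h0
        exact hne (by simp [Inn, Fin.ext_iff, h0])
      refine ⟨?_, ?_, ?_⟩
      · simp [par, if_neg ht, cladeOf, Inn]
      · rw [Gc_adj]
        refine ⟨?_, Or.inl ⟨rfl, hw, by simp [par, if_neg ht, cladeOf, Inn]⟩⟩
        simp [par, if_neg ht, Inn, Fin.ext_iff]
        omega
      · simp [par, if_neg ht, wt, Inn]
        omega
    · simp [cladeOf] at hw

/-- The canonical `q`-state character: the column index. -/
def colChar : Gd q → ℕ := fun p => p.2.val

/-- The row character (the column character of the transposed labelling). -/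
def rowChar : Gd q → ℕ := fun p => p.1.val

lemma range_colChar : Set.range (colChar q) = Set.range (fun j : Fin q => (j.val : ℕ)) := by
  ext n
  constructor
  · rintro ⟨⟨i, j⟩, rfl⟩; exact ⟨j, rfl⟩
  · rintro ⟨j, rfl⟩; exact ⟨(j, j), rfl⟩

lemma range_rowChar : Set.range (rowChar q) = Set.range (fun j : Fin q => (j.val : ℕ)) := by
  ext n
  constructor
  · rintro ⟨⟨i, j⟩, rfl⟩; exact ⟨i, rfl⟩
  · rintro ⟨j, rfl⟩; exact ⟨(j, j), rfl⟩

lemma ncard_range_val : (Set.range (fun j : Fin q => (j.val : ℕ))).ncard = q := by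
  rw [ncard_range_inj _ (fun a b h => Fin.ext h)]
  simp [Nat.card_eq_fintype_card]

/-- Global lower bound: any extension has at least (number of states - 1) mutations. -/
lemma states_le_mut {C : Type} (f : Gd q → C) (g : Vx q → C)
    (hext : (PT q hq).IsExtension f g) :
    (Set.range f).ncard ≤ (PT q hq).mutCount g + 1 := by
  have hL : ∀ x ∈ Set.range (Lf q), ∀ y ∈ Set.range (Lf q), (Gr q hq).Reachable x y :=
    fun x _ y _ => (Gr_connected q hq).preconnected x y
  have h := ncard_image_le_mutSet (Gr q hq) (Set.range (Lf q)) hL g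
  change _ ≤ (mutSet (Gr q hq) g).ncard + 1
  have himg : g '' Set.range (Lf q) = Set.range f := by
    rw [← Set.range_comp]
    exact congrArg _ (funext (fun x => hext x))
  rwa [himg] at h

/-- Per-clade lower bound for the column character. -/
lemma colChar_clade_lower (g : Vx q → ℕ) (hext : (PT q hq).IsExtension (colChar q) g)
    (a : Fin q) : q ≤ (mutSet (Gc q hq a) g).ncard + 1 := by
  set L : Set (Vx q) := {v | ∃ j : Fin q, v = Lf q (a, j)} with hL
  have hmem : ∀ v ∈ L, cladeOf q v = some a := by
    rintro v ⟨j, rfl⟩; rfl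
  have hreach : ∀ x ∈ L, ∀ y ∈ L, (Gc q hq a).Reachable x y := by
    intro x hx y hy
    exact (reach_clade q hq a x (hmem x hx)).trans (reach_clade q hq a y (hmem y hy)).symm
  have h := ncard_image_le_mutSet (Gc q hq a) L hreach g
  have himg : g '' L = Set.range (fun j : Fin q => (j.val : ℕ)) := by
    ext n
    constructor
    · rintro ⟨v, ⟨j, rfl⟩, rfl⟩
      exact ⟨j, (hext (a, j)).symm ▸ rfl⟩
    · rintro ⟨j, rfl⟩
      exact ⟨Lf q (a, j), ⟨j, rfl⟩, hext (a, j)⟩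
  rw [himg, ncard_range_val] at h
  exact h

lemma score_colChar : (PT q hq).score (colChar q) = q*q - q := by
  have hub : (PT q hq).score (colChar q) ≤ q*q - q := by
    refine (score_le_offcount q hq (colChar q) 0).trans ?_
    have hset : {p : Gd q | colChar q p ≠ 0} = Set.univ \ ((fun i : Fin q => (i, (⟨0, by omega⟩ : Fin q))) '' Set.univ) := by
      ext ⟨i, j⟩
      constructor
      · intro (h : (⟨i,j⟩ : Gd q).2.val ≠ 0)
        refine ⟨trivial, fun hc => ?_⟩
        obtain ⟨i', -, heq⟩ := hc
        rw [Prod.mk.injEq] at heq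
        apply h
        rw [← heq.2]
      · rintro ⟨-, h⟩ (hj : (⟨i,j⟩ : Gd q).2.val = 0)
        exact h ⟨i, trivial, by rw [Prod.mk.injEq]; exact ⟨rfl, Fin.ext hj.symm⟩⟩
    rw [hset]
    rw [Set.ncard_diff (Set.subset_univ _)]
    · rw [Set.ncard_univ, Set.ncard_image_of_injective _ (fun a b h => (Prod.ext_iff.1 h).1)]
      rw [Set.ncard_univ]
      simp [Nat.card_eq_fintype_card]
  have hlb : q*q - q ≤ (PT q hq).score (colChar q) := by
    refine le_score _ _ _ (exists_extension _ _) ?_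
    intro g hext
    have hs : ∀ a : Fin q, q - 1 ≤ (mutSet (Gc q hq a) g).ncard := by
      intro a
      have := colChar_clade_lower q hq g hext a
      omega
    have hsum : ∑ a : Fin q, (mutSet (Gc q hq a) g).ncard ≤ (mutSet (Gr q hq) g).ncard := by
      refine sum_ncard_le _ _ (mutSet_finite _ _) (mutSet_Gc_subset q hq g) ?_
      intro a b hab
      exact mutSet_Gc_disjoint q hq g hab
    have h1 : q * (q-1) ≤ ∑ a : Fin q, (mutSet (Gc q hq a) g).ncard := by
      calc q * (q-1) = ∑ _a : Fin q, (q-1) := by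
            rw [Finset.sum_const, Finset.card_univ, Fintype.card_fin, smul_eq_mul]
        _ ≤ _ := Finset.sum_le_sum (fun a _ => hs a)
    rw [mutCount_eq]
    show q*q - q ≤ (mutSet (Gr q hq) g).ncard
    have hq2 : q * (q-1) = q*q - q := by
      obtain ⟨m, rfl⟩ := Nat.exists_eq_add_of_le hq
      have h3 : (3+m)*(3+m) = (3+m)*(3+m-1) + (3+m) := by
        have : 3+m-1 = 2+m := by omega
        rw [this]; ring
      omega
    omega
  omega

lemma score_rowChar : (PT q hq).score (rowChar q) = q - 1 := by
  have hlb : q - 1 ≤ (PT q hq).score (rowChar q) := by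
    refine le_score _ _ _ (exists_extension _ _) ?_
    intro g hext
    have := states_le_mut q hq (rowChar q) g hext
    rw [range_rowChar q, ncard_range_val q] at this
    omega
  have hub : (PT q hq).score (rowChar q) ≤ q - 1 := by
    classical
    set g : Vx q → ℕ :=
      Sum.elim (fun p => p.1.val) (Sum.elim (fun p => p.1.val) (fun k => k.val + 1)) with hgdef
    have hext : (PT q hq).IsExtension (rowChar q) g := fun x => rfl
    refine (score_le _ _ g hext).trans ?_
    change (mutSet (Gr q hq) g).ncard ≤ _
    set B : Set (Sym2 (Vx q)) :=
      ((fun k : Fin (q-2) => s(Spn q k, par q hq (Spn q k))) '' {k | k.val ≠ 0}) ∪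
      {s(Inn q ⟨0, by omega⟩ ⟨0, by omega⟩, par q hq (Inn q ⟨0, by omega⟩ ⟨0, by omega⟩)),
       s(Inn q ⟨q-1, by omega⟩ ⟨0, by omega⟩, par q hq (Inn q ⟨q-1, by omega⟩ ⟨0, by omega⟩))}
      with hB
    have hsub : mutSet (Gr q hq) g ⊆ B := by
      intro e he
      obtain ⟨w, hw, rfl, hne⟩ := mutSet_form q hq he
      rcases w with ⟨i, j⟩ | ⟨⟨i, t⟩⟩ | k
      · exfalso
        exact hne rfl
      · by_cases h0 : t.val = 0
        · have ht : t = ⟨0, by omega⟩ := Fin.ext h0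
          rw [par_Inn0' q hq i t h0] at hne ⊢
          have hgv : g (Sum.inr (Sum.inl (i, t))) = i.val := rfl
          have hgs : g (Spn q ⟨min (i.val - 1) (q-3), by omega⟩) = min (i.val - 1) (q-3) + 1 := rfl
          have hival : i.val = 0 ∨ i.val = q - 1 := by
            by_contra hcon
            push_neg at hcon
            apply hne
            rw [hgv, hgs]
            have := i.isLt
            omega
          right
          rcases hival with h | h
          · left
            rw [par_Inn0, Sym2.eq_iff]
            left
            constructor
            · simp only [Inn, Sum.inr.injEq, Sum.inl.injEq, Prod.mk.injEq, Fin.ext_iff]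
              omega
            · simp only [Spn, Sum.inr.injEq, Fin.ext_iff]
              omega
          · right
            rw [Set.mem_singleton_iff, par_Inn0, Sym2.eq_iff]
            left
            constructor
            · simp only [Inn, Sum.inr.injEq, Sum.inl.injEq, Prod.mk.injEq, Fin.ext_iff]
              omega
            · simp only [Spn, Sum.inr.injEq, Fin.ext_iff]
              omega
        · exfalso
          apply hne
          simp only [par, if_neg h0]
          rfl
      · left
        refine ⟨k, ?_, rfl⟩
        intro hc
        exact hw (by simp [rt, Spn, Fin.ext_iff, hc])
    refine (Set.ncard_le_ncard hsub (Set.toFinite _)).trans ?_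
    rw [hB]
    refine (Set.ncard_union_le _ _).trans ?_
    have h1 : ((fun k : Fin (q-2) => s(Spn q k, par q hq (Spn q k))) '' {k | k.val ≠ 0}).ncard
        ≤ q - 3 := by
      refine (Set.ncard_image_le (Set.toFinite _)).trans ?_
      have : {k : Fin (q-2) | k.val ≠ 0} = Set.univ \ {(⟨0, by omega⟩ : Fin (q-2))} := by
        ext k
        simp [Fin.ext_iff]
      rw [this, Set.ncard_diff (by simp) (Set.toFinite _), Set.ncard_univ, Set.ncard_singleton]
      have hc : Nat.card (Fin (q-2)) = q - 2 := by simp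
      omega
    have h2 : ({s(Inn q ⟨0, by omega⟩ ⟨0, by omega⟩, par q hq (Inn q ⟨0, by omega⟩ ⟨0, by omega⟩)),
       s(Inn q ⟨q-1, by omega⟩ ⟨0, by omega⟩, par q hq (Inn q ⟨q-1, by omega⟩ ⟨0, by omega⟩))}
        : Set (Sym2 (Vx q))).ncard ≤ 2 := by
      refine (Set.ncard_insert_le _ _).trans ?_
      rw [Set.ncard_singleton]
    omega
  omega

/-- The set of columns in which state `c` occurs. -/
noncomputable def cols {C : Type} (f : Gd q → C) (c : C) : Finset (Fin q) :=
  @Finset.filter _ (fun j => ∃ i : Fin q, f (i, j) = c) (Classical.decPred _) Finset.univ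

/-- The set of grid cells with state `c`. -/
noncomputable def fib {C : Type} (f : Gd q → C) (c : C) : Finset (Gd q) :=
  @Finset.filter _ (fun p => f p = c) (Classical.decPred _) Finset.univ

lemma mem_cols {C : Type} {f : Gd q → C} {c : C} {j : Fin q} :
    j ∈ cols q f c ↔ ∃ i : Fin q, f (i, j) = c := by
  simp [cols]

lemma mem_fib {C : Type} {f : Gd q → C} {c : C} {p : Gd q} : p ∈ fib q f c ↔ f p = c := by
  simp [fib]

lemma fib_ncard {C : Type} {f : Gd q → C} {c : C} :
    ({p : Gd q | f p = c}).ncard = (fib q f c).card := by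
  rw [← Set.ncard_coe_finset]
  congr 1
  ext p
  simp [mem_fib]

lemma fib_eq_filter {C : Type} [DecidableEq C] (f : Gd q → C) (c : C) :
    fib q f c = Finset.univ.filter (fun p => f p = c) :=
  Finset.filter_congr_decidable _ _ _

lemma card_image_univ_f {C : Type} [DecidableEq C] (f : Gd q → C)
    (hr : (Set.range f).ncard = q - 1) :
    (Finset.univ.image f).card = q - 1 := by
  rw [← hr, ← Set.ncard_coe_finset]
  congr 1
  rw [Finset.coe_image, Finset.coe_univ, Set.image_univ]

include hq in
lemma exists_big_fiber {C : Type} (f : Gd q → C) (hr : (Set.range f).ncard = q - 1) :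
    ∃ c, q + 2 ≤ ({p : Gd q | f p = c}).ncard := by
  classical
  have hcard : (Finset.univ.image f).card = q - 1 := card_image_univ_f q f hr
  have huniv : (Finset.univ : Finset (Gd q)).card = q * q := by
    rw [Finset.card_univ]; simp
  have hmul : (Finset.univ.image f).card * (q + 1) < (Finset.univ : Finset (Gd q)).card := by
    rw [hcard, huniv]
    obtain ⟨m, rfl⟩ := Nat.exists_eq_add_of_le hq
    have h4 : 3+m-1 = 2+m := by omega
    have h3 : (3+m)*(3+m) = (3+m-1)*((3+m)+1)+1 := by rw [h4]; ring
    omega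
  obtain ⟨c, -, hc⟩ := Finset.exists_lt_card_fiber_of_mul_lt_card_of_maps_to
    (fun p _ => Finset.mem_image_of_mem f (Finset.mem_univ p)) hmul
  refine ⟨c, ?_⟩
  rw [fib_ncard, fib_eq_filter]
  omega

include hq in
lemma crux {C : Type} (f : Gd q → C) (hr : (Set.range f).ncard = q - 1)
    (hconv : ∀ c d : C, 2 ≤ (cols q f c).card → 2 ≤ (cols q f d).card →
      ((cols q f c) ∩ (cols q f d)).Nonempty → c = d) :
    ∃ c, q + 3 ≤ ({p : Gd q | f p = c}).ncard := by
  classical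
  set S : Finset C := Finset.univ.image f with hSdef
  have hS : S.card = q - 1 := card_image_univ_f q f hr
  have hsum : ∑ c ∈ S, (fib q f c).card = q * q := by
    have h := Finset.card_eq_sum_card_fiberwise
      (f := f) (s := Finset.univ) (t := S)
      (fun p _ => Finset.mem_image_of_mem f (Finset.mem_univ p))
    calc ∑ c ∈ S, (fib q f c).card
        = ∑ c ∈ S, (Finset.univ.filter (fun p => f p = c)).card :=
          Finset.sum_congr rfl (fun c _ => by rw [fib_eq_filter])
      _ = (Finset.univ : Finset (Gd q)).card := h.symm
      _ = q * q := by rw [Finset.card_univ]; simp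
  set P : Finset C := S.filter (fun c => 2 ≤ (cols q f c).card) with hPdef
  set R : Finset C := S.filter (fun c => ¬ 2 ≤ (cols q f c).card) with hRdef
  have hPR : P.card + R.card = q - 1 := by
    rw [hPdef, hRdef, Finset.card_filter_add_card_filter_not]
    exact hS
  have hp1 : 1 ≤ P.card := by
    obtain ⟨j, -, j', -, hjj', heq⟩ := Finset.exists_ne_map_eq_of_card_lt_of_maps_to
      (s := (Finset.univ : Finset (Fin q))) (t := S) (f := fun j => f (j, j))
      (by rw [Finset.card_univ, hS]; simp; omega)
      (fun j _ => Finset.mem_image_of_mem f (Finset.mem_univ (j, j)))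
    have hcmem : f (j, j) ∈ P := by
      rw [hPdef, Finset.mem_filter]
      refine ⟨Finset.mem_image_of_mem f (Finset.mem_univ _), ?_⟩
      have hsub : ({j, j'} : Finset (Fin q)) ⊆ cols q f (f (j, j)) := by
        intro x hx
        rw [Finset.mem_insert, Finset.mem_singleton] at hx
        rcases hx with rfl | rfl
        · exact (mem_cols q).2 ⟨x, rfl⟩
        · exact (mem_cols q).2 ⟨x, heq.symm⟩
      calc 2 = ({j, j'} : Finset (Fin q)).card := (Finset.card_pair hjj').symm
        _ ≤ _ := Finset.card_le_card hsub
    exact Finset.card_pos.2 ⟨_, hcmem⟩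
  have hRfib : ∀ c ∈ R, (fib q f c).card ≤ q := by
    intro c hc
    rw [hRdef, Finset.mem_filter] at hc
    obtain ⟨hcS, hc2⟩ := hc
    obtain ⟨p0, -, hp0⟩ := Finset.mem_image.1 hcS
    have hcol : ∀ p ∈ fib q f c, p.2 = p0.2 := by
      intro p hp
      by_contra hne
      apply hc2
      have hsub : ({p.2, p0.2} : Finset (Fin q)) ⊆ cols q f c := by
        intro x hx
        rw [Finset.mem_insert, Finset.mem_singleton] at hx
        rcases hx with rfl | rfl
        · exact (mem_cols q).2 ⟨p.1, (mem_fib q).1 hp⟩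
        · exact (mem_cols q).2 ⟨p0.1, hp0⟩
      calc 2 = ({p.2, p0.2} : Finset (Fin q)).card := (Finset.card_pair hne).symm
        _ ≤ _ := Finset.card_le_card hsub
    calc (fib q f c).card ≤ (Finset.univ : Finset (Fin q)).card := by
          apply Finset.card_le_card_of_injOn (fun p => p.1) (fun _ _ => Finset.mem_univ _)
          intro p hp p' hp' hfst
          have h1 := hcol p hp
          have h2 := hcol p' hp'
          exact Prod.ext hfst (h1.trans h2.symm)
      _ = q := by simp
  have hdisj : ∀ c ∈ P, ∀ d ∈ P, c ≠ d → Disjoint (cols q f c) (cols q f d) := by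
    intro c hc d hd hcd
    rw [hPdef, Finset.mem_filter] at hc hd
    rw [Finset.disjoint_left]
    intro j hjc hjd
    exact hcd (hconv c d hc.2 hd.2 ⟨j, Finset.mem_inter.2 ⟨hjc, hjd⟩⟩)
  have hsumcols : ∑ c ∈ P, (cols q f c).card ≤ q := by
    rw [← Finset.card_biUnion hdisj]
    calc _ ≤ (Finset.univ : Finset (Fin q)).card := Finset.card_le_card (Finset.subset_univ _)
      _ = q := by simp
  have h2p : 2 * P.card ≤ q := by
    calc 2 * P.card = ∑ _c ∈ P, 2 := by rw [Finset.sum_const, smul_eq_mul, mul_comm]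
      _ ≤ ∑ c ∈ P, (cols q f c).card :=
          Finset.sum_le_sum (fun c hc => (Finset.mem_filter.1 hc).2)
      _ ≤ q := hsumcols
  by_contra hcon
  push_neg at hcon
  have hfib_le : ∀ c, (fib q f c).card ≤ q + 2 := by
    intro c
    have h := hcon c
    rw [fib_ncard] at h
    omega
  have hsplit : ∑ c ∈ P, (fib q f c).card + ∑ c ∈ R, (fib q f c).card = q * q := by
    rw [← hsum, hPdef, hRdef]
    exact Finset.sum_filter_add_sum_filter_not S _ _
  have hPsum : ∑ c ∈ P, (fib q f c).card ≤ P.card * (q + 2) := by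
    calc ∑ c ∈ P, (fib q f c).card ≤ ∑ _c ∈ P, (q+2) :=
        Finset.sum_le_sum (fun c _ => hfib_le c)
      _ = P.card * (q + 2) := by rw [Finset.sum_const, smul_eq_mul]
  have hRsum : ∑ c ∈ R, (fib q f c).card ≤ R.card * q := by
    calc ∑ c ∈ R, (fib q f c).card ≤ ∑ c ∈ R, q :=
        Finset.sum_le_sum (fun c hc => hRfib c hc)
      _ = R.card * q := by rw [Finset.sum_const, smul_eq_mul]
  have e1 : P.card * (q+2) + R.card * q = q*(P.card + R.card) + 2*P.card := by ring
  rw [hPR] at e1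
  have e2 : q*(q-1) + q = q*q := by
    obtain ⟨m, rfl⟩ := Nat.exists_eq_add_of_le hq
    have h4 : 3+m-1 = 2+m := by omega
    rw [h4]; ring
  have hq2p : q = 2 * P.card ∧ ∑ c ∈ R, (fib q f c).card = R.card * q := by omega
  rcases Nat.eq_zero_or_pos R.card with hR0 | hRpos
  · omega
  · obtain ⟨c0, hc0⟩ := Finset.card_pos.1 hRpos
    have hsum_erase : (fib q f c0).card + ∑ c ∈ R.erase c0, (fib q f c).card
        = ∑ c ∈ R, (fib q f c).card :=
      Finset.add_sum_erase R (fun c => (fib q f c).card) hc0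
    have herase_le : ∑ c ∈ R.erase c0, (fib q f c).card ≤ (R.card - 1) * q := by
      calc ∑ c ∈ R.erase c0, (fib q f c).card ≤ ∑ c ∈ R.erase c0, q :=
          Finset.sum_le_sum (fun c hc => hRfib c (Finset.mem_of_mem_erase hc))
        _ = (R.erase c0).card * q := by rw [Finset.sum_const, smul_eq_mul]
        _ = (R.card - 1) * q := by rw [Finset.card_erase_of_mem hc0]
    have hrq : (R.card - 1) * q + q = R.card * q := by
      have h5 : R.card - 1 + 1 = R.card := by omega
      calc (R.card - 1) * q + q = ((R.card - 1) + 1) * q := by ring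
        _ = R.card * q := by rw [h5]
    have hfc0 : (fib q f c0).card = q := by
      have := hRfib c0 hc0
      omega
    -- c0 fills its column
    have hc0R := hc0
    rw [hRdef, Finset.mem_filter] at hc0R
    obtain ⟨hc0S, hc0lt⟩ := hc0R
    obtain ⟨p0, -, hp0⟩ := Finset.mem_image.1 hc0S
    set j0 : Fin q := p0.2 with hj0def
    have hcol : ∀ p ∈ fib q f c0, p.2 = j0 := by
      intro p hp
      by_contra hne
      apply hc0lt
      have hsub : ({p.2, j0} : Finset (Fin q)) ⊆ cols q f c0 := by
        intro x hx
        rw [Finset.mem_insert, Finset.mem_singleton] at hx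
        rcases hx with rfl | rfl
        · exact (mem_cols q).2 ⟨p.1, (mem_fib q).1 hp⟩
        · exact (mem_cols q).2 ⟨p0.1, hp0⟩
      calc 2 = ({p.2, j0} : Finset (Fin q)).card := (Finset.card_pair hne).symm
        _ ≤ _ := Finset.card_le_card hsub
    set col : Finset (Gd q) := Finset.univ.filter (fun p => p.2 = j0) with hcoldef
    have hcolcard : col.card = q := by
      have : col = Finset.univ.map
          ⟨fun i : Fin q => ((i, j0) : Gd q), fun a b h => (Prod.ext_iff.1 h).1⟩ := by
        ext p
        simp only [hcoldef, Finset.mem_filter, Finset.mem_univ, true_and, Finset.mem_map,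
          Function.Embedding.coeFn_mk]
        constructor
        · intro h
          exact ⟨p.1, by show ((p.1, j0) : Gd q) = p; exact Prod.ext rfl h.symm⟩
        · rintro ⟨i, rfl⟩
          rfl
      rw [this, Finset.card_map, Finset.card_univ]
      simp
    have hfibcol : fib q f c0 = col := by
      apply Finset.eq_of_subset_of_card_le
      · intro p hp
        rw [hcoldef, Finset.mem_filter]
        exact ⟨Finset.mem_univ _, hcol p hp⟩
      · rw [hcolcard, hfc0]
    -- every column is covered by a cross state
    have hcover : P.biUnion (cols q f) = Finset.univ := by
      apply Finset.eq_of_subset_of_card_le (Finset.subset_univ _)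
      rw [Finset.card_biUnion hdisj, Finset.card_univ]
      have h6 : 2 * P.card ≤ ∑ c ∈ P, (cols q f c).card := by
        calc 2 * P.card = ∑ _c ∈ P, 2 := by rw [Finset.sum_const, smul_eq_mul, mul_comm]
          _ ≤ _ := Finset.sum_le_sum (fun c hc => (Finset.mem_filter.1 hc).2)
      simp only [Fintype.card_prod, Fintype.card_fin]
      omega
  -- contradiction
    have hj0cov : j0 ∈ P.biUnion (cols q f) := by rw [hcover]; exact Finset.mem_univ _
    obtain ⟨d, hdP, hjd⟩ := Finset.mem_biUnion.1 hj0cov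
    obtain ⟨i, hid⟩ := (mem_cols q).1 hjd
    have hmem : ((i, j0) : Gd q) ∈ fib q f c0 := by
      rw [hfibcol, hcoldef, Finset.mem_filter]
      exact ⟨Finset.mem_univ _, rfl⟩
    have : d = c0 := by rw [← hid, (mem_fib q).1 hmem]
    subst this
    rw [hPdef, Finset.mem_filter] at hdP
    exact hc0lt hdP.2

lemma cross_edge {a : Fin q} {u v : Vx q} (hu : cladeOf q u = some a)
    (hv : cladeOf q v ≠ some a) (hadj : par q hq u = v ∨ par q hq v = u) :
    u = Inn q a ⟨0, by omega⟩ := by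
  rcases u with ⟨i, j⟩ | ⟨⟨i, t⟩⟩ | k
  · exfalso
    have hi : i = a := by simpa [cladeOf] using hu
    subst hi
    rcases hadj with hc | hc
    · apply hv
      rw [← hc]
      simp [par, cladeOf, Inn]
    · rcases v with ⟨i', j'⟩ | ⟨⟨i', t'⟩⟩ | k'
      · simp [par, Lf, Inn] at hc
      · by_cases h0 : t'.val = 0
        · rw [par_Inn0' q hq i' t' h0] at hc
          simp [Spn, Lf] at hc
        · simp [par, if_neg h0, Inn, Lf] at hc
      · simp [par, Spn, Lf] at hc
  · have hi : i = a := by simpa [cladeOf] using hu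
    subst hi
    by_cases h0 : t.val = 0
    · simp only [Inn, Sum.inr.injEq, Sum.inl.injEq, Prod.mk.injEq]
      exact ⟨trivial, Fin.ext h0⟩
    · exfalso
      rcases hadj with hc | hc
      · apply hv
        rw [← hc]
        simp [par, if_neg h0, cladeOf, Inn]
      · rcases v with ⟨i', j'⟩ | ⟨⟨i', t'⟩⟩ | k'
        · apply hv
          simp only [par, Lf, Inn, Sum.inr.injEq, Sum.inl.injEq, Prod.mk.injEq] at hc
          simp [cladeOf, hc.1]
        · by_cases h0' : t'.val = 0
          · rw [par_Inn0' q hq i' t' h0'] at hc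
            simp [Spn, Inn] at hc
          · apply hv
            simp only [par, if_neg h0', Inn, Sum.inr.injEq, Sum.inl.injEq,
              Prod.mk.injEq] at hc
            simp [cladeOf, hc.1]
        · simp [par, Spn, Inn] at hc
  · exact absurd hu (by simp [cladeOf])

include hq in
lemma same_state_reach {C : Type} (k : Gd q → C) (g : Vx q → C)
    (hext : (PT q hq).IsExtension k g)
    (hm : (mutSet (Gr q hq) g).ncard + 1 ≤ (Set.range k).ncard) :
    ∀ x y : Gd q, k x = k y → (monoSub (Gr q hq) g).Reachable (Lf q x) (Lf q y) := by
  intro x y hxy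
  by_contra hcon
  classical
  set comp : Set (Vx q) := {v | (monoSub (Gr q hq) g).Reachable (Lf q x) v} with hcomp
  set h' : Vx q → Option C := fun v => if v ∈ comp then none else some (g v) with hh'
  have hgl : ∀ z : Gd q, g (Lf q z) = k z := fun z => hext z
  have hcompcol : ∀ v ∈ comp, g v = k x := by
    intro v hv
    rw [← hgl x]
    exact monoSub_reachable_color hv
  have hsub : mutSet (Gr q hq) h' ⊆ mutSet (Gr q hq) g := by
    rintro e ⟨he, u, v, rfl, hne⟩
    refine ⟨he, u, v, rfl, fun hg => hne ?_⟩
    have hadj : (monoSub (Gr q hq) g).Adj u v := show (Gr q hq).Adj u v ∧ g u = g v from ⟨(Gr q hq).mem_edgeSet.1 he, hg⟩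
    have hiff : u ∈ comp ↔ v ∈ comp :=
      ⟨fun h => h.trans hadj.reachable, fun h => h.trans hadj.symm.reachable⟩
    by_cases hu : u ∈ comp
    · simp [hh', hu, hiff.1 hu]
    · have hv : v ∉ comp := fun h => hu (hiff.2 h)
      simp [hh', hu, hv, hg]
  have hL : ∀ a ∈ Set.range (Lf q), ∀ b ∈ Set.range (Lf q), (Gr q hq).Reachable a b :=
    fun a _ b _ => (Gr_connected q hq).preconnected a b
  have hcore := ncard_image_le_mutSet (Gr q hq) (Set.range (Lf q)) hL h'
  have hbig : (Set.range k).ncard + 1 ≤ (h' '' Set.range (Lf q)).ncard := by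
    have hAsub : insert none (Option.some '' Set.range k) ⊆ h' '' Set.range (Lf q) := by
      rintro o (rfl | ⟨c, ⟨z, rfl⟩, rfl⟩)
      · refine ⟨Lf q x, ⟨x, rfl⟩, ?_⟩
        have hx : Lf q x ∈ comp := Reachable.refl _
        simp [hh', hx]
      · by_cases hcx : k z = k x
        · refine ⟨Lf q y, ⟨y, rfl⟩, ?_⟩
          have hy : Lf q y ∉ comp := hcon
          simp only [hh', if_neg hy, hgl]
          rw [hcx, hxy]
        · refine ⟨Lf q z, ⟨z, rfl⟩, ?_⟩
          have hz : Lf q z ∉ comp := by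
            intro hmem
            exact hcx ((hgl z).symm.trans (hcompcol _ hmem))
          simp only [hh', if_neg hz]
          rw [hgl]
    calc (Set.range k).ncard + 1
        = (Option.some '' Set.range k).ncard + 1 := by
          rw [Set.ncard_image_of_injective _ (Option.some_injective C)]
      _ = (insert none (Option.some '' Set.range k)).ncard := by
          rw [Set.ncard_insert_of_notMem (by simp) (Set.toFinite _)]
      _ ≤ _ := Set.ncard_le_ncard hAsub (Set.toFinite _)
  have hmono : (mutSet (Gr q hq) h').ncard ≤ (mutSet (Gr q hq) g).ncard :=
    Set.ncard_le_ncard hsub (mutSet_finite _ _)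
  omega

include hq in
lemma cross_unique {C : Type} (k : Gd q → C) (g : Vx q → C)
    (hext : (PT q hq).IsExtension k g)
    (hm : (mutSet (Gr q hq) g).ncard + 1 ≤ (Set.range k).ncard)
    (c : C) (a : Fin q) (h1 : ∃ j, k (a, j) = c)
    (h2 : ∃ a' j', a' ≠ a ∧ k (a', j') = c) :
    g (Inn q a ⟨0, by omega⟩) = c := by
  obtain ⟨j, hj⟩ := h1
  obtain ⟨a', j', ha', hj'⟩ := h2
  have hreach := same_state_reach q hq k g hext hm (a, j) (a', j') (by rw [hj, hj'])
  obtain ⟨w⟩ := hreach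
  have hxS : Lf q (a, j) ∈ {v | cladeOf q v = some a} := rfl
  have hyS : Lf q (a', j') ∉ {v | cladeOf q v = some a} := by
    simp only [Set.mem_setOf_eq, Lf, cladeOf, Sum.elim_inl, Option.some.injEq]
    exact ha'
  obtain ⟨d, hd, hdfst, hdsnd⟩ := w.exists_boundary_dart _ hxS hyS
  have hadj := d.adj
  have hgr : (Gr q hq).Adj d.toProd.1 d.toProd.2 :=
    (show (Gr q hq).Adj d.toProd.1 d.toProd.2 ∧ g d.toProd.1 = g d.toProd.2 from hadj).1
  rw [Gr_adj] at hgr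
  have hfst : d.toProd.1 = Inn q a ⟨0, by omega⟩ :=
    cross_edge q hq hdfst hdsnd hgr.2
  have hcol : g d.toProd.1 = g (Lf q (a, j)) :=
    monoSub_support_color w _ (w.dart_fst_mem_support_of_mem_darts hd)
  have hgl : ∀ z : Gd q, g (Lf q z) = k z := fun z => hext z
  rw [← hfst, hcol, hgl, hj]

lemma ncard_ne_eq {C : Type} (h : Gd q → C) (c : C) :
    ({p : Gd q | h p ≠ c}).ncard = q*q - ({p : Gd q | h p = c}).ncard := by
  have hsetc : {p : Gd q | h p ≠ c} = Set.univ \ {p | h p = c} := by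
    ext p; simp
  rw [hsetc, Set.ncard_diff (Set.subset_univ _) (Set.toFinite _), Set.ncard_univ]
  congr 1
  rw [Nat.card_eq_fintype_card]
  simp

lemma ncard_eq_le {C : Type} (h : Gd q → C) (c : C) :
    ({p : Gd q | h p = c}).ncard ≤ q*q := by
  have h1 := Set.ncard_le_ncard (Set.subset_univ {p : Gd q | h p = c}) (Set.toFinite _)
  rw [Set.ncard_univ, Nat.card_eq_fintype_card] at h1
  simpa using h1

include hq in
lemma main_ineq {C : Type} (h : Gd q → C) (hr : (Set.range h).ncard = q - 1) :
    (PT q hq).score h ≤ (PT q hq).score (fun p => h (p.2, p.1)) + ((q-1)*(q-1) - 2) := by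
  classical
  have hCne : Nonempty C := by
    have hpos : 0 < (Set.range h).ncard := by omega
    obtain ⟨c, -⟩ := (Set.ncard_pos (Set.toFinite _)).1 hpos
    exact ⟨c⟩
  set k : Gd q → C := fun p => h (p.2, p.1) with hk
  have hrangek : Set.range k = Set.range h := by
    ext c
    constructor
    · rintro ⟨p, rfl⟩; exact ⟨(p.2, p.1), rfl⟩
    · rintro ⟨p, rfl⟩; exact ⟨(p.2, p.1), rfl⟩
  have hrk : (Set.range k).ncard = q - 1 := by rw [hrangek, hr]
  obtain ⟨m, hqm⟩ := Nat.exists_eq_add_of_le hq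
  have r1 : (3+m)*(3+m) = m*m + 6*m + 9 := by ring
  have r2 : (3+m-1)*(3+m-1) = m*m + 4*m + 4 := by
    rw [show 3+m-1 = 2+m from by omega]; ring
  rcases Nat.lt_or_ge ((PT q hq).score k) (q-1) with hcase | hcase
  · -- the transposed character is convex; use the crux lemma
    obtain ⟨g, hgext, hgcount⟩ := exists_score_ext (PT q hq) k
    have hmeq : (PT q hq).mutCount g = (mutSet (Gr q hq) g).ncard := rfl
    have hm : (mutSet (Gr q hq) g).ncard + 1 ≤ (Set.range k).ncard := by
      rw [← hmeq, hgcount]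
      omega
    have hconv : ∀ c d : C, 2 ≤ (cols q h c).card → 2 ≤ (cols q h d).card →
        ((cols q h c) ∩ (cols q h d)).Nonempty → c = d := by
      intro c d hc hd ⟨a, ha⟩
      rw [Finset.mem_inter] at ha
      have key : ∀ e : C, 2 ≤ (cols q h e).card → a ∈ cols q h e →
          g (Inn q a ⟨0, by omega⟩) = e := by
        intro e he hae
        obtain ⟨i, hie⟩ := (mem_cols q).1 hae
        have h1lt : 1 < (cols q h e).card := by omega
        obtain ⟨a', ha'mem, ha'ne⟩ := Finset.exists_mem_ne h1lt a
        obtain ⟨i', hie'⟩ := (mem_cols q).1 ha'mem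
        exact cross_unique q hq k g hgext hm e a ⟨i, hie⟩ ⟨a', i', ha'ne, hie'⟩
      rw [← key c hc ha.1, ← key d hd ha.2]
    obtain ⟨c, hcbig⟩ := crux q hq h hr hconv
    have hub := score_le_offcount q hq h c
    rw [ncard_ne_eq] at hub
    have hle := ncard_eq_le q h c
    -- lower bound on score k
    have hlbk : q - 1 ≤ (PT q hq).score k + 1 := by
      have := states_le_mut q hq k g hgext
      rw [hrk, hgcount] at this
      exact this
    have harr : q*q - (q+3) ≤ (q-2) + ((q-1)*(q-1) - 2) := by
      subst hqm
      omega
    have : (PT q hq).score h ≤ q*q - (q+3) := by omega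
    have hk2 : q - 2 ≤ (PT q hq).score k := by omega
    calc (PT q hq).score h ≤ q*q - (q+3) := this
      _ ≤ (q-2) + ((q-1)*(q-1) - 2) := harr
      _ ≤ (PT q hq).score k + ((q-1)*(q-1) - 2) := by omega
  · -- generic case
    obtain ⟨c, hcbig⟩ := exists_big_fiber q hq h hr
    have hub := score_le_offcount q hq h c
    rw [ncard_ne_eq] at hub
    have hle := ncard_eq_le q h c
    have harr : q*q - (q+2) ≤ (q-1) + ((q-1)*(q-1) - 2) := by
      subst hqm
      omega
    calc (PT q hq).score h ≤ q*q - (q+2) := by omega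
      _ ≤ (q-1) + ((q-1)*(q-1) - 2) := harr
      _ ≤ (PT q hq).score k + ((q-1)*(q-1) - 2) := by omega

end tree



end NFS

/-- For every `r > 1` there are binary trees on `(r+1)²` taxa and an
`(r+1)`-state character achieving score difference `r²`, while every `r`-state
character achieves at most `r² - 2`; hence no fixed number of states suffices
to realise the MP distance. -/
theorem no_fixed_state_number (r : ℕ) (hr : 1 < r) :
    ∃ T₁ T₂ : PhyloTree (Fin ((r + 1) ^ 2)),
      T₁.IsBinary ∧ T₂.IsBinary ∧
      (∃ f : Fin ((r + 1) ^ 2) → ℕ, (Set.range f).ncard = r + 1 ∧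
        ((T₁.score f : ℤ) - (T₂.score f : ℤ)).natAbs = r ^ 2) ∧
      ∀ (C : Type) (fhat : Fin ((r + 1) ^ 2) → C), (Set.range fhat).ncard = r →
        ((T₁.score fhat : ℤ) - (T₂.score fhat : ℤ)).natAbs ≤ r ^ 2 - 2 := by
  classical
  have hq : 3 ≤ r + 1 := by omega
  set q : ℕ := r + 1 with hqdef
  have hpow : (r + 1) ^ 2 = q * q := by rw [pow_two]
  have e : Fin ((r + 1) ^ 2) ≃ NFS.Gd q :=
    (finCongr hpow).trans finProdFinEquiv.symm
  set e2 : Fin ((r + 1) ^ 2) ≃ NFS.Gd q := e.trans (Equiv.prodComm (Fin q) (Fin q)) with he2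
  refine ⟨NFS.relabel (NFS.PT q hq) e, NFS.relabel (NFS.PT q hq) e2,
    NFS.relabel_isBinary _ _ (NFS.PT_isBinary q hq),
    NFS.relabel_isBinary _ _ (NFS.PT_isBinary q hq), ?_, ?_⟩
  · -- the (r+1)-state character
    refine ⟨fun x => NFS.colChar q (e x), ?_, ?_⟩
    · have hrange : Set.range (fun x => NFS.colChar q (e x)) = Set.range (NFS.colChar q) :=
        e.surjective.range_comp (NFS.colChar q)
      rw [hrange, NFS.range_colChar q, NFS.ncard_range_val q]
    · have hs1 : (NFS.relabel (NFS.PT q hq) e).score (fun x => NFS.colChar q (e x))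
          = q*q - q := by
        rw [NFS.relabel_score]
        have hfe : (fun x => NFS.colChar q (e x)) ∘ ⇑e.symm = NFS.colChar q := by
          funext p
          simp
        rw [hfe, NFS.score_colChar q hq]
      have hs2 : (NFS.relabel (NFS.PT q hq) e2).score (fun x => NFS.colChar q (e x))
          = q - 1 := by
        rw [NFS.relabel_score]
        have hfe : (fun x => NFS.colChar q (e x)) ∘ ⇑e2.symm = NFS.rowChar q := by
          funext p
          simp only [Function.comp_apply, he2, Equiv.symm_trans_apply, Equiv.apply_symm_apply]
          rfl
        rw [hfe, NFS.score_rowChar q hq]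
      rw [hs1, hs2]
      have hr1 : (r+1)*(r+1) = r*r + 2*r + 1 := by ring
      have hr2 : r^2 = r*r := by ring
      simp only [hqdef]
      omega
  · -- r-state characters
    intro C fhat hfr
    have hrh : (Set.range (fhat ∘ ⇑e.symm)).ncard = q - 1 := by
      rw [e.symm.surjective.range_comp fhat, hfr]
      omega
    have hrh2 : (Set.range (fun p : NFS.Gd q => (fhat ∘ ⇑e.symm) (p.2, p.1))).ncard
        = q - 1 := by
      have hre : Set.range (fun p : NFS.Gd q => (fhat ∘ ⇑e.symm) (p.2, p.1))
          = Set.range (fhat ∘ ⇑e.symm) := by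
        ext c
        constructor
        · rintro ⟨p, rfl⟩; exact ⟨(p.2, p.1), rfl⟩
        · rintro ⟨p, rfl⟩; exact ⟨(p.2, p.1), rfl⟩
      rw [hre, hrh]
    have hi1 := NFS.main_ineq q hq (fhat ∘ ⇑e.symm) hrh
    have hi2 := NFS.main_ineq q hq (fun p : NFS.Gd q => (fhat ∘ ⇑e.symm) (p.2, p.1)) hrh2
    have hi2' : (NFS.PT q hq).score (fun p : NFS.Gd q => (fhat ∘ ⇑e.symm) (p.2, p.1))
        ≤ (NFS.PT q hq).score (fhat ∘ ⇑e.symm) + ((q-1)*(q-1) - 2) := by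
      refine le_trans hi2 ?_
      apply Nat.add_le_add_right
      apply le_of_eq
      exact congrArg _ (funext fun p => rfl)
    have hs1 : (NFS.relabel (NFS.PT q hq) e).score fhat
        = (NFS.PT q hq).score (fhat ∘ ⇑e.symm) := NFS.relabel_score _ _ _
    have hs2 : (NFS.relabel (NFS.PT q hq) e2).score fhat
        = (NFS.PT q hq).score (fun p : NFS.Gd q => (fhat ∘ ⇑e.symm) (p.2, p.1)) := by
      rw [NFS.relabel_score]
      apply congrArg
      funext p
      rfl
    rw [hs1, hs2]
    have hr1 : (q-1)*(q-1) = r*r := by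
      have : q - 1 = r := by omega
      rw [this]
    have hr2 : r^2 = r*r := by ring
    omega
end

section
/- For the two specific 9-taxon binary trees T1 = ((((1,2),3),(4,(5,6))),(7,(8,9))) and T2 = ((((1,4),7),(2,(5,8))),(3,(6,9))), the 3-state character f = ACGACGACG satisfies l_f(T1) = 6 and l_f(T2) = 2, hence d_MP(T1,T2) = 4 = 9 - 2·3 + 1, showing the upper bound n - 2√n + 1 on MP distance is tight. -/
open SimpleGraph



/-- The set of `X`-splits induced by the edges of `T`: for each edge `{u,v}`,
the set of taxa on the `u`-side of the edge (both sides arise, by symmetry). -/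
noncomputable def PhyloTree.splits {X : Type} (T : PhyloTree X) : Set (Set X) :=
  { A | ∃ u v : T.V, T.G.Adj u v ∧
      A = { x | (T.G.deleteEdges {s(u, v)}).Reachable (T.leaf x) u } }

/-- Nontrivial clades of `T₁ = ((((1,2),3),(4,(5,6))),(7,(8,9)))` together with
the trivial splits (taxa `i` are encoded as `i - 1 : Fin 9`). -/
def cladesT1 : Set (Set (Fin 9)) :=
  {{0}, {1}, {2}, {3}, {4}, {5}, {6}, {7}, {8},
   {0, 1}, {0, 1, 2}, {4, 5}, {3, 4, 5}, {7, 8}, {0, 1, 2, 3, 4, 5}}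

/-- Nontrivial clades of `T₂ = ((((1,4),7),(2,(5,8))),(3,(6,9)))` together with
the trivial splits. -/
def cladesT2 : Set (Set (Fin 9)) :=
  {{0}, {1}, {2}, {3}, {4}, {5}, {6}, {7}, {8},
   {0, 3}, {0, 3, 6}, {4, 7}, {1, 4, 7}, {5, 8}, {2, 5, 8}}

/-- The character `ACGACGACG`: taxa `1,4,7 ↦ A`, `2,5,8 ↦ C`, `3,6,9 ↦ G`. -/
def charACG : Fin 9 → ℕ := fun i => (i : ℕ) % 3


open SimpleGraph

namespace MPAux

variable {V : Type} {G : SimpleGraph V}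

lemma side_iff {x y a : V} {e : Sym2 V} (hxy : G.Adj x y) (hne : s(x, y) ≠ e) :
    (G.deleteEdges {e}).Reachable x a ↔ (G.deleteEdges {e}).Reachable y a := by
  have hadj : (G.deleteEdges {e}).Adj x y :=
    SimpleGraph.deleteEdges_adj.mpr ⟨hxy, by simpa using hne⟩
  exact ⟨fun h => hadj.symm.reachable.trans h, fun h => hadj.reachable.trans h⟩

lemma side_total {x a b : V} (h : G.Reachable x a) :
    (G.deleteEdges {s(a, b)}).Reachable x a ∨ (G.deleteEdges {s(a, b)}).Reachable x b := by
  obtain ⟨p⟩ := h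
  induction p with
  | nil => exact Or.inl (Reachable.refl _)
  | @cons x z a h p ih =>
    by_cases hse : s(x, z) = s(a, b)
    · rcases Sym2.eq_iff.mp hse with ⟨rfl, rfl⟩ | ⟨rfl, rfl⟩
      · exact Or.inl (Reachable.refl _)
      · exact Or.inr (Reachable.refl _)
    · rcases ih with h1 | h1
      · exact Or.inl ((side_iff h hse).mpr h1)
      · exact Or.inr ((side_iff h hse).mpr h1)


lemma bridge_not_reach (hA : G.IsAcyclic) {a b : V} (hab : G.Adj a b) :
    ¬(G.deleteEdges {s(a, b)}).Reachable a b :=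
  ((SimpleGraph.isBridge_iff).mp ((isAcyclic_iff_forall_adj_isBridge.mp hA) hab))

lemma acyclic_mono {H : SimpleGraph V} (hHG : H ≤ G) (hA : G.IsAcyclic) : H.IsAcyclic := by
  rw [isAcyclic_iff_forall_adj_isBridge]
  intro v w hvw
  refine (SimpleGraph.isBridge_iff).mpr (fun hr => ?_)
  exact bridge_not_reach hA (hHG hvw)
    (Reachable.mono (SimpleGraph.deleteEdges_mono hHG) hr)

lemma lemW {c d : V} {e' : Sym2 V} (hne : s(c, d) ≠ e') {x y : V}
    (p : (G.deleteEdges {e'}).Walk x y)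
    (hy : ¬(G.deleteEdges {s(c, d)}).Reachable y c)
    (hx : (G.deleteEdges {s(c, d)}).Reachable x c) :
    (G.deleteEdges {e'}).Reachable x c := by
  induction p with
  | nil => exact absurd hx hy
  | @cons x z y h p ih =>
    by_cases hz : (G.deleteEdges {s(c, d)}).Reachable z c
    · exact h.reachable.trans (ih hy hz)
    · have hGxz : G.Adj x z := (SimpleGraph.deleteEdges_adj.mp h).1
      by_cases hsxz : s(x, z) = s(c, d)
      · rcases Sym2.eq_iff.mp hsxz with ⟨rfl, rfl⟩ | ⟨rfl, rfl⟩
        · exact Reachable.refl _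
        · exact absurd (Reachable.refl _) hz
      · exact absurd ((side_iff hGxz hsxz).mp hx) hz

lemma exists_mut {g : V → ℕ} {x y : V} (p : G.Walk x y) (hgxy : g x ≠ g y) :
    ∃ u v : V, G.Adj u v ∧ g u ≠ g v ∧ G.Reachable x u ∧ G.Reachable x v := by
  induction p with
  | nil => exact absurd rfl hgxy
  | @cons x z y h p ih =>
    by_cases hxz : g x = g z
    · obtain ⟨u, v, h1, h2, h3, h4⟩ := ih (fun hzy => hgxy (hxz.trans hzy))
      exact ⟨u, v, h1, h2, h.reachable.trans h3, h.reachable.trans h4⟩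
    · exact ⟨x, z, h, hxz, Reachable.refl _, h.reachable⟩

/-- Mutation edges of `g` within the graph `G`, with endpoints reaching `r`. -/
def Mset (G : SimpleGraph V) (g : V → ℕ) (r : V) : Set (Sym2 V) :=
  {e | ∃ p q : V, e = s(p, q) ∧ G.Adj p q ∧ g p ≠ g q ∧ G.Reachable p r}

lemma mset_endpoint {g : V → ℕ} {r : V} {e : Sym2 V} (he : e ∈ Mset G g r) :
    ∀ w ∈ e, G.Reachable w r := by
  obtain ⟨p, q, rfl, hadj, -, hp⟩ := he
  intro w hw
  rcases Sym2.mem_iff.mp hw with rfl | rfl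
  · exact hp
  · exact hadj.symm.reachable.trans hp

lemma mset_mem_edgeSet {g : V → ℕ} {r : V} {e : Sym2 V} (he : e ∈ Mset G g r) :
    e ∈ G.edgeSet := by
  obtain ⟨p, q, rfl, hadj, -, -⟩ := he
  exact hadj

lemma image_bound [Finite V] (g : V → ℕ) :
    ∀ n : ℕ, ∀ G : SimpleGraph V, G.IsAcyclic → ∀ r : V,
      (Mset G g r).ncard ≤ n → (g '' {v | G.Reachable v r}).ncard ≤ n + 1 := by
  intro n
  induction n using Nat.strong_induction_on with
  | _ n ih =>
    intro G hA r hM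
    by_cases hc : ∀ v, G.Reachable v r → g v = g r
    · have hsub : g '' {v | G.Reachable v r} ⊆ {g r} := by
        rintro - ⟨v, hv, rfl⟩; exact hc v hv
      calc (g '' {v | G.Reachable v r}).ncard ≤ ({g r} : Set ℕ).ncard :=
              Set.ncard_le_ncard hsub (Set.finite_singleton _)
        _ = 1 := Set.ncard_singleton _
        _ ≤ n + 1 := by omega
    · push_neg at hc
      obtain ⟨v₀, hv₀r, hv₀⟩ := hc
      obtain ⟨p⟩ := hv₀r.symm
      obtain ⟨pp, qq, hadj, hgpq, hrp, hrq⟩ := exists_mut p (fun h => hv₀ h.symm)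
      -- hrp : G.Reachable r pp
      set e₁ := s(pp, qq) with he₁
      set H := G.deleteEdges {e₁} with hH
      set A := {v | H.Reachable v pp} with hA'
      set B := {v | H.Reachable v qq} with hB'
      have hHle : H ≤ G := SimpleGraph.deleteEdges_le _
      have hHacyc : H.IsAcyclic := acyclic_mono hHle hA
      have hcover : {v | G.Reachable v r} ⊆ A ∪ B := by
        intro v hv
        exact side_total (hv.trans hrp)
      have hABdisj : ∀ v, v ∈ A → v ∈ B → False := by
        intro v hva hvb
        exact bridge_not_reach hA hadj (hva.symm.trans hvb)
      -- the three disjoint pieces of Mset G g r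
      have hMA : Mset H g pp ⊆ Mset G g r := by
        rintro - ⟨p', q', rfl, hadj', hg', hp'⟩
        exact ⟨p', q', rfl, hHle hadj', hg',
          (Reachable.mono hHle hp').trans hrp.symm⟩
      have hMB : Mset H g qq ⊆ Mset G g r := by
        rintro - ⟨p', q', rfl, hadj', hg', hp'⟩
        exact ⟨p', q', rfl, hHle hadj', hg',
          (Reachable.mono hHle hp').trans (hadj.symm.reachable.trans hrp.symm)⟩
      have he₁M : e₁ ∈ Mset G g r := ⟨pp, qq, rfl, hadj, hgpq, hrp.symm⟩
      have he₁A : e₁ ∉ Mset H g pp := by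
        rintro ⟨p', q', he, hadj', -, -⟩
        exact (SimpleGraph.deleteEdges_adj.mp hadj').2 (by rw [← he]; exact rfl)
      have he₁B : e₁ ∉ Mset H g qq := by
        rintro ⟨p', q', he, hadj', -, -⟩
        exact (SimpleGraph.deleteEdges_adj.mp hadj').2 (by rw [← he]; exact rfl)
      have hdisjAB : Disjoint (Mset H g pp) (Mset H g qq) := by
        rw [Set.disjoint_left]
        rintro e heA heB
        obtain ⟨p', q', rfl, hadj', -, hp'⟩ := heB
        exact hABdisj p' (mset_endpoint heA p' (by exact Sym2.mem_mk_left _ _)) hp'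
      have hsum : (Mset H g pp).ncard + (Mset H g qq).ncard + 1 ≤ n := by
        have h1 : (insert e₁ (Mset H g pp ∪ Mset H g qq)).ncard ≤ (Mset G g r).ncard := by
          apply Set.ncard_le_ncard _ (Set.toFinite _)
          intro e he
          rcases Set.mem_insert_iff.mp he with rfl | he
          · exact he₁M
          · rcases he with he | he
            · exact hMA he
            · exact hMB he
        rw [Set.ncard_insert_of_notMem (by
              intro h; rcases h with h | h; exact he₁A h; exact he₁B h)
            (Set.toFinite _),
          Set.ncard_union_eq hdisjAB (Set.toFinite _) (Set.toFinite _)] at h1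
        omega
      have hIA : (g '' A).ncard ≤ (Mset H g pp).ncard + 1 :=
        ih (Mset H g pp).ncard (by omega) H hHacyc pp le_rfl
      have hIB : (g '' B).ncard ≤ (Mset H g qq).ncard + 1 :=
        ih (Mset H g qq).ncard (by omega) H hHacyc qq le_rfl
      have himg : g '' {v | G.Reachable v r} ⊆ g '' A ∪ g '' B := by
        rw [← Set.image_union]
        exact Set.image_mono hcover
      calc (g '' {v | G.Reachable v r}).ncard
          ≤ (g '' A ∪ g '' B).ncard := Set.ncard_le_ncard himg
            (((Set.toFinite A).image g).union ((Set.toFinite B).image g))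
        _ ≤ (g '' A).ncard + (g '' B).ncard := Set.ncard_union_le _ _
        _ ≤ n + 1 := by omega


lemma regions_disjoint (hconn : G.Connected) (hA : G.IsAcyclic)
    {a b c d : V} (hab : G.Adj a b) (hcd : G.Adj c d)
    {w₁ w₂ w₃ : V}
    (h1T : (G.deleteEdges {s(a, b)}).Reachable w₁ a)
    (h1F : ¬(G.deleteEdges {s(c, d)}).Reachable w₁ c)
    (h2F : ¬(G.deleteEdges {s(a, b)}).Reachable w₂ a)
    (h2T : (G.deleteEdges {s(c, d)}).Reachable w₂ c)
    (h3F : ¬(G.deleteEdges {s(a, b)}).Reachable w₃ a)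
    (h3F' : ¬(G.deleteEdges {s(c, d)}).Reachable w₃ c)
    {v : V} (hva : (G.deleteEdges {s(a, b)}).Reachable v a)
    (hvc : (G.deleteEdges {s(c, d)}).Reachable v c) : False := by
  by_cases hef : s(c, d) = s(a, b)
  · rw [hef] at h2T hvc
    by_cases hca : (G.deleteEdges {s(a, b)}).Reachable c a
    · exact h2F (h2T.trans hca)
    · exact hca (hvc.symm.trans hva)
  · obtain ⟨pvw⟩ := hva.trans h1T.symm
    have hvc' : (G.deleteEdges {s(a, b)}).Reachable v c := lemW hef pvw h1F hvc
    have hca : (G.deleteEdges {s(a, b)}).Reachable c a := hvc'.symm.trans hva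
    have t2 : (G.deleteEdges {s(a, b)}).Reachable w₂ b :=
      (side_total (hconn.preconnected w₂ a)).resolve_left h2F
    have t3 : (G.deleteEdges {s(a, b)}).Reachable w₃ b :=
      (side_total (hconn.preconnected w₃ a)).resolve_left h3F
    obtain ⟨p23⟩ := t2.trans t3.symm
    have h2c : (G.deleteEdges {s(a, b)}).Reachable w₂ c := lemW hef p23 h3F' h2T
    have hcb : (G.deleteEdges {s(a, b)}).Reachable c b := h2c.symm.trans t2
    exact bridge_not_reach hA hab (hca.symm.trans hcb)

lemma region_two [Finite V] (hA : G.IsAcyclic) (g : V → ℕ) {r v₀ v₁ v₂ : V}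
    (h0 : G.Reachable v₀ r) (h1 : G.Reachable v₁ r) (h2 : G.Reachable v₂ r)
    (d01 : g v₀ ≠ g v₁) (d02 : g v₀ ≠ g v₂) (d12 : g v₁ ≠ g v₂) :
    2 ≤ (Mset G g r).ncard := by
  have himg := image_bound g (Mset G g r).ncard G hA r le_rfl
  have hsub : ({g v₀, g v₁, g v₂} : Set ℕ) ⊆ g '' {v | G.Reachable v r} := by
    rintro n hn
    rcases hn with rfl | rfl | rfl
    · exact ⟨v₀, h0, rfl⟩
    · exact ⟨v₁, h1, rfl⟩
    · exact ⟨v₂, h2, rfl⟩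
  have h3 : ({g v₀, g v₁, g v₂} : Set ℕ).ncard = 3 := by
    rw [Set.ncard_insert_of_notMem (by simp [d01, d02]) (Set.toFinite _),
      Set.ncard_pair d12]
  have h4 : ({g v₀, g v₁, g v₂} : Set ℕ).ncard ≤ (g '' {v | G.Reachable v r}).ncard :=
    Set.ncard_le_ncard hsub ((Set.toFinite _).image g)
  omega

end MPAux

namespace MPAux

variable {X : Type} (T : PhyloTree X)

open Classical in
/-- Extend a character to all vertices: leaves get their state, others get `s`. -/
noncomputable def extendBy (f : X → ℕ) (s : ℕ) : T.V → ℕ :=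
  fun v => if h : ∃ x, T.leaf x = v then f h.choose else s

lemma extendBy_isExtension (f : X → ℕ) (s : ℕ) : T.IsExtension f (extendBy T f s) := by
  intro x
  have h : ∃ y, T.leaf y = T.leaf x := ⟨x, rfl⟩
  have hc : h.choose = x := T.leaf.injective h.choose_spec
  unfold extendBy
  rw [dif_pos h, hc]

lemma scoreSet_nonempty (f : X → ℕ) :
    {n | ∃ g : T.V → ℕ, T.IsExtension f g ∧ T.mutCount g = n}.Nonempty :=
  ⟨T.mutCount (extendBy T f 0), extendBy T f 0, extendBy_isExtension T f 0, rfl⟩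

lemma score_le_mutCount {f : X → ℕ} {g : T.V → ℕ} (hext : T.IsExtension f g) :
    T.score f ≤ T.mutCount g :=
  Nat.sInf_le ⟨g, hext, rfl⟩

lemma exists_optimal (f : X → ℕ) :
    ∃ g : T.V → ℕ, T.IsExtension f g ∧ T.mutCount g = T.score f :=
  Nat.sInf_mem (scoreSet_nonempty T f)

lemma sym2_decomp {u : T.V} {e : Sym2 T.V} (he : e ∈ T.G.edgeSet) (hu : u ∈ e) :
    ∃ w, e = s(u, w) ∧ w ∈ T.G.neighborSet u := by
  induction e with
  | _ p q =>
    rcases Sym2.mem_iff.mp hu with rfl | rfl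
    · exact ⟨q, rfl, (T.G.mem_edgeSet).mp he⟩
    · exact ⟨p, Sym2.eq_swap, ((T.G.mem_edgeSet).mp he).symm⟩

/-- Majority-state upper bound for the parsimony score. -/
lemma score_le_card_ne [Finite X] [Nonempty X]
    (hdeg : ∀ x, (T.G.neighborSet (T.leaf x)).ncard = 1)
    (f : X → ℕ) (s : ℕ) : T.score f ≤ {x | f x ≠ s}.ncard := by
  classical
  haveI := T.fintypeV
  set g := extendBy T f s with hg
  have hgl : ∀ x, g (T.leaf x) = f x := extendBy_isExtension T f s
  have hgn : ∀ v, (¬∃ x, T.leaf x = v) → g v = s := by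
    intro v h
    rw [hg]
    unfold extendBy
    rw [dif_neg h]
  refine le_trans (score_le_mutCount T (extendBy_isExtension T f s)) ?_
  show Set.ncard _ ≤ _
  have key : ∀ e ∈ {e | e ∈ T.G.edgeSet ∧ ∃ u v : T.V, e = s(u, v) ∧ g u ≠ g v},
      ∃ x, T.leaf x ∈ e ∧ f x ≠ s := by
    rintro e ⟨hmem, u, v, rfl, hguv⟩
    have hne : g u ≠ s ∨ g v ≠ s := by
      by_contra hcon
      push_neg at hcon
      exact hguv (hcon.1.trans hcon.2.symm)
    rcases hne with h | h
    · obtain ⟨x, rfl⟩ : ∃ x, T.leaf x = u := by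
        by_contra hu; exact h (hgn u hu)
      exact ⟨x, Sym2.mem_mk_left _ _, by rw [← hgl x]; exact h⟩
    · obtain ⟨x, rfl⟩ : ∃ x, T.leaf x = v := by
        by_contra hv; exact h (hgn v hv)
      exact ⟨x, Sym2.mem_mk_right _ _, by rw [← hgl x]; exact h⟩
  set F : Sym2 T.V → X :=
    fun e => if h : ∃ x, T.leaf x ∈ e ∧ f x ≠ s then h.choose else Classical.arbitrary X
    with hF
  have hFspec : ∀ e, ∀ h : (∃ x, T.leaf x ∈ e ∧ f x ≠ s),
      T.leaf (F e) ∈ e ∧ f (F e) ≠ s := by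
    intro e h
    rw [hF]
    simp only [dif_pos h]
    exact h.choose_spec
  apply Set.ncard_le_ncard_of_injOn F
  · intro e he
    exact (hFspec e (key e he)).2
  · intro e he e' he' hFe
    obtain ⟨h1, -⟩ := hFspec e (key e he)
    obtain ⟨h1', -⟩ := hFspec e' (key e' he')
    rw [hFe] at h1
    obtain ⟨w, rfl, hw⟩ := sym2_decomp T he.1 h1
    obtain ⟨w', he'eq, hw'⟩ := sym2_decomp T he'.1 h1'
    obtain ⟨z, hz⟩ := Set.ncard_eq_one.mp (hdeg (F e'))
    rw [hz, Set.mem_singleton_iff] at hw hw'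
    have hww' : w = w' := by rw [hw, hw']
    rw [hww', ← he'eq]

/-- Generic lower bound: the number of states is at most the score plus one. -/
lemma card_states_le (f : X → ℕ) : (f '' Set.univ).ncard ≤ T.score f + 1 := by
  haveI := T.fintypeV
  obtain ⟨g, hext, hcnt⟩ := exists_optimal T f
  obtain ⟨r⟩ := T.connected.nonempty
  have huniv : {v | T.G.Reachable v r} = Set.univ :=
    Set.eq_univ_of_forall fun v => T.connected.preconnected v r
  have h1 : f '' Set.univ ⊆ g '' {v | T.G.Reachable v r} := by
    rintro - ⟨x, -, rfl⟩
    exact ⟨T.leaf x, by rw [huniv]; trivial, hext x⟩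
  have h2 := image_bound g (Mset T.G g r).ncard T.G T.acyclic r le_rfl
  have h3 : (Mset T.G g r).ncard ≤ T.mutCount g := by
    apply Set.ncard_le_ncard _ (Set.toFinite _)
    rintro - ⟨p, q, rfl, hadj, hgpq, -⟩
    exact ⟨hadj, p, q, rfl, hgpq⟩
  have h4 : (f '' Set.univ).ncard ≤ (g '' {v | T.G.Reachable v r}).ncard :=
    Set.ncard_le_ncard h1 ((Set.toFinite _).image g)
  omega

end MPAux


namespace MPAux

/-- Number of distinct states of a character on 9 taxa. -/
noncomputable def kOf (f : Fin 9 → ℕ) : ℕ := (Finset.univ.image f).card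

/-- Largest multiplicity of a state. -/
noncomputable def mOf (f : Fin 9 → ℕ) : ℕ :=
  (Finset.univ.image f).sup fun c => (Finset.univ.filter fun x => f x = c).card

lemma nine_le_km (f : Fin 9 → ℕ) : 9 ≤ kOf f * mOf f := by
  have h2 := Finset.card_eq_sum_card_image f (Finset.univ : Finset (Fin 9))
  have h4 : (Finset.univ : Finset (Fin 9)).card = 9 := by simp
  calc 9 = ∑ b ∈ Finset.univ.image f, (Finset.univ.filter fun x => f x = b).card := by
        rw [← h2, h4]
    _ ≤ ∑ _b ∈ Finset.univ.image f,
          ((Finset.univ.image f).sup fun c => (Finset.univ.filter fun x => f x = c).card) :=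
        Finset.sum_le_sum fun c hc =>
          Finset.le_sup (f := fun c => (Finset.univ.filter fun x => f x = c).card) hc
    _ = kOf f * mOf f := by rw [Finset.sum_const, smul_eq_mul]; rfl

lemma exists_max_fiber (f : Fin 9 → ℕ) :
    ∃ s₀, (Finset.univ.filter fun x => f x = s₀).card = mOf f := by
  obtain ⟨b, -, hbe⟩ := Finset.exists_mem_eq_sup (Finset.univ.image f)
    ⟨f 0, Finset.mem_image_of_mem f (Finset.mem_univ 0)⟩
    fun c => (Finset.univ.filter fun x => f x = c).card
  exact ⟨b, hbe.symm⟩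

lemma score_upper_m (T : PhyloTree (Fin 9))
    (hdeg : ∀ x, (T.G.neighborSet (T.leaf x)).ncard = 1) (f : Fin 9 → ℕ) :
    T.score f + mOf f ≤ 9 := by
  classical
  obtain ⟨s₀, hs₀⟩ := exists_max_fiber f
  have h1 := score_le_card_ne T hdeg f s₀
  have h2 : {x | f x ≠ s₀}.ncard = (Finset.univ.filter fun x => ¬(f x = s₀)).card := by
    rw [← Set.ncard_coe_finset]
    congr 1
    ext x
    simp
  have h3 := Finset.card_filter_add_card_filter_not
    (s := (Finset.univ : Finset (Fin 9))) (p := fun x => f x = s₀)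
  have h4 : (Finset.univ : Finset (Fin 9)).card = 9 := by simp
  rw [h2] at h1
  omega

lemma score_lower_k (T : PhyloTree (Fin 9)) (f : Fin 9 → ℕ) : kOf f ≤ T.score f + 1 := by
  classical
  have h := card_states_le T f
  have himg : f '' Set.univ = ↑(Finset.univ.image f) := by
    ext n; simp
  rw [himg, Set.ncard_coe_finset] at h
  exact h

lemma arith_bound {k m l₁ l₂ : ℕ} (h9 : 9 ≤ k * m) (h1 : l₁ + m ≤ 9) (h2 : l₂ + m ≤ 9)
    (h3 : k ≤ l₁ + 1) (h4 : k ≤ l₂ + 1) : ((l₁ : ℤ) - (l₂ : ℤ)).natAbs ≤ 4 := by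
  have h6 : 6 ≤ k + m := by
    by_contra hcon
    push_neg at hcon
    have h9' : (9 : ℤ) ≤ (k : ℤ) * m := by exact_mod_cast h9
    have hc' : (k : ℤ) + m ≤ 5 := by exact_mod_cast Nat.lt_succ_iff.mp hcon
    nlinarith [sq_nonneg ((k : ℤ) - m), h9', hc']
  omega

end MPAux


namespace MPAux

lemma scoreT2 (T : PhyloTree (Fin 9))
    (hs : T.splits = cladesT2 ∪ ((fun A => Aᶜ) '' cladesT2)) :
    T.score charACG = 2 := by
  classical
  haveI := T.fintypeV
  -- the two relevant splits
  have hA : ({0, 3, 6} : Set (Fin 9)) ∈ T.splits := by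
    rw [hs]; left; simp [cladesT2]
  have hG : ({2, 5, 8} : Set (Fin 9)) ∈ T.splits := by
    rw [hs]; left; simp [cladesT2]
  obtain ⟨uA, vA, hadjA, hsetA⟩ := hA
  obtain ⟨uG, vG, hadjG, hsetG⟩ := hG
  have hAiff : ∀ x : Fin 9,
      ((T.G.deleteEdges {s(uA, vA)}).Reachable (T.leaf x) uA ↔ (x = 0 ∨ x = 3 ∨ x = 6)) := by
    intro x
    have h := Set.ext_iff.mp hsetA x
    simp only [Set.mem_insert_iff, Set.mem_singleton_iff, Set.mem_setOf_eq] at h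
    exact h.symm
  have hGiff : ∀ x : Fin 9,
      ((T.G.deleteEdges {s(uG, vG)}).Reachable (T.leaf x) uG ↔ (x = 2 ∨ x = 5 ∨ x = 8)) := by
    intro x
    have h := Set.ext_iff.mp hsetG x
    simp only [Set.mem_insert_iff, Set.mem_singleton_iff, Set.mem_setOf_eq] at h
    exact h.symm
  set g : T.V → ℕ := fun v =>
    if (T.G.deleteEdges {s(uA, vA)}).Reachable v uA then 0
    else if (T.G.deleteEdges {s(uG, vG)}).Reachable v uG then 2
    else 1 with hgdef
  have hext : T.IsExtension charACG g := by
    intro x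
    simp only [hgdef]
    fin_cases x <;>
      simp [hAiff, hGiff, charACG] <;>
      norm_num
  have hmutsub : {e | e ∈ T.G.edgeSet ∧ ∃ u v : T.V, e = s(u, v) ∧ g u ≠ g v} ⊆
      {s(uA, vA), s(uG, vG)} := by
    rintro e ⟨hmem, u, v, rfl, hguv⟩
    by_contra hnot
    simp only [Set.mem_insert_iff, Set.mem_singleton_iff] at hnot
    push_neg at hnot
    have hadj : T.G.Adj u v := (T.G.mem_edgeSet).mp hmem
    have i1 : (T.G.deleteEdges {s(uA, vA)}).Reachable u uA ↔
        (T.G.deleteEdges {s(uA, vA)}).Reachable v uA := side_iff hadj hnot.1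
    have i2 : (T.G.deleteEdges {s(uG, vG)}).Reachable u uG ↔
        (T.G.deleteEdges {s(uG, vG)}).Reachable v uG := side_iff hadj hnot.2
    exact hguv (if_congr i1 rfl (if_congr i2 rfl rfl))
  have hle : T.score charACG ≤ 2 := by
    refine le_trans (score_le_mutCount T hext) ?_
    show Set.ncard _ ≤ 2
    refine le_trans (Set.ncard_le_ncard hmutsub (Set.toFinite _)) ?_
    refine le_trans (Set.ncard_insert_le _ _) ?_
    rw [Set.ncard_singleton]
  have hge : 2 ≤ T.score charACG := by
    have hk : ({0, 1, 2} : Set ℕ) ⊆ charACG '' Set.univ := by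
      rintro n hn
      simp only [Set.mem_insert_iff, Set.mem_singleton_iff] at hn
      rcases hn with rfl | rfl | rfl
      · exact ⟨0, trivial, rfl⟩
      · exact ⟨1, trivial, rfl⟩
      · exact ⟨2, trivial, rfl⟩
    have h3 : (3 : ℕ) ≤ (charACG '' Set.univ).ncard := by
      have e3 : ({0, 1, 2} : Set ℕ).ncard = 3 := by
        rw [Set.ncard_insert_of_notMem (by norm_num) (Set.toFinite _),
          Set.ncard_pair (by norm_num)]
      rw [← e3]
      exact Set.ncard_le_ncard hk (Set.finite_univ.image _)
    have := card_states_le T charACG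
    omega
  omega

end MPAux


namespace MPAux

lemma scoreT1 (T : PhyloTree (Fin 9))
    (hs : T.splits = cladesT1 ∪ ((fun A => Aᶜ) '' cladesT1)) :
    T.score charACG = 6 := by
  classical
  haveI := T.fintypeV
  -- upper bound: the six singleton splits of the C/G taxa
  have hsing : ∀ i : Fin 9, ({i} : Set (Fin 9)) ∈ T.splits := by
    intro i
    rw [hs]; left
    fin_cases i <;> simp [cladesT1]
  obtain ⟨u1, v1, hadj1, hset1⟩ := hsing 1
  obtain ⟨u2, v2, hadj2, hset2⟩ := hsing 2
  obtain ⟨u4, v4, hadj4, hset4⟩ := hsing 4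
  obtain ⟨u5, v5, hadj5, hset5⟩ := hsing 5
  obtain ⟨u7, v7, hadj7, hset7⟩ := hsing 7
  obtain ⟨u8, v8, hadj8, hset8⟩ := hsing 8
  have hiff : ∀ (i : Fin 9) (u v : T.V),
      (({i} : Set (Fin 9)) = {x | (T.G.deleteEdges {s(u, v)}).Reachable (T.leaf x) u}) →
      ∀ x : Fin 9, ((T.G.deleteEdges {s(u, v)}).Reachable (T.leaf x) u ↔ x = i) := by
    intro i u v hset x
    have h := Set.ext_iff.mp hset x
    simp only [Set.mem_singleton_iff, Set.mem_setOf_eq] at h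
    exact h.symm
  have h1 := hiff 1 u1 v1 hset1
  have h2 := hiff 2 u2 v2 hset2
  have h4 := hiff 4 u4 v4 hset4
  have h5 := hiff 5 u5 v5 hset5
  have h7 := hiff 7 u7 v7 hset7
  have h8 := hiff 8 u8 v8 hset8
  set g : T.V → ℕ := fun v =>
    if (T.G.deleteEdges {s(u1, v1)}).Reachable v u1 then 1
    else if (T.G.deleteEdges {s(u2, v2)}).Reachable v u2 then 2
    else if (T.G.deleteEdges {s(u4, v4)}).Reachable v u4 then 1
    else if (T.G.deleteEdges {s(u5, v5)}).Reachable v u5 then 2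
    else if (T.G.deleteEdges {s(u7, v7)}).Reachable v u7 then 1
    else if (T.G.deleteEdges {s(u8, v8)}).Reachable v u8 then 2
    else 0 with hgdef
  have hext : T.IsExtension charACG g := by
    intro x
    simp only [hgdef]
    fin_cases x <;> simp [h1, h2, h4, h5, h7, h8, charACG]
  have hmutsub : {e | e ∈ T.G.edgeSet ∧ ∃ u v : T.V, e = s(u, v) ∧ g u ≠ g v} ⊆
      {s(u1, v1), s(u2, v2), s(u4, v4), s(u5, v5), s(u7, v7), s(u8, v8)} := by
    rintro e ⟨hmem, u, v, rfl, hguv⟩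
    by_contra hnot
    simp only [Set.mem_insert_iff, Set.mem_singleton_iff] at hnot
    push_neg at hnot
    obtain ⟨n1, n2, n4, n5, n7, n8⟩ := hnot
    have hadj : T.G.Adj u v := (T.G.mem_edgeSet).mp hmem
    exact hguv (if_congr (side_iff hadj n1) rfl (if_congr (side_iff hadj n2) rfl
      (if_congr (side_iff hadj n4) rfl (if_congr (side_iff hadj n5) rfl
      (if_congr (side_iff hadj n7) rfl (if_congr (side_iff hadj n8) rfl rfl))))))
  have hle : T.score charACG ≤ 6 := by
    refine le_trans (score_le_mutCount T hext) ?_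
    show Set.ncard _ ≤ 6
    refine le_trans (Set.ncard_le_ncard hmutsub (Set.toFinite _)) ?_
    refine le_trans (Set.ncard_insert_le _ _) ?_
    have : ({s(u2, v2), s(u4, v4), s(u5, v5), s(u7, v7), s(u8, v8)} :
        Set (Sym2 T.V)).ncard ≤ 5 := by
      refine le_trans (Set.ncard_insert_le _ _) ?_
      refine Nat.add_le_add_right ?_ 1
      refine le_trans (Set.ncard_insert_le _ _) ?_
      refine Nat.add_le_add_right ?_ 1
      refine le_trans (Set.ncard_insert_le _ _) ?_
      refine Nat.add_le_add_right ?_ 1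
      refine le_trans (Set.ncard_insert_le _ _) ?_
      rw [Set.ncard_singleton]
    omega
  -- lower bound via three regions
  have hge : 6 ≤ T.score charACG := by
    have hP : ({0, 1, 2} : Set (Fin 9)) ∈ T.splits := by
      rw [hs]; left; simp [cladesT1]
    have hQ : ({3, 4, 5} : Set (Fin 9)) ∈ T.splits := by
      rw [hs]; left; simp [cladesT1]
    have hR : ({6, 7, 8} : Set (Fin 9)) ∈ T.splits := by
      rw [hs]; right
      refine ⟨{0, 1, 2, 3, 4, 5}, by simp [cladesT1], ?_⟩
      ext x
      simp only [Set.mem_compl_iff, Set.mem_insert_iff, Set.mem_singleton_iff]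
      fin_cases x <;> decide
    obtain ⟨uP, vP, hadjP, hsetP⟩ := hP
    obtain ⟨uQ, vQ, hadjQ, hsetQ⟩ := hQ
    obtain ⟨uR, vR, hadjR, hsetR⟩ := hR
    have hPiff : ∀ x : Fin 9,
        ((T.G.deleteEdges {s(uP, vP)}).Reachable (T.leaf x) uP ↔ (x = 0 ∨ x = 1 ∨ x = 2)) := by
      intro x
      have h := Set.ext_iff.mp hsetP x
      simp only [Set.mem_insert_iff, Set.mem_singleton_iff, Set.mem_setOf_eq] at h
      exact h.symm
    have hQiff : ∀ x : Fin 9,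
        ((T.G.deleteEdges {s(uQ, vQ)}).Reachable (T.leaf x) uQ ↔ (x = 3 ∨ x = 4 ∨ x = 5)) := by
      intro x
      have h := Set.ext_iff.mp hsetQ x
      simp only [Set.mem_insert_iff, Set.mem_singleton_iff, Set.mem_setOf_eq] at h
      exact h.symm
    have hRiff : ∀ x : Fin 9,
        ((T.G.deleteEdges {s(uR, vR)}).Reachable (T.leaf x) uR ↔ (x = 6 ∨ x = 7 ∨ x = 8)) := by
      intro x
      have h := Set.ext_iff.mp hsetR x
      simp only [Set.mem_insert_iff, Set.mem_singleton_iff, Set.mem_setOf_eq] at h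
      exact h.symm
    obtain ⟨g, hext, hcnt⟩ := exists_optimal T charACG
    have hgl : ∀ x : Fin 9, g (T.leaf x) = charACG x := hext
    set HP := T.G.deleteEdges {s(uP, vP)} with hHP
    set HQ := T.G.deleteEdges {s(uQ, vQ)} with hHQ
    set HR := T.G.deleteEdges {s(uR, vR)} with hHR
    have hPacyc : HP.IsAcyclic := acyclic_mono (SimpleGraph.deleteEdges_le _) T.acyclic
    have hQacyc : HQ.IsAcyclic := acyclic_mono (SimpleGraph.deleteEdges_le _) T.acyclic
    have hRacyc : HR.IsAcyclic := acyclic_mono (SimpleGraph.deleteEdges_le _) T.acyclic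
    -- two mutation edges in each region
    have hnP : 2 ≤ (Mset HP g uP).ncard := by
      refine region_two hPacyc g ((hPiff 0).mpr (by norm_num)) ((hPiff 1).mpr (by norm_num))
        ((hPiff 2).mpr (by norm_num)) ?_ ?_ ?_ <;>
        rw [hgl, hgl] <;> simp [charACG] <;> decide
    have hnQ : 2 ≤ (Mset HQ g uQ).ncard := by
      refine region_two hQacyc g ((hQiff 3).mpr (by norm_num)) ((hQiff 4).mpr (by norm_num))
        ((hQiff 5).mpr (by norm_num)) ?_ ?_ ?_ <;>
        rw [hgl, hgl] <;> simp [charACG] <;> decide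
    have hnR : 2 ≤ (Mset HR g uR).ncard := by
      refine region_two hRacyc g ((hRiff 6).mpr (by norm_num)) ((hRiff 7).mpr (by norm_num))
        ((hRiff 8).mpr (by norm_num)) ?_ ?_ ?_ <;>
        rw [hgl, hgl] <;> simp [charACG] <;> decide
    -- regions are pairwise disjoint
    have hdPQ : ∀ v : T.V, HP.Reachable v uP → HQ.Reachable v uQ → False := by
      intro v hvP hvQ
      exact regions_disjoint T.connected T.acyclic hadjP hadjQ
        ((hPiff 0).mpr (by norm_num)) (fun h => by simpa using (hQiff 0).mp h)
        (fun h => by simpa using (hPiff 3).mp h) ((hQiff 3).mpr (by norm_num))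
        (fun h => by simpa using (hPiff 6).mp h) (fun h => by simpa using (hQiff 6).mp h)
        hvP hvQ
    have hdPR : ∀ v : T.V, HP.Reachable v uP → HR.Reachable v uR → False := by
      intro v hvP hvR
      exact regions_disjoint T.connected T.acyclic hadjP hadjR
        ((hPiff 0).mpr (by norm_num)) (fun h => by simpa using (hRiff 0).mp h)
        (fun h => by simpa using (hPiff 6).mp h) ((hRiff 6).mpr (by norm_num))
        (fun h => by simpa using (hPiff 3).mp h) (fun h => by simpa using (hRiff 3).mp h)
        hvP hvR
    have hdQR : ∀ v : T.V, HQ.Reachable v uQ → HR.Reachable v uR → False := by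
      intro v hvQ hvR
      exact regions_disjoint T.connected T.acyclic hadjQ hadjR
        ((hQiff 3).mpr (by norm_num)) (fun h => by simpa using (hRiff 3).mp h)
        (fun h => by simpa using (hQiff 6).mp h) ((hRiff 6).mpr (by norm_num))
        (fun h => by simpa using (hQiff 0).mp h) (fun h => by simpa using (hRiff 0).mp h)
        hvQ hvR
    -- Mset disjointness
    have hMdisj : ∀ (H H' : SimpleGraph T.V) (r r' : T.V),
        (∀ v : T.V, H.Reachable v r → H'.Reachable v r' → False) →
        Disjoint (Mset H g r) (Mset H' g r') := by
      intro H H' r r' hdis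
      rw [Set.disjoint_left]
      rintro e heP heQ
      obtain ⟨p, q, rfl, hadj', -, hp⟩ := heQ
      exact hdis p (mset_endpoint heP p (Sym2.mem_mk_left _ _)) hp
    have d1 : Disjoint (Mset HP g uP) (Mset HQ g uQ) := hMdisj _ _ _ _ hdPQ
    have d2 : Disjoint (Mset HP g uP) (Mset HR g uR) := hMdisj _ _ _ _ hdPR
    have d3 : Disjoint (Mset HQ g uQ) (Mset HR g uR) := hMdisj _ _ _ _ hdQR
    -- all three are inside the mutation set of g
    have hsub : (Mset HP g uP ∪ Mset HQ g uQ) ∪ Mset HR g uR ⊆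
        {e | e ∈ T.G.edgeSet ∧ ∃ u v : T.V, e = s(u, v) ∧ g u ≠ g v} := by
      have hone : ∀ (s0 : Set (Sym2 T.V)) (r : T.V),
          Mset (T.G.deleteEdges s0) g r ⊆
          {e | e ∈ T.G.edgeSet ∧ ∃ u v : T.V, e = s(u, v) ∧ g u ≠ g v} := by
        rintro s0 r - ⟨p, q, rfl, hadj', hg', -⟩
        exact ⟨(SimpleGraph.deleteEdges_adj.mp hadj').1, p, q, rfl, hg'⟩
      rintro e (he | he)
      · rcases he with he | he
        · exact hone _ uP he
        · exact hone _ uQ he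
      · exact hone _ uR he
    have hcard : 6 ≤ ((Mset HP g uP ∪ Mset HQ g uQ) ∪ Mset HR g uR).ncard := by
      rw [Set.ncard_union_eq (Set.disjoint_union_left.mpr ⟨d2, d3⟩)
          (Set.toFinite _) (Set.toFinite _),
        Set.ncard_union_eq d1 (Set.toFinite _) (Set.toFinite _)]
      omega
    have hfin : 6 ≤ T.mutCount g := by
      refine le_trans hcard ?_
      exact Set.ncard_le_ncard hsub (Set.toFinite _)
    omega
  omega

end MPAux

/-- On the specific trees `T₁ = ((((1,2),3),(4,(5,6))),(7,(8,9)))` and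
`T₂ = ((((1,4),7),(2,(5,8))),(3,(6,9)))`, the character `ACGACGACG` has
scores 6 and 2, and `d_MP(T₁,T₂) = 4 = 9 - 2·3 + 1`: the bound is tight. -/
theorem tight_example (T₁ T₂ : PhyloTree (Fin 9))
    (hb₁ : T₁.IsBinary) (hb₂ : T₂.IsBinary)
    (hs₁ : T₁.splits = cladesT1 ∪ ((fun A => Aᶜ) '' cladesT1))
    (hs₂ : T₂.splits = cladesT2 ∪ ((fun A => Aᶜ) '' cladesT2)) :
    T₁.score charACG = 6 ∧ T₂.score charACG = 2 ∧
    PhyloTree.dMP T₁ T₂ = 4 ∧ (4 : ℕ) = 9 - 2 * 3 + 1 := by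
  have hsc1 : T₁.score charACG = 6 := MPAux.scoreT1 T₁ hs₁
  have hsc2 : T₂.score charACG = 2 := MPAux.scoreT2 T₂ hs₂
  refine ⟨hsc1, hsc2, ?_, by norm_num⟩
  have hbound : ∀ n ∈ {n | ∃ f : Fin 9 → ℕ,
      n = ((T₁.score f : ℤ) - (T₂.score f : ℤ)).natAbs}, n ≤ 4 := by
    rintro n ⟨f, rfl⟩
    exact MPAux.arith_bound (MPAux.nine_le_km f)
      (MPAux.score_upper_m T₁ hb₁.1 f) (MPAux.score_upper_m T₂ hb₂.1 f)
      (MPAux.score_lower_k T₁ f) (MPAux.score_lower_k T₂ f)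
  have hmem : (4 : ℕ) ∈ {n | ∃ f : Fin 9 → ℕ,
      n = ((T₁.score f : ℤ) - (T₂.score f : ℤ)).natAbs} :=
    ⟨charACG, by rw [hsc1, hsc2]; decide⟩
  exact le_antisymm (csSup_le ⟨4, hmem⟩ hbound)
    (le_csSup ⟨4, fun n hn => hbound n hn⟩ hmem)
end

section
/- If T2 is a refinement of T1 (i.e., every split of T1 is a split of T2), then for every character f, l_f(T2) ≤ l_f(T1); in particular, since every X-tree refines the star tree, the star tree has maximal parsimony score among all X-trees for every character. -/
/-- `T` is a star tree: one internal centre adjacent to all other vertices,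
and the taxa are exactly the non-centre vertices. -/
def PhyloTree.IsStar {X : Type} (T : PhyloTree X) : Prop :=
  ∃ c : T.V, (∀ v, v ≠ c → T.G.Adj c v) ∧ ∀ v, v ≠ c ↔ v ∈ Set.range T.leaf

/- ### Auxiliary lemmas -/

attribute [instance] PhyloTree.fintypeV

open SimpleGraph

section GraphLemmas

variable {V : Type}

lemma aux_del_adj {G : SimpleGraph V} {u v : V} (h : G.Adj u v) {D : Set (Sym2 V)}
    (hD : s(u, v) ∉ D) : (G.deleteEdges D).Adj u v :=
  (SimpleGraph.deleteEdges_adj).mpr ⟨h, hD⟩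

/-- In an acyclic graph, the endpoints of a deleted edge are not reachable from
one another. -/
lemma aux_bridge {G : SimpleGraph V} (hA : G.IsAcyclic) {u v : V} (h : G.Adj u v) :
    ¬ (G.deleteEdges {s(u, v)}).Reachable u v :=
  isAcyclic_iff_forall_adj_isBridge.mp hA h

/-- If deleting a set `D` of edges disconnects `a` from `b` in an acyclic graph,
then some single edge of `D` already separates them. -/
lemma aux_exists_sep {G : SimpleGraph V} (hA : G.IsAcyclic) (D : Set (Sym2 V)) :
    ∀ {a b : V} (p : G.Walk a b), p.IsPath → ¬ (G.deleteEdges D).Reachable a b →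
    ∃ u v : V, G.Adj u v ∧ s(u, v) ∈ D ∧
      (G.deleteEdges {s(u, v)}).Reachable a u ∧
      ¬ (G.deleteEdges {s(u, v)}).Reachable b u := by
  intro a b p
  induction p with
  | nil => exact fun _ hr => absurd (Reachable.refl _) hr
  | @cons a c b hadj q ih =>
    intro hp hr
    by_cases hD : s(a, c) ∈ D
    · refine ⟨a, c, hadj, hD, Reachable.refl _, ?_⟩
      intro hba
      have haq : a ∉ q.support := ((Walk.cons_isPath_iff _ _).mp hp).2
      have hq : ∀ e, e ∈ q.edges → e ∉ ({s(a, c)} : Set (Sym2 V)) := by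
        intro e he hmem
        rw [Set.mem_singleton_iff] at hmem
        subst hmem
        exact haq (q.fst_mem_support_of_mem_edges he)
      have hcb : (G.deleteEdges {s(a, c)}).Reachable c b := ⟨q.toDeleteEdges _ hq⟩
      exact aux_bridge hA hadj ((hcb.trans hba).symm)
    · have hac : (G.deleteEdges D).Reachable a c := (aux_del_adj hadj hD).reachable
      have hcb : ¬ (G.deleteEdges D).Reachable c b := fun h => hr (hac.trans h)
      obtain ⟨u, v, h1, h2, h3, h4⟩ := ih hp.of_cons hcb
      refine ⟨u, v, h1, h2, Reachable.trans ?_ h3, h4⟩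
      refine Adj.reachable (aux_del_adj hadj ?_)
      simp only [Set.mem_singleton_iff]
      intro hEq
      exact hD (hEq ▸ h2)

/-- In a tree, after deleting one edge every vertex can still reach
one of the two endpoints. -/
lemma aux_reach_or {G : SimpleGraph V} (hG : G.Connected) (hA : G.IsAcyclic)
    {u v : V} (h : G.Adj u v) (w : V) :
    (G.deleteEdges {s(u, v)}).Reachable w u ∨ (G.deleteEdges {s(u, v)}).Reachable w v := by
  classical
  by_cases hwu : (G.deleteEdges {s(u, v)}).Reachable w u
  · exact Or.inl hwu
  obtain ⟨p⟩ := hG w u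
  obtain ⟨u', v', hadj', hmem, hra, hrb⟩ :=
    aux_exists_sep hA {s(u, v)} (p.toPath : G.Walk w u) p.toPath.2 hwu
  rw [Set.mem_singleton_iff, Sym2.eq_iff] at hmem
  rcases hmem with ⟨rfl, rfl⟩ | ⟨rfl, rfl⟩
  · exact absurd (Reachable.refl _) hrb
  · rw [Sym2.eq_swap] at hra
    exact Or.inr hra

/-- In a tree, after deleting one edge, reaching one endpoint is equivalent to not
reaching the other. -/
lemma aux_reach_iff {G : SimpleGraph V} (hG : G.Connected) (hA : G.IsAcyclic)
    {u v : V} (h : G.Adj u v) (w : V) :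
    (G.deleteEdges {s(u, v)}).Reachable w v ↔ ¬ (G.deleteEdges {s(u, v)}).Reachable w u := by
  constructor
  · intro hv hu
    exact aux_bridge hA h (hu.symm.trans hv)
  · intro hu
    exact (aux_reach_or hG hA h w).resolve_left hu

/-- A function that does not change along any edge is constant on reachability
classes. -/
lemma aux_const_on_reach {G : SimpleGraph V} {C : Type} (g : V → C)
    (hg : ∀ u v, G.Adj u v → g u = g v) {a b : V} (h : G.Reachable a b) : g a = g b := by
  obtain ⟨p⟩ := h
  induction p with
  | nil => rfl
  | cons hadj q ih => exact (hg _ _ hadj).trans ih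

/-- If a vertex has no neighbours, anything reachable from it is equal to it. -/
lemma aux_isolated {G : SimpleGraph V} {u : V} (h : ∀ w, ¬ G.Adj u w) {a : V}
    (hr : G.Reachable a u) : a = u := by
  obtain ⟨p⟩ := hr.symm
  cases p with
  | nil => rfl
  | cons hadj _ => exact absurd hadj (h _)

end GraphLemmas

namespace PhyloTree

variable {X : Type}

/-- The set of edges on which an extension changes state. -/
def changedEdges {C : Type} (T : PhyloTree X) (g : T.V → C) : Set (Sym2 T.V) :=
  { e | e ∈ T.G.edgeSet ∧ ∃ u v : T.V, e = s(u, v) ∧ g u ≠ g v }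

lemma mutCount_eq {C : Type} (T : PhyloTree X) (g : T.V → C) :
    T.mutCount g = (T.changedEdges g).ncard := rfl

/-- Lemma A: the changed edges of an extension separate any two taxa with
different states. -/
lemma sep_of_extension {C : Type} (T : PhyloTree X) {f : X → C} {g : T.V → C}
    (hg : T.IsExtension f g) {x y : X} (hxy : f x ≠ f y) :
    ∃ u v : T.V, T.G.Adj u v ∧ s(u, v) ∈ T.changedEdges g ∧
      (T.G.deleteEdges {s(u, v)}).Reachable (T.leaf x) u ∧
      ¬ (T.G.deleteEdges {s(u, v)}).Reachable (T.leaf y) u := by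
  classical
  have hconst : ∀ u v : T.V, (T.G.deleteEdges (T.changedEdges g)).Adj u v → g u = g v := by
    intro u v huv
    rw [SimpleGraph.deleteEdges_adj] at huv
    by_contra hne
    exact huv.2 ⟨T.G.mem_edgeSet.mpr huv.1, u, v, rfl, hne⟩
  have hnr : ¬ (T.G.deleteEdges (T.changedEdges g)).Reachable (T.leaf x) (T.leaf y) := by
    intro h
    exact hxy (by rw [← hg x, ← hg y]; exact aux_const_on_reach g hconst h)
  obtain ⟨w⟩ := T.connected (T.leaf x) (T.leaf y)
  exact aux_exists_sep T.acyclic _ (w.toPath : T.G.Walk _ _) w.toPath.2 hnr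

/-- Lemma B: any finite set of edges separating all differently-coloured taxa
yields an extension changing on at most that many edges. -/
lemma extension_of_sep {C : Type} (T : PhyloTree X) (f : X → C) (c₀ : C)
    (D : Set (Sym2 T.V)) (hD : D.Finite)
    (hsep : ∀ x y : X, f x ≠ f y → ∃ u v : T.V, T.G.Adj u v ∧ s(u, v) ∈ D ∧
      ¬ ((T.G.deleteEdges {s(u, v)}).Reachable (T.leaf x) u ↔
         (T.G.deleteEdges {s(u, v)}).Reachable (T.leaf y) u)) :
    ∃ g : T.V → C, T.IsExtension f g ∧ T.mutCount g ≤ D.ncard := by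
  classical
  set H := T.G.deleteEdges D with hH
  have key : ∀ (x y : X) (w : T.V),
      H.Reachable (T.leaf x) w → H.Reachable (T.leaf y) w → f x = f y := by
    intro x y w hx hy
    by_contra hne
    obtain ⟨u, v, hadj, hmem, hxor⟩ := hsep x y hne
    have hle : H ≤ T.G.deleteEdges {s(u, v)} :=
      SimpleGraph.deleteEdges_anti (by simpa using hmem)
    have hx' := hx.mono hle
    have hy' := hy.mono hle
    exact hxor ⟨fun h => hy'.trans (hx'.symm.trans h), fun h => hx'.trans (hy'.symm.trans h)⟩
  set g : T.V → C := fun w =>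
    if h : ∃ x : X, H.Reachable (T.leaf x) w then f h.choose else c₀ with hgdef
  have hcst : ∀ w w' : T.V, H.Reachable w w' → g w = g w' := by
    intro w w' hww
    by_cases h : ∃ x : X, H.Reachable (T.leaf x) w
    · have h' : ∃ x : X, H.Reachable (T.leaf x) w' := ⟨h.choose, h.choose_spec.trans hww⟩
      rw [hgdef]
      simp only [dif_pos h, dif_pos h']
      exact key _ _ w' (h.choose_spec.trans hww) h'.choose_spec
    · have h' : ¬ ∃ x : X, H.Reachable (T.leaf x) w' := by
        rintro ⟨x, hx⟩
        exact h ⟨x, hx.trans hww.symm⟩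
      rw [hgdef]
      simp only [dif_neg h, dif_neg h']
  have hext : T.IsExtension f g := by
    intro x
    have h : ∃ x' : X, H.Reachable (T.leaf x') (T.leaf x) := ⟨x, Reachable.refl _⟩
    rw [hgdef]
    simp only [dif_pos h]
    exact key _ _ (T.leaf x) h.choose_spec (Reachable.refl _)
  refine ⟨g, hext, ?_⟩
  rw [mutCount_eq]
  refine Set.ncard_le_ncard ?_ hD
  rintro e ⟨he, u, v, rfl, hne⟩
  by_contra hmem
  have hadj : H.Adj u v := aux_del_adj (T.G.mem_edgeSet.mp he) hmem
  exact hne (hcst u v hadj.reachable)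

/-- The main monotonicity result: refining does not increase the parsimony score. -/
lemma score_mono (T₁ T₂ : PhyloTree X) (hs : T₁.splits ⊆ T₂.splits)
    (C : Type) (f : X → C) : T₂.score f ≤ T₁.score f := by
  classical
  rcases isEmpty_or_nonempty C with hC | hC
  · have hempty : ∀ T : PhyloTree X,
        { n | ∃ g : T.V → C, T.IsExtension f g ∧ T.mutCount g = n } = ∅ := by
      intro T
      ext n
      simp only [Set.mem_setOf_eq, Set.mem_empty_iff_false, iff_false]
      rintro ⟨g, -, -⟩
      obtain ⟨v⟩ := T.connected.nonempty
      exact (hC.false (g v)).elim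
    unfold PhyloTree.score
    rw [hempty T₁, hempty T₂]
  · obtain ⟨c₀⟩ := hC
    have hne : { n | ∃ g : T₁.V → C, T₁.IsExtension f g ∧ T₁.mutCount g = n }.Nonempty := by
      refine ⟨_, fun v => if h : ∃ x : X, T₁.leaf x = v then f h.choose else c₀, fun x => ?_, rfl⟩
      have h : ∃ x' : X, T₁.leaf x' = T₁.leaf x := ⟨x, rfl⟩
      simp only [dif_pos h]
      congr 1
      exact T₁.leaf.injective h.choose_spec
    obtain ⟨g₁, hext₁, hcnt⟩ := Nat.sInf_mem hne
    set D₁ := T₁.changedEdges g₁ with hD₁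
    have hD₁fin : D₁.Finite := Set.toFinite _
    set P : Sym2 T₁.V → Prop := fun e =>
      ∃ q : T₂.V × T₂.V, T₂.G.Adj q.1 q.2 ∧ ∃ u v : T₁.V, e = s(u, v) ∧ T₁.G.Adj u v ∧
        { z : X | (T₁.G.deleteEdges {s(u, v)}).Reachable (T₁.leaf z) u } =
        { z : X | (T₂.G.deleteEdges {s(q.1, q.2)}).Reachable (T₂.leaf z) q.1 } with hP
    obtain ⟨c₂⟩ := T₂.connected.nonempty
    set φ : Sym2 T₁.V → Sym2 T₂.V := fun e =>
      if h : P e then s(h.choose.1, h.choose.2) else s(c₂, c₂) with hφ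
    set D₂ := φ '' D₁ with hD₂
    have hsep₂ : ∀ x y : X, f x ≠ f y → ∃ u v : T₂.V, T₂.G.Adj u v ∧ s(u, v) ∈ D₂ ∧
        ¬ ((T₂.G.deleteEdges {s(u, v)}).Reachable (T₂.leaf x) u ↔
           (T₂.G.deleteEdges {s(u, v)}).Reachable (T₂.leaf y) u) := by
      intro x y hxy
      obtain ⟨u, v, hadj, heD, hrx, hnry⟩ := T₁.sep_of_extension hext₁ hxy
      have hsplit : { z : X | (T₁.G.deleteEdges {s(u, v)}).Reachable (T₁.leaf z) u }
          ∈ T₂.splits := hs ⟨u, v, hadj, rfl⟩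
      obtain ⟨u₂, v₂, hadj₂, hA⟩ := hsplit
      have hPe : P s(u, v) := ⟨(u₂, v₂), hadj₂, u, v, rfl, hadj, hA⟩
      have hφe : φ s(u, v) = s(hPe.choose.1, hPe.choose.2) := by
        simp only [hφ]
        rw [dif_pos hPe]
      refine ⟨hPe.choose.1, hPe.choose.2, hPe.choose_spec.1, ⟨s(u, v), heD, hφe⟩, ?_⟩
      obtain ⟨-, u', v', he', hadj', hsplit'⟩ := hPe.choose_spec
      have hxmem_iff : ∀ z : X,
          (T₂.G.deleteEdges {s(hPe.choose.1, hPe.choose.2)}).Reachable (T₂.leaf z) hPe.choose.1 ↔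
          (T₁.G.deleteEdges {s(u', v')}).Reachable (T₁.leaf z) u' := by
        intro z
        constructor
        · intro h
          have hzz : z ∈ { z : X |
              (T₂.G.deleteEdges {s(hPe.choose.1, hPe.choose.2)}).Reachable (T₂.leaf z)
                hPe.choose.1 } := h
          rw [← hsplit'] at hzz
          exact hzz
        · intro h
          have hzz : z ∈ { z : X |
              (T₁.G.deleteEdges {s(u', v')}).Reachable (T₁.leaf z) u' } := h
          rw [hsplit'] at hzz
          exact hzz
      intro hiff
      rw [hxmem_iff x, hxmem_iff y] at hiff
      rw [Sym2.eq_iff] at he'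
      rcases he' with ⟨rfl, rfl⟩ | ⟨rfl, rfl⟩
      · exact hnry (hiff.mp hrx)
      · rw [Sym2.eq_swap] at hiff
        rw [aux_reach_iff T₁.connected T₁.acyclic hadj,
            aux_reach_iff T₁.connected T₁.acyclic hadj] at hiff
        exact hnry (not_not.mp (fun hy => (hiff.mpr hy) hrx))
    obtain ⟨g₂, hext₂, hle⟩ := T₂.extension_of_sep f c₀ D₂ (hD₁fin.image φ) hsep₂
    have h1 : T₂.score f ≤ T₂.mutCount g₂ := Nat.sInf_le ⟨g₂, hext₂, rfl⟩
    have h2 : D₂.ncard ≤ D₁.ncard := Set.ncard_image_le hD₁fin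
    have h3 : T₁.mutCount g₁ = T₁.score f := hcnt
    have h4 : T₁.mutCount g₁ = D₁.ncard := rfl
    omega

end PhyloTree
/-- If `T₂` refines `T₁` (every split of `T₁` is a split of `T₂`) then
`l_f(T₂) ≤ l_f(T₁)` for every character `f`; in particular the star tree has
maximal parsimony score among all `X`-trees for every character. -/
theorem score_antitone_of_refines {X : Type} [Fintype X] :
    (∀ T₁ T₂ : PhyloTree X, T₁.splits ⊆ T₂.splits →
      ∀ (C : Type) (f : X → C), T₂.score f ≤ T₁.score f) ∧
    (∀ S T : PhyloTree X, S.IsStar →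
      (∀ x, (T.G.neighborSet (T.leaf x)).ncard = 1) →
      ∀ (C : Type) (f : X → C), T.score f ≤ S.score f) := by
  constructor
  · exact fun T₁ T₂ hs C f => PhyloTree.score_mono T₁ T₂ hs C f
  · intro S T hstar hleaf C f
    refine PhyloTree.score_mono S T ?_ C f
    obtain ⟨c, hcadj, hrange⟩ := hstar
    -- every edge of the star goes through the centre
    have hstar_adj : ∀ u v : S.V, S.G.Adj u v → u = c ∨ v = c := by
      intro u v huv
      by_contra hcon
      push_neg at hcon
      obtain ⟨hu, hv⟩ := hcon
      have h1 : (S.G.deleteEdges {s(u, v)}).Adj u c := by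
        refine aux_del_adj (hcadj u hu).symm ?_
        intro hmem
        rw [Set.mem_singleton_iff] at hmem
        rcases Sym2.eq_iff.mp hmem with ⟨-, h⟩ | ⟨h, -⟩
        · exact hv h.symm
        · exact huv.ne h
      have h2 : (S.G.deleteEdges {s(u, v)}).Adj c v := by
        refine aux_del_adj (hcadj v hv) ?_
        intro hmem
        rw [Set.mem_singleton_iff] at hmem
        rcases Sym2.eq_iff.mp hmem with ⟨h, -⟩ | ⟨h, -⟩
        · exact hu h.symm
        · exact hv h.symm
      exact aux_bridge S.acyclic huv (h1.reachable.trans h2.reachable)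
    have hleafne : ∀ x : X, S.leaf x ≠ c := fun x => (hrange (S.leaf x)).mpr ⟨x, rfl⟩
    -- facts about T: each taxon vertex has a unique neighbour
    have hTnb : ∀ x : X, ∃ w : T.V, T.G.Adj (T.leaf x) w ∧
        ∀ w' : T.V, T.G.Adj (T.leaf x) w' → w' = w := by
      intro x
      obtain ⟨w, hw⟩ := Set.ncard_eq_one.mp (hleaf x)
      refine ⟨w, ?_, ?_⟩
      · have hmem : w ∈ T.G.neighborSet (T.leaf x) := hw ▸ rfl
        exact hmem
      · intro w' hw'
        have hmem : w' ∈ T.G.neighborSet (T.leaf x) := hw'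
        rw [hw] at hmem
        exact hmem
    have hTiso : ∀ x : X, ∀ w : T.V, T.G.Adj (T.leaf x) w →
        ∀ w' : T.V, ¬ (T.G.deleteEdges {s(T.leaf x, w)}).Adj (T.leaf x) w' := by
      intro x w hw w' hadj
      rw [SimpleGraph.deleteEdges_adj] at hadj
      obtain ⟨hadj', hne⟩ := hadj
      obtain ⟨w₀, hw₀, huniq⟩ := hTnb x
      refine hne ?_
      rw [Set.mem_singleton_iff, huniq w hw, huniq w' hadj']
    -- now show the splits of S are splits of T
    rintro A ⟨u, v, huv, hA⟩
    rcases hstar_adj u v huv with rfl | rfl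
    · -- u is the centre, v is a labelled leaf of the star
      obtain ⟨x, hx⟩ := (hrange v).mp huv.ne'
      -- v is isolated after deleting the edge
      have hiso : ∀ w : S.V, ¬ (S.G.deleteEdges {s(u, v)}).Adj v w := by
        intro w hw
        rw [SimpleGraph.deleteEdges_adj] at hw
        rcases hstar_adj _ _ hw.1 with h | h
        · exact huv.ne' h
        · refine hw.2 ?_
          rw [Set.mem_singleton_iff, h, Sym2.eq_swap]
      have hAeq : A = { z : X | z ≠ x } := by
        rw [hA]
        ext z
        simp only [Set.mem_setOf_eq]
        constructor
        · intro hz hzx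
          subst hzx
          rw [hx] at hz
          exact huv.ne (aux_isolated hiso hz.symm)
        · intro hz
          refine Adj.reachable (aux_del_adj (hcadj (S.leaf z) (hleafne z)).symm ?_)
          intro hmem
          rw [Set.mem_singleton_iff] at hmem
          rcases Sym2.eq_iff.mp hmem with ⟨h1, -⟩ | ⟨h2, -⟩
          · exact hleafne z h1
          · exact hz (S.leaf.injective (h2.trans hx.symm))
      obtain ⟨w, hw, -⟩ := hTnb x
      refine ⟨w, T.leaf x, hw.symm, ?_⟩
      rw [hAeq]
      ext z
      simp only [Set.mem_setOf_eq]
      constructor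
      · intro hz
        rw [Sym2.eq_swap (a := w) (b := T.leaf x)]
        rcases aux_reach_or T.connected T.acyclic hw (T.leaf z) with h | h
        · exact absurd (T.leaf.injective (aux_isolated (hTiso x w hw) h)) hz
        · exact h
      · intro hz hzx
        subst hzx
        rw [Sym2.eq_swap (a := w) (b := T.leaf z)] at hz
        exact hw.ne' (aux_isolated (hTiso z w hw) hz.symm)
    · -- v is the centre, u is a labelled leaf of the star
      obtain ⟨x, hx⟩ := (hrange u).mp huv.ne
      have hiso : ∀ w : S.V, ¬ (S.G.deleteEdges {s(u, v)}).Adj u w := by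
        intro w hw
        rw [SimpleGraph.deleteEdges_adj] at hw
        rcases hstar_adj _ _ hw.1 with h | h
        · exact huv.ne h
        · refine hw.2 ?_
          rw [Set.mem_singleton_iff, h]
      have hAeq : A = { z : X | z = x } := by
        rw [hA]
        ext z
        simp only [Set.mem_setOf_eq]
        constructor
        · intro hz
          exact S.leaf.injective ((aux_isolated hiso hz).trans hx.symm)
        · rintro rfl
          rw [hx]
      obtain ⟨w, hw, -⟩ := hTnb x
      refine ⟨T.leaf x, w, hw, ?_⟩
      rw [hAeq]
      ext z
      simp only [Set.mem_setOf_eq]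
      constructor
      · rintro rfl
        exact Reachable.refl _
      · intro hz
        exact T.leaf.injective (aux_isolated (hTiso x w hw) hz)
end
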